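/- arXiv:1209.4256 — 5 statements merged into one kernel-verified Lean document; each statement's English description precedes it below -/
import Mathlib

section
/- Let R = Q/𝔤₁ where 𝔤₁ = (xy², xyz, yz², x⁴ − y³z, xz³ − y⁴) ⊆ Q. Then the socle (0 :_R 𝔪) of R is equal to the R-submodule generated by the images of x⁴y and x³z², and its dimension as a k-vector space is 2 (that is, R has type 2). -/
/-!
STATEMENT 0: For `R = Q/g1`, the socle `(0 :_R m)` of `R` (where `m` is the
maximal ideal of `R`, the image of `(x,y,z)`) equals the `R`-submodule generated by
the images of x^4*y, x^3*z^2, and its dimension as a `k`-vector space is 2 (so `R` has type 2).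

Here `Q = k[[x,y,z]]` is formalized as `MvPowerSeries (Fin 3) k` with
`x = X 0`, `y = X 1`, `z = X 2`.
-/

noncomputable section

/-- The variable `x` in `Q = k[[x,y,z]]`. -/
def xx (k : Type*) [Field k] : MvPowerSeries (Fin 3) k := MvPowerSeries.X 0
/-- The variable `y` in `Q = k[[x,y,z]]`. -/
def yy (k : Type*) [Field k] : MvPowerSeries (Fin 3) k := MvPowerSeries.X 1
/-- The variable `z` in `Q = k[[x,y,z]]`. -/
def zz (k : Type*) [Field k] : MvPowerSeries (Fin 3) k := MvPowerSeries.X 2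

/-- The ideal `g1` of the paper. -/
def Ig1 (k : Type*) [Field k] : Ideal (MvPowerSeries (Fin 3) k) :=
  Ideal.span {xx k * yy k ^ 2, xx k * yy k * zz k, yy k * zz k ^ 2, xx k ^ 4 - yy k ^ 3 * zz k, xx k * zz k ^ 3 - yy k ^ 4}

namespace SocleWork

open MvPowerSeries

variable {k : Type*} [Field k]

local notation "Q3" => MvPowerSeries (Fin 3) k

def fs (a b c : ℕ) : Fin 3 →₀ ℕ :=
  Finsupp.single 0 a + Finsupp.single 1 b + Finsupp.single 2 c

@[simp] lemma fs_apply0 (a b c : ℕ) : fs a b c 0 = a := by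
  simp [fs, Finsupp.single_apply]
@[simp] lemma fs_apply1 (a b c : ℕ) : fs a b c 1 = b := by
  simp [fs, Finsupp.single_apply]
@[simp] lemma fs_apply2 (a b c : ℕ) : fs a b c 2 = c := by
  simp [fs, Finsupp.single_apply]

lemma eq_fs (e : Fin 3 →₀ ℕ) : e = fs (e 0) (e 1) (e 2) := by
  ext i
  fin_cases i <;> simp

lemma fs_le_iff {a b c : ℕ} {e : Fin 3 →₀ ℕ} :
    fs a b c ≤ e ↔ a ≤ e 0 ∧ b ≤ e 1 ∧ c ≤ e 2 := by
  rw [Finsupp.le_def]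
  constructor
  · intro h; exact ⟨by simpa using h 0, by simpa using h 1, by simpa using h 2⟩
  · rintro ⟨h0, h1, h2⟩ i
    fin_cases i <;> simpa

lemma fs_le_fs {a b c a' b' c' : ℕ} :
    fs a b c ≤ fs a' b' c' ↔ a ≤ a' ∧ b ≤ b' ∧ c ≤ c' := by
  simp [fs_le_iff]

lemma eq_fs_iff {e : Fin 3 →₀ ℕ} {a b c : ℕ} :
    e = fs a b c ↔ e 0 = a ∧ e 1 = b ∧ e 2 = c := by
  constructor
  · rintro rfl; simp
  · rintro ⟨h0, h1, h2⟩
    rw [eq_fs e, h0, h1, h2]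

lemma fs_eq_fs {a b c a' b' c' : ℕ} :
    fs a b c = fs a' b' c' ↔ a = a' ∧ b = b' ∧ c = c' := by
  simp [eq_fs_iff]

lemma fs_sub {a b c a' b' c' : ℕ} :
    fs a b c - fs a' b' c' = fs (a - a') (b - b') (c - c') := by
  ext i
  fin_cases i <;> simp [Finsupp.tsub_apply]

lemma fs_zero : fs 0 0 0 = 0 := by ext i; fin_cases i <;> simp

lemma mono_eq (a b c : ℕ) :
    (xx k) ^ a * (yy k) ^ b * (zz k) ^ c = monomial (fs a b c) 1 := by
  rw [xx, yy, zz, X_pow_eq, X_pow_eq, X_pow_eq, monomial_mul_monomial, monomial_mul_monomial]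
  simp [fs]

lemma coeff_mul_mono (f : Q3) (a b c a' b' c' : ℕ) :
    coeff (fs a b c) (f * monomial (fs a' b' c') 1)
      = if a' ≤ a ∧ b' ≤ b ∧ c' ≤ c then coeff (fs (a - a') (b - b') (c - c')) f else 0 := by
  rw [coeff_mul_monomial]
  by_cases h : a' ≤ a ∧ b' ≤ b ∧ c' ≤ c
  · rw [if_pos (fs_le_fs.mpr h), if_pos h, fs_sub, mul_one]
  · rw [if_neg (fun hc => h (fs_le_fs.mp hc)), if_neg h]

lemma coeff_mono (a b c a' b' c' : ℕ) (r : k) :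
    coeff (fs a b c) (monomial (fs a' b' c') r)
      = if a = a' ∧ b = b' ∧ c = c' then r else 0 := by
  rw [coeff_monomial]
  by_cases h : a = a' ∧ b = b' ∧ c = c'
  · rw [if_pos (by simp [eq_fs_iff, h.1, h.2.1, h.2.2]), if_pos h]
  · rw [if_neg (fun hc => h (by simpa [fs_eq_fs] using (eq_fs_iff.mp hc))), if_neg h]

lemma Ig1_induction (p : Q3 → Prop)
    (hzero : p 0)
    (hadd : ∀ u v, p u → p v → p (u + v))
    (h1 : ∀ q : Q3, p (q * (xx k * yy k ^ 2)))
    (h2 : ∀ q : Q3, p (q * (xx k * yy k * zz k)))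
    (h3 : ∀ q : Q3, p (q * (yy k * zz k ^ 2)))
    (h4 : ∀ q : Q3, p (q * (xx k ^ 4 - yy k ^ 3 * zz k)))
    (h5 : ∀ q : Q3, p (q * (xx k * zz k ^ 3 - yy k ^ 4))) :
    ∀ g ∈ Ig1 k, p g := by
  intro g hg
  have main : ∀ s : Q3, p (s * g) := by
    refine Submodule.span_induction (p := fun w _ => ∀ s : Q3, p (s * w)) ?_ ?_ ?_ ?_ hg
    · intro w hw s
      simp only [Set.mem_insert_iff, Set.mem_singleton_iff] at hw
      rcases hw with rfl | rfl | rfl | rfl | rfl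
      exacts [h1 s, h2 s, h3 s, h4 s, h5 s]
    · intro s; simpa using hzero
    · intro u v _ _ hu hv s
      rw [mul_add]; exact hadd _ _ (hu s) (hv s)
    · intro r w _ hw s
      rw [smul_eq_mul, show s * (r * w) = (s * r) * w by ring]
      exact hw (s * r)
  simpa using main 1

lemma gen1_eq : xx k * yy k ^ 2 = monomial (fs 1 2 0) 1 := by
  rw [show xx k * yy k ^ 2 = xx k ^ 1 * yy k ^ 2 * zz k ^ 0 by ring, mono_eq]
lemma gen2_eq : xx k * yy k * zz k = monomial (fs 1 1 1) 1 := by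
  rw [show xx k * yy k * zz k = xx k ^ 1 * yy k ^ 1 * zz k ^ 1 by ring, mono_eq]
lemma gen3_eq : yy k * zz k ^ 2 = monomial (fs 0 1 2) 1 := by
  rw [show yy k * zz k ^ 2 = xx k ^ 0 * yy k ^ 1 * zz k ^ 2 by ring, mono_eq]
lemma gen4_eq : xx k ^ 4 - yy k ^ 3 * zz k = monomial (fs 4 0 0) 1 - monomial (fs 0 3 1) 1 := by
  rw [show xx k ^ 4 = xx k ^ 4 * yy k ^ 0 * zz k ^ 0 by ring,
      show yy k ^ 3 * zz k = xx k ^ 0 * yy k ^ 3 * zz k ^ 1 by ring, mono_eq, mono_eq]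
lemma gen5_eq : xx k * zz k ^ 3 - yy k ^ 4 = monomial (fs 1 0 3) 1 - monomial (fs 0 4 0) 1 := by
  rw [show xx k * zz k ^ 3 = xx k ^ 1 * yy k ^ 0 * zz k ^ 3 by ring,
      show yy k ^ 4 = xx k ^ 0 * yy k ^ 4 * zz k ^ 0 by ring, mono_eq, mono_eq]

lemma van_purez : ∀ g ∈ Ig1 k, ∀ n : ℕ, coeff (fs 0 0 n) g = 0 := by
  refine Ig1_induction _ (by simp) (fun u v hu hv n => by rw [map_add, hu, hv, add_zero]) ?_ ?_ ?_ ?_ ?_ <;>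
    intro q n <;>
    simp only [gen1_eq, gen2_eq, gen3_eq, gen4_eq, gen5_eq, mul_sub, map_sub, coeff_mul_mono] <;>
    norm_num

open Classical in
/-- Any power series whose support is contained in the monomial ideal generated by `S`
lies in the ideal generated by the corresponding monomials. -/
lemma mem_span_monomials (S : Finset (Fin 3 →₀ ℕ)) (h : Q3)
    (hs : ∀ e : Fin 3 →₀ ℕ, coeff e h ≠ 0 → ∃ s ∈ S, s ≤ e) :
    h ∈ Ideal.span ((fun s => (monomial s 1 : Q3)) '' (S : Set (Fin 3 →₀ ℕ))) := by
  set σ : (Fin 3 →₀ ℕ) → (Fin 3 →₀ ℕ) :=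
    fun e => if he : ∃ s ∈ S, s ≤ e then he.choose else 0 with hσdef
  have hσ : ∀ e : Fin 3 →₀ ℕ, (he : ∃ s ∈ S, s ≤ e) → σ e ∈ S ∧ σ e ≤ e := by
    intro e he
    rw [hσdef]; simp only [dif_pos he]
    exact he.choose_spec
  set q : (Fin 3 →₀ ℕ) → Q3 :=
    fun s => (fun e' => if σ (e' + s) = s ∧ ∃ s' ∈ S, s' ≤ e' + s then coeff (e' + s) h else 0 :
      (Fin 3 →₀ ℕ) → k) with hqdef
  have hq : ∀ s e', coeff e' (q s)
      = if σ (e' + s) = s ∧ ∃ s' ∈ S, s' ≤ e' + s then coeff (e' + s) h else 0 := by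
    intro s e'; rfl
  have key : h = ∑ s ∈ S, monomial s 1 * q s := by
    ext e
    rw [map_sum]
    by_cases hex : ∃ s' ∈ S, s' ≤ e
    · rw [Finset.sum_eq_single (σ e)]
      · rw [coeff_monomial_mul, if_pos (hσ e hex).2, hq, one_mul,
          tsub_add_cancel_of_le (hσ e hex).2, if_pos ⟨rfl, hex⟩]
      · intro s hsS hne
        rw [coeff_monomial_mul]
        by_cases hle : s ≤ e
        · rw [if_pos hle, hq, tsub_add_cancel_of_le hle, if_neg]
          · ring
          · rintro ⟨h1, -⟩; exact hne h1.symm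
        · rw [if_neg hle]
      · intro hcon; exact absurd (hσ e hex).1 hcon
    · have h0 : coeff e h = 0 := by
        by_contra hc; exact hex (hs e hc)
      rw [h0]
      refine (Finset.sum_eq_zero ?_).symm
      intro s hsS
      rw [coeff_monomial_mul]
      by_cases hle : s ≤ e
      · exact absurd ⟨s, hsS, hle⟩ hex
      · rw [if_neg hle]
  rw [key]
  exact Submodule.sum_mem _ (fun s hsS =>
    Ideal.mul_mem_right _ _ (Ideal.subset_span ⟨s, hsS, rfl⟩))


def T50 : Finset (ℕ × ℕ × ℕ) :=
  (Finset.range 6 ×ˢ Finset.range 6 ×ˢ Finset.range 6).filter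
    (fun t => 1 ≤ t.1 + t.2.1 + t.2.2 ∧ t.1 + t.2.1 + t.2.2 ≤ 5 ∧ 1 ≤ t.1 + t.2.1)

lemma mem_T50 (a b c : ℕ) : (a,b,c) ∈ T50 ↔ (1 ≤ a+b+c ∧ a+b+c ≤ 5 ∧ 1 ≤ a+b) := by
  simp only [T50, Finset.mem_filter, Finset.mem_product, Finset.mem_range]
  omega

set_option maxRecDepth 10000 in
lemma T50_sum {M : Type*} [AddCommMonoid M] (F : ℕ × ℕ × ℕ → M) :
    ∑ t ∈ T50, F t = (F (0,1,0) + (F (1,0,0) + (F (0,1,1) + (F (0,2,0) + (F (1,0,1) + (F (1,1,0) + (F (2,0,0) + (F (0,1,2) + (F (0,2,1) + (F (0,3,0) + (F (1,0,2) + (F (1,1,1) + (F (1,2,0) + (F (2,0,1) + (F (2,1,0) + (F (3,0,0) + (F (0,1,3) + (F (0,2,2) + (F (0,3,1) + (F (0,4,0) + (F (1,0,3) + (F (1,1,2) + (F (1,2,1) + (F (1,3,0) + (F (2,0,2) + (F (2,1,1) + (F (2,2,0) + (F (3,0,1) + (F (3,1,0) + (F (4,0,0) + (F (0,1,4) + (F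 (0,2,3) + (F (0,3,2) + (F (0,4,1) + (F (0,5,0) + (F (1,0,4) + (F (1,1,3) + (F (1,2,2) + (F (1,3,1) + (F (1,4,0) + (F (2,0,3) + (F (2,1,2) + (F (2,2,1) + (F (2,3,0) + (F (3,0,2) + (F (3,1,1) + (F (3,2,0) + (F (4,0,1) + (F (4,1,0) + F (5,0,0)))))))))))))))))))))))))))))))))))))))))))))))))) := by
  rw [show T50 = ({(0,1,0), (1,0,0), (0,1,1), (0,2,0), (1,0,1), (1,1,0), (2,0,0), (0,1,2), (0,2,1), (0,3,0), (1,0,2), (1,1,1), (1,2,0), (2,0,1), (2,1,0), (3,0,0), (0,1,3), (0,2,2), (0,3,1), (0,4,0), (1,0,3), (1,1,2), (1,2,1), (1,3,0), (2,0,2), (2,1,1), (2,2,0), (3,0,1), (3,1,0), (4,0,0), (0,1,4), (0,2,3), (0,3,2), (0,4,1), (0,5,0), (1,0,4), (1,1,3), (1,2,2), (1,3,1), (1,4,0), (2,0,3), (2,1,2), (2,2,1), (2,3,0), (3,0,2), (3,1,1), (3,2,0), (4,0,1), (4,1,0), (5,0,0)} : Finset (ℕ×ℕ×ℕ)) from by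 decide]
  rw [Finset.sum_insert (by decide), Finset.sum_insert (by decide), Finset.sum_insert (by decide), Finset.sum_insert (by decide), Finset.sum_insert (by decide), Finset.sum_insert (by decide), Finset.sum_insert (by decide), Finset.sum_insert (by decide), Finset.sum_insert (by decide), Finset.sum_insert (by decide), Finset.sum_insert (by decide), Finset.sum_insert (by decide), Finset.sum_insert (by decide), Finset.sum_insert (by decide), Finset.sum_insert (by decide), Finset.sum_insert (by decide), Finset.sum_insert (by decide), Finset.sum_insert (by decide), Finset.sum_insert (by decide), Finset.sum_insert (by decide), Finset.sum_insert (by decide), Finset.sum_insert (by decide), Finset.sum_insert (by decide), Finset.sum_insert (by decide), Finset.sum_insert (by decide), Finset.sum_insert (by decide), Finset.sum_insert (by decide), Finset.sum_insert (by decide), Finset.sum_insert (by decide), Finset.sum_insert (by decide), Finset.sum_insert (by decide), Finset.sum_insert (by decide), Finset.sum_insert (by decide), Finset.sum_insert (by decide), Finset.sum_insert (by decide), Finset.sum_insert (by decide), Finset.sum_insert (by decide), Finset.sum_insert (by decide), Finset.sum_insert (by decide), Finset.sum_insert (by decide), Finset.sum_insert (by decide), Finset.sum_insert (by decide), Finset.sum_insert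 (by decide), Finset.sum_insert (by decide), Finset.sum_insert (by decide), Finset.sum_insert (by decide), Finset.sum_insert (by decide), Finset.sum_insert (by decide), Finset.sum_insert (by decide), Finset.sum_singleton]

lemma mono_C (a b c : ℕ) (r : k) :
    monomial (fs a b c) r = C r * ((xx k) ^ a * (yy k) ^ b * (zz k) ^ c) := by
  rw [mono_eq, ← smul_eq_C_mul]
  ext e
  rw [coeff_smul, coeff_monomial, coeff_monomial]
  split_ifs <;> simp

lemma C_mul_powers (a b c : ℕ) (r : k) :
    C r * ((xx k) ^ a * (yy k) ^ b * (zz k) ^ c) = monomial (fs a b c) r :=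
  (mono_C a b c r).symm

lemma comb_mem (a1 a2 a3 a4 a5 : Q3) :
    a1 * (xx k * yy k ^ 2) + a2 * (xx k * yy k * zz k) + a3 * (yy k * zz k ^ 2)
      + a4 * (xx k ^ 4 - yy k ^ 3 * zz k) + a5 * (xx k * zz k ^ 3 - yy k ^ 4) ∈ Ig1 k := by
  unfold Ig1
  refine Ideal.add_mem _ (Ideal.add_mem _ (Ideal.add_mem _ (Ideal.add_mem _ ?_ ?_) ?_) ?_) ?_ <;>
    exact Ideal.mul_mem_left _ _ (Ideal.subset_span (by simp))

lemma memG1 : xx k * yy k ^ 2 ∈ Ig1 k := Ideal.subset_span (by simp)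
lemma memG2 : xx k * yy k * zz k ∈ Ig1 k := Ideal.subset_span (by simp)
lemma memG3 : yy k * zz k ^ 2 ∈ Ig1 k := Ideal.subset_span (by simp)
lemma memG4 : xx k ^ 4 - yy k ^ 3 * zz k ∈ Ig1 k := Ideal.subset_span (by simp)
lemma memG5 : xx k * zz k ^ 3 - yy k ^ 4 ∈ Ig1 k := Ideal.subset_span (by simp)

lemma xmul (f : Q3) : xx k * f = f * monomial (fs 1 0 0) 1 := by
  rw [← mono_eq]; ring
lemma ymul (f : Q3) : yy k * f = f * monomial (fs 0 1 0) 1 := by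
  rw [← mono_eq]; ring
lemma zmul (f : Q3) : zz k * f = f * monomial (fs 0 0 1) 1 := by
  rw [← mono_eq]; ring

def S8 : Finset (Fin 3 →₀ ℕ) :=
  {fs 1 2 0, fs 1 1 1, fs 0 1 2, fs 5 0 0, fs 4 0 1, fs 0 5 0, fs 2 0 3, fs 1 0 5}

lemma cert_m1 : xx k * yy k ^ 2 ∈ Ig1 k := by
  rw [show xx k * yy k ^ 2 = (1) * (xx k * yy k ^ 2) + (0) * (xx k * yy k * zz k) + (0) * (yy k * zz k ^ 2) + (0) * (xx k ^ 4 - yy k ^ 3 * zz k) + (0) * (xx k * zz k ^ 3 - yy k ^ 4) from by ring]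
  exact comb_mem _ _ _ _ _
lemma cert_m2 : xx k * yy k * zz k ∈ Ig1 k := by
  rw [show xx k * yy k * zz k = (0) * (xx k * yy k ^ 2) + (1) * (xx k * yy k * zz k) + (0) * (yy k * zz k ^ 2) + (0) * (xx k ^ 4 - yy k ^ 3 * zz k) + (0) * (xx k * zz k ^ 3 - yy k ^ 4) from by ring]
  exact comb_mem _ _ _ _ _
lemma cert_m3 : yy k * zz k ^ 2 ∈ Ig1 k := by
  rw [show yy k * zz k ^ 2 = (0) * (xx k * yy k ^ 2) + (0) * (xx k * yy k * zz k) + (1) * (yy k * zz k ^ 2) + (0) * (xx k ^ 4 - yy k ^ 3 * zz k) + (0) * (xx k * zz k ^ 3 - yy k ^ 4) from by ring]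
  exact comb_mem _ _ _ _ _
lemma cert_m4 : xx k ^ 5 ∈ Ig1 k := by
  rw [show xx k ^ 5 = (0) * (xx k * yy k ^ 2) + (yy k ^ 2) * (xx k * yy k * zz k) + (0) * (yy k * zz k ^ 2) + (xx k) * (xx k ^ 4 - yy k ^ 3 * zz k) + (0) * (xx k * zz k ^ 3 - yy k ^ 4) from by ring]
  exact comb_mem _ _ _ _ _
lemma cert_m5 : xx k ^ 4 * zz k ∈ Ig1 k := by
  rw [show xx k ^ 4 * zz k = (0) * (xx k * yy k ^ 2) + (0) * (xx k * yy k * zz k) + (yy k ^ 2) * (yy k * zz k ^ 2) + (zz k) * (xx k ^ 4 - yy k ^ 3 * zz k) + (0) * (xx k * zz k ^ 3 - yy k ^ 4) from by ring]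
  exact comb_mem _ _ _ _ _
lemma cert_m6 : yy k ^ 5 ∈ Ig1 k := by
  rw [show yy k ^ 5 = (0) * (xx k * yy k ^ 2) + (zz k ^ 2) * (xx k * yy k * zz k) + (0) * (yy k * zz k ^ 2) + (0) * (xx k ^ 4 - yy k ^ 3 * zz k) + (-yy k) * (xx k * zz k ^ 3 - yy k ^ 4) from by ring]
  exact comb_mem _ _ _ _ _
lemma cert_m7 : xx k ^ 2 * zz k ^ 3 ∈ Ig1 k := by
  rw [show xx k ^ 2 * zz k ^ 3 = (yy k ^ 2) * (xx k * yy k ^ 2) + (0) * (xx k * yy k * zz k) + (0) * (yy k * zz k ^ 2) + (0) * (xx k ^ 4 - yy k ^ 3 * zz k) + (xx k) * (xx k * zz k ^ 3 - yy k ^ 4) from by ring]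
  exact comb_mem _ _ _ _ _
lemma cert_m8 : xx k * zz k ^ 5 ∈ Ig1 k := by
  rw [show xx k * zz k ^ 5 = (0) * (xx k * yy k ^ 2) + (0) * (xx k * yy k * zz k) + (yy k ^ 3) * (yy k * zz k ^ 2) + (0) * (xx k ^ 4 - yy k ^ 3 * zz k) + (zz k ^ 2) * (xx k * zz k ^ 3 - yy k ^ 4) from by ring]
  exact comb_mem _ _ _ _ _
lemma cert_p1 : xx k ^ 5 * yy k ∈ Ig1 k := by
  rw [show xx k ^ 5 * yy k = (0) * (xx k * yy k ^ 2) + (yy k ^ 3) * (xx k * yy k * zz k) + (0) * (yy k * zz k ^ 2) + (xx k * yy k) * (xx k ^ 4 - yy k ^ 3 * zz k) + (0) * (xx k * zz k ^ 3 - yy k ^ 4) from by ring]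
  exact comb_mem _ _ _ _ _
lemma cert_p2 : xx k ^ 4 * yy k ^ 2 ∈ Ig1 k := by
  rw [show xx k ^ 4 * yy k ^ 2 = (xx k ^ 3) * (xx k * yy k ^ 2) + (0) * (xx k * yy k * zz k) + (0) * (yy k * zz k ^ 2) + (0) * (xx k ^ 4 - yy k ^ 3 * zz k) + (0) * (xx k * zz k ^ 3 - yy k ^ 4) from by ring]
  exact comb_mem _ _ _ _ _
lemma cert_p3 : xx k ^ 4 * yy k * zz k ∈ Ig1 k := by
  rw [show xx k ^ 4 * yy k * zz k = (0) * (xx k * yy k ^ 2) + (xx k ^ 3) * (xx k * yy k * zz k) + (0) * (yy k * zz k ^ 2) + (0) * (xx k ^ 4 - yy k ^ 3 * zz k) + (0) * (xx k * zz k ^ 3 - yy k ^ 4) from by ring]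
  exact comb_mem _ _ _ _ _
lemma cert_p4 : xx k ^ 4 * zz k ^ 2 ∈ Ig1 k := by
  rw [show xx k ^ 4 * zz k ^ 2 = (0) * (xx k * yy k ^ 2) + (0) * (xx k * yy k * zz k) + (yy k ^ 2 * zz k) * (yy k * zz k ^ 2) + (zz k ^ 2) * (xx k ^ 4 - yy k ^ 3 * zz k) + (0) * (xx k * zz k ^ 3 - yy k ^ 4) from by ring]
  exact comb_mem _ _ _ _ _
lemma cert_p5 : xx k ^ 3 * yy k * zz k ^ 2 ∈ Ig1 k := by
  rw [show xx k ^ 3 * yy k * zz k ^ 2 = (0) * (xx k * yy k ^ 2) + (xx k ^ 2 * zz k) * (xx k * yy k * zz k) + (0) * (yy k * zz k ^ 2) + (0) * (xx k ^ 4 - yy k ^ 3 * zz k) + (0) * (xx k * zz k ^ 3 - yy k ^ 4) from by ring]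
  exact comb_mem _ _ _ _ _
lemma cert_p6 : xx k ^ 3 * zz k ^ 3 ∈ Ig1 k := by
  rw [show xx k ^ 3 * zz k ^ 3 = (xx k * yy k ^ 2) * (xx k * yy k ^ 2) + (0) * (xx k * yy k * zz k) + (0) * (yy k * zz k ^ 2) + (0) * (xx k ^ 4 - yy k ^ 3 * zz k) + (xx k ^ 2) * (xx k * zz k ^ 3 - yy k ^ 4) from by ring]
  exact comb_mem _ _ _ _ _

lemma span_S8_le : Ideal.span ((fun s => (monomial s 1 : Q3)) '' (S8 : Set (Fin 3 →₀ ℕ))) ≤ Ig1 k := by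
  rw [Ideal.span_le]
  rintro w ⟨s, hs, rfl⟩
  simp only [S8, Finset.coe_insert, Set.mem_insert_iff, Finset.coe_singleton,
    Set.mem_singleton_iff] at hs
  simp only [SetLike.mem_coe]
  rcases hs with rfl | rfl | rfl | rfl | rfl | rfl | rfl | rfl
  · show (monomial (fs 1 2 0) 1 : Q3) ∈ Ig1 k
    rw [← mono_eq, show xx k ^ 1 * yy k ^ 2 * zz k ^ 0 = xx k * yy k ^ 2 from by ring]
    exact cert_m1
  · show (monomial (fs 1 1 1) 1 : Q3) ∈ Ig1 k
    rw [← mono_eq, show xx k ^ 1 * yy k ^ 1 * zz k ^ 1 = xx k * yy k * zz k from by ring]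
    exact cert_m2
  · show (monomial (fs 0 1 2) 1 : Q3) ∈ Ig1 k
    rw [← mono_eq, show xx k ^ 0 * yy k ^ 1 * zz k ^ 2 = yy k * zz k ^ 2 from by ring]
    exact cert_m3
  · show (monomial (fs 5 0 0) 1 : Q3) ∈ Ig1 k
    rw [← mono_eq, show xx k ^ 5 * yy k ^ 0 * zz k ^ 0 = xx k ^ 5 from by ring]
    exact cert_m4
  · show (monomial (fs 4 0 1) 1 : Q3) ∈ Ig1 k
    rw [← mono_eq, show xx k ^ 4 * yy k ^ 0 * zz k ^ 1 = xx k ^ 4 * zz k from by ring]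
    exact cert_m5
  · show (monomial (fs 0 5 0) 1 : Q3) ∈ Ig1 k
    rw [← mono_eq, show xx k ^ 0 * yy k ^ 5 * zz k ^ 0 = yy k ^ 5 from by ring]
    exact cert_m6
  · show (monomial (fs 2 0 3) 1 : Q3) ∈ Ig1 k
    rw [← mono_eq, show xx k ^ 2 * yy k ^ 0 * zz k ^ 3 = xx k ^ 2 * zz k ^ 3 from by ring]
    exact cert_m7
  · show (monomial (fs 1 0 5) 1 : Q3) ∈ Ig1 k
    rw [← mono_eq, show xx k ^ 1 * yy k ^ 0 * zz k ^ 5 = xx k * zz k ^ 5 from by ring]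
    exact cert_m8

lemma van_011 : ∀ g ∈ Ig1 k, coeff (fs 0 1 1) g = 0 := by
  refine Ig1_induction _ (by simp) (fun u v hu hv => by rw [map_add, hu, hv, add_zero]) ?_ ?_ ?_ ?_ ?_ <;>
    intro q <;>
    simp only [gen1_eq, gen2_eq, gen3_eq, gen4_eq, gen5_eq, mul_sub, map_sub, coeff_mul_mono] <;>
    norm_num
lemma van_101 : ∀ g ∈ Ig1 k, coeff (fs 1 0 1) g = 0 := by
  refine Ig1_induction _ (by simp) (fun u v hu hv => by rw [map_add, hu, hv, add_zero]) ?_ ?_ ?_ ?_ ?_ <;>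
    intro q <;>
    simp only [gen1_eq, gen2_eq, gen3_eq, gen4_eq, gen5_eq, mul_sub, map_sub, coeff_mul_mono] <;>
    norm_num
lemma van_021 : ∀ g ∈ Ig1 k, coeff (fs 0 2 1) g = 0 := by
  refine Ig1_induction _ (by simp) (fun u v hu hv => by rw [map_add, hu, hv, add_zero]) ?_ ?_ ?_ ?_ ?_ <;>
    intro q <;>
    simp only [gen1_eq, gen2_eq, gen3_eq, gen4_eq, gen5_eq, mul_sub, map_sub, coeff_mul_mono] <;>
    norm_num
lemma van_102 : ∀ g ∈ Ig1 k, coeff (fs 1 0 2) g = 0 := by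
  refine Ig1_induction _ (by simp) (fun u v hu hv => by rw [map_add, hu, hv, add_zero]) ?_ ?_ ?_ ?_ ?_ <;>
    intro q <;>
    simp only [gen1_eq, gen2_eq, gen3_eq, gen4_eq, gen5_eq, mul_sub, map_sub, coeff_mul_mono] <;>
    norm_num
lemma van_210 : ∀ g ∈ Ig1 k, coeff (fs 2 1 0) g = 0 := by
  refine Ig1_induction _ (by simp) (fun u v hu hv => by rw [map_add, hu, hv, add_zero]) ?_ ?_ ?_ ?_ ?_ <;>
    intro q <;>
    simp only [gen1_eq, gen2_eq, gen3_eq, gen4_eq, gen5_eq, mul_sub, map_sub, coeff_mul_mono] <;>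
    norm_num
lemma van_201 : ∀ g ∈ Ig1 k, coeff (fs 2 0 1) g = 0 := by
  refine Ig1_induction _ (by simp) (fun u v hu hv => by rw [map_add, hu, hv, add_zero]) ?_ ?_ ?_ ?_ ?_ <;>
    intro q <;>
    simp only [gen1_eq, gen2_eq, gen3_eq, gen4_eq, gen5_eq, mul_sub, map_sub, coeff_mul_mono] <;>
    norm_num
lemma van_202 : ∀ g ∈ Ig1 k, coeff (fs 2 0 2) g = 0 := by
  refine Ig1_induction _ (by simp) (fun u v hu hv => by rw [map_add, hu, hv, add_zero]) ?_ ?_ ?_ ?_ ?_ <;>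
    intro q <;>
    simp only [gen1_eq, gen2_eq, gen3_eq, gen4_eq, gen5_eq, mul_sub, map_sub, coeff_mul_mono] <;>
    norm_num
lemma van_310 : ∀ g ∈ Ig1 k, coeff (fs 3 1 0) g = 0 := by
  refine Ig1_induction _ (by simp) (fun u v hu hv => by rw [map_add, hu, hv, add_zero]) ?_ ?_ ?_ ?_ ?_ <;>
    intro q <;>
    simp only [gen1_eq, gen2_eq, gen3_eq, gen4_eq, gen5_eq, mul_sub, map_sub, coeff_mul_mono] <;>
    norm_num
lemma van_302 : ∀ g ∈ Ig1 k, coeff (fs 3 0 2) g = 0 := by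
  refine Ig1_induction _ (by simp) (fun u v hu hv => by rw [map_add, hu, hv, add_zero]) ?_ ?_ ?_ ?_ ?_ <;>
    intro q <;>
    simp only [gen1_eq, gen2_eq, gen3_eq, gen4_eq, gen5_eq, mul_sub, map_sub, coeff_mul_mono] <;>
    norm_num
lemma van_031 : ∀ g ∈ Ig1 k, coeff (fs 0 3 1) g + coeff (fs 4 0 0) g = 0 := by
  refine Ig1_induction _ (by simp) (fun u v hu hv => by simp only [map_add]; linear_combination hu + hv) ?_ ?_ ?_ ?_ ?_ <;>
    intro q <;>
    simp only [gen1_eq, gen2_eq, gen3_eq, gen4_eq, gen5_eq, mul_sub, map_sub, coeff_mul_mono] <;>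
    norm_num
lemma van_103 : ∀ g ∈ Ig1 k, coeff (fs 1 0 3) g + coeff (fs 0 4 0) g = 0 := by
  refine Ig1_induction _ (by simp) (fun u v hu hv => by simp only [map_add]; linear_combination hu + hv) ?_ ?_ ?_ ?_ ?_ <;>
    intro q <;>
    simp only [gen1_eq, gen2_eq, gen3_eq, gen4_eq, gen5_eq, mul_sub, map_sub, coeff_mul_mono] <;>
    norm_num
lemma van_104 : ∀ g ∈ Ig1 k, coeff (fs 1 0 4) g + coeff (fs 4 1 0) g + coeff (fs 0 4 1) g = 0 := by
  refine Ig1_induction _ (by simp) (fun u v hu hv => by simp only [map_add]; linear_combination hu + hv) ?_ ?_ ?_ ?_ ?_ <;>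
    intro q <;>
    simp only [gen1_eq, gen2_eq, gen3_eq, gen4_eq, gen5_eq, mul_sub, map_sub, coeff_mul_mono] <;>
    norm_num
set_option maxHeartbeats 2000000 in
lemma key_mem (f : Q3) (hxf : xx k * f ∈ Ig1 k) (hyf : yy k * f ∈ Ig1 k)
    (hzf : zz k * f ∈ Ig1 k) :
    f - (C (coeff (fs 1 0 4) f) + C (coeff (fs 4 1 0) f)
          + C (coeff (fs 0 4 1) f)) * (xx k ^ 4 * yy k)
      - C (coeff (fs 3 0 2) f) * (xx k ^ 3 * zz k ^ 2) ∈ Ig1 k := by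
  have hzn : ∀ n : ℕ, coeff (fs 0 0 n) f = 0 := by
    intro n
    have h := van_purez _ hzf (n + 1)
    rw [zmul] at h
    simp only [coeff_mul_mono] at h
    norm_num at h
    exact h
  have E010 : coeff (fs 0 1 0) f = 0 := by
    have h := van_011 _ (hzf)
    rw [zmul] at h
    simp only [coeff_mul_mono] at h
    norm_num at h
    linear_combination h
  have E100 : coeff (fs 1 0 0) f = 0 := by
    have h := van_101 _ (hzf)
    rw [zmul] at h
    simp only [coeff_mul_mono] at h
    norm_num at h
    linear_combination h
  have E011 : coeff (fs 0 1 1) f = 0 := by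
    have h := van_021 _ (hyf)
    rw [ymul] at h
    simp only [coeff_mul_mono] at h
    norm_num at h
    linear_combination h
  have E020 : coeff (fs 0 2 0) f = 0 := by
    have h := van_021 _ (hzf)
    rw [zmul] at h
    simp only [coeff_mul_mono] at h
    norm_num at h
    linear_combination h
  have E101 : coeff (fs 1 0 1) f = 0 := by
    have h := van_102 _ (hzf)
    rw [zmul] at h
    simp only [coeff_mul_mono] at h
    norm_num at h
    linear_combination h
  have E110 : coeff (fs 1 1 0) f = 0 := by
    have h := van_210 _ (hxf)
    rw [xmul] at h
    simp only [coeff_mul_mono] at h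
    norm_num at h
    linear_combination h
  have E200 : coeff (fs 2 0 0) f = 0 := by
    have h := van_201 _ (hzf)
    rw [zmul] at h
    simp only [coeff_mul_mono] at h
    norm_num at h
    linear_combination h
  have E021 : coeff (fs 0 2 1) f = 0 := by
    have h := van_031 _ (hyf)
    rw [ymul] at h
    simp only [coeff_mul_mono] at h
    norm_num at h
    linear_combination h
  have E030 : coeff (fs 0 3 0) f = 0 := by
    have h := van_031 _ (hzf)
    rw [zmul] at h
    simp only [coeff_mul_mono] at h
    norm_num at h
    linear_combination h
  have E102 : coeff (fs 1 0 2) f = 0 := by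
    have h := van_103 _ (hzf)
    rw [zmul] at h
    simp only [coeff_mul_mono] at h
    norm_num at h
    linear_combination h
  have E201 : coeff (fs 2 0 1) f = 0 := by
    have h := van_202 _ (hzf)
    rw [zmul] at h
    simp only [coeff_mul_mono] at h
    norm_num at h
    linear_combination h
  have E210 : coeff (fs 2 1 0) f = 0 := by
    have h := van_310 _ (hxf)
    rw [xmul] at h
    simp only [coeff_mul_mono] at h
    norm_num at h
    linear_combination h
  have E300 : coeff (fs 3 0 0) f = 0 := by
    have h := van_031 _ (hxf)
    rw [xmul] at h
    simp only [coeff_mul_mono] at h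
    norm_num at h
    linear_combination h
  have E031 : coeff (fs 0 3 1) f + coeff (fs 4 0 0) f = 0 := by
    have h := van_104 _ (hyf)
    rw [ymul] at h
    simp only [coeff_mul_mono] at h
    norm_num at h
    linear_combination h
  have E103 : coeff (fs 0 4 0) f + coeff (fs 1 0 3) f = 0 := by
    have h := van_104 _ (hzf)
    rw [zmul] at h
    simp only [coeff_mul_mono] at h
    norm_num at h
    linear_combination h
  have E202 : coeff (fs 2 0 2) f = 0 := by
    have h := van_302 _ (hxf)
    rw [xmul] at h
    simp only [coeff_mul_mono] at h
    norm_num at h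
    linear_combination h
  have E301 : coeff (fs 3 0 1) f = 0 := by
    have h := van_302 _ (hzf)
    rw [zmul] at h
    simp only [coeff_mul_mono] at h
    norm_num at h
    linear_combination h
  have E310 : coeff (fs 3 1 0) f = 0 := by
    have h := van_104 _ (hxf)
    rw [xmul] at h
    simp only [coeff_mul_mono] at h
    norm_num at h
    linear_combination h - hzn 4
  have hfP : f - (∑ t ∈ T50, monomial (fs t.1 t.2.1 t.2.2) (coeff (fs t.1 t.2.1 t.2.2) f)) ∈ Ig1 k := by
    refine span_S8_le (mem_span_monomials S8 _ ?_)
    intro e he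
    have hcoeffP : coeff e (∑ t ∈ T50, monomial (fs t.1 t.2.1 t.2.2) (coeff (fs t.1 t.2.1 t.2.2) f))
        = if (e 0, e 1, e 2) ∈ T50 then coeff e f else 0 := by
      rw [map_sum, Finset.sum_congr rfl
        (fun t _ => show (coeff e) (monomial (fs t.1 t.2.1 t.2.2) (coeff (fs t.1 t.2.1 t.2.2) f))
            = if t = (e 0, e 1, e 2) then coeff (fs t.1 t.2.1 t.2.2) f else 0 from by
          rw [coeff_monomial]
          refine if_congr ?_ rfl rfl
          rw [eq_fs_iff, Prod.ext_iff, Prod.ext_iff]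
          constructor
          · rintro ⟨h1, h2, h3⟩; exact ⟨h1.symm, h2.symm, h3.symm⟩
          · rintro ⟨h1, h2, h3⟩; exact ⟨h1.symm, h2.symm, h3.symm⟩),
        Finset.sum_ite_eq' T50 (e 0, e 1, e 2)]
      split_ifs with hm
      · show coeff (fs (e 0) (e 1) (e 2)) f = coeff e f
        rw [← eq_fs]
      · rfl
    rw [map_sub, hcoeffP] at he
    by_cases hm : (e 0, e 1, e 2) ∈ T50
    · rw [if_pos hm, sub_self] at he; exact absurd rfl he
    · rw [if_neg hm, sub_zero] at he
      rw [mem_T50] at hm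
      by_cases hz0 : e 0 + e 1 = 0
      · exfalso
        apply he
        rw [show e = fs 0 0 (e 2) from by rw [eq_fs_iff]; omega]
        exact hzn (e 2)
      · have hcase : (1 ≤ e 0 ∧ 2 ≤ e 1) ∨ (1 ≤ e 0 ∧ 1 ≤ e 1 ∧ 1 ≤ e 2) ∨ (1 ≤ e 1 ∧ 2 ≤ e 2) ∨ (5 ≤ e 0) ∨ (4 ≤ e 0 ∧ 1 ≤ e 2) ∨ (5 ≤ e 1) ∨ (2 ≤ e 0 ∧ 3 ≤ e 2) ∨ (1 ≤ e 0 ∧ 5 ≤ e 2) := by omega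
        rcases hcase with h|h|h|h|h|h|h|h
        exacts [⟨fs 1 2 0, by simp [S8, fs_eq_fs], fs_le_iff.mpr (by omega)⟩, ⟨fs 1 1 1, by simp [S8, fs_eq_fs], fs_le_iff.mpr (by omega)⟩, ⟨fs 0 1 2, by simp [S8, fs_eq_fs], fs_le_iff.mpr (by omega)⟩, ⟨fs 5 0 0, by simp [S8, fs_eq_fs], fs_le_iff.mpr (by omega)⟩, ⟨fs 4 0 1, by simp [S8, fs_eq_fs], fs_le_iff.mpr (by omega)⟩, ⟨fs 0 5 0, by simp [S8, fs_eq_fs], fs_le_iff.mpr (by omega)⟩, ⟨fs 2 0 3, by simp [S8, fs_eq_fs], fs_le_iff.mpr (by omega)⟩, ⟨fs 1 0 5, by simp [S8, fs_eq_fs], fs_le_iff.mpr (by omega)⟩]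
  have hkey : (∑ t ∈ T50, monomial (fs t.1 t.2.1 t.2.2) (coeff (fs t.1 t.2.1 t.2.2) f))
      = (C (coeff (fs 1 2 0) f) + C (coeff (fs 1 2 1) f) * zz k + C (coeff (fs 1 3 0) f) * yy k + C (coeff (fs 2 2 0) f) * xx k + C (coeff (fs 1 2 2) f) * zz k ^ 2 + C (coeff (fs 1 3 1) f) * yy k * zz k + C (coeff (fs 1 4 0) f) * yy k ^ 2 + C (coeff (fs 2 0 3) f) * yy k ^ 2 + C (coeff (fs 2 2 1) f) * xx k * zz k + C (coeff (fs 2 3 0) f) * xx k * yy k + C (coeff (fs 3 2 0) f) * xx k ^ 2 + C (coeff (fs 5 0 0) f) * yy k * zz k) * (xx k * yy k ^ 2) + (C (coeff (fs 1 1 1) f) + C (coeff (fs 1 1 2) f) * zz k + C (coeff (fs 2 1 1) f) * xx k + C (coeff (fs 0 5 0) f) * zz k ^ 2 + C (coeff (fs 1 1 3) f) * zz k ^ 2 + C (coeff (fs 2 1 2) f) * xx k * zz k + C (coeff (fs 3 1 1) f) * xx k ^ 2) * (xx k * yy k * zz k) + (C (coeff (fs 0 1 2) f) + C (coeff (fs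 0 1 3) f) * zz k + C (coeff (fs 0 2 2) f) * yy k + C (coeff (fs 0 1 4) f) * zz k ^ 2 + C (coeff (fs 0 2 3) f) * yy k * zz k + C (coeff (fs 0 3 2) f) * yy k ^ 2 + C (coeff (fs 4 0 1) f) * yy k ^ 2) * (yy k * zz k ^ 2) + (C (coeff (fs 4 0 0) f) + C (coeff (fs 4 0 1) f) * zz k + C (coeff (fs 4 1 0) f) * yy k + C (coeff (fs 5 0 0) f) * xx k - C (coeff (fs 1 0 4) f) * yy k - C (coeff (fs 4 1 0) f) * yy k - C (coeff (fs 0 4 1) f) * yy k) * (xx k ^ 4 - yy k ^ 3 * zz k) + (-C (coeff (fs 0 4 0) f) - C (coeff (fs 0 4 1) f) * zz k - C (coeff (fs 0 5 0) f) * yy k + C (coeff (fs 2 0 3) f) * xx k - C (coeff (fs 4 1 0) f) * zz k + C (coeff (fs 1 0 4) f) * zz k + C (coeff (fs 4 1 0) f) * zz k + C (coeff (fs 0 4 1) f) * zz k) * (xx k * zz k ^ 3 - yy k ^ 4) + (C (coeff (fs 0 1 0) f)) * (yy k) + (C (coeff (fs 1 0 0) f)) * (xx k) + (C (coeff (fs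 0 1 1) f)) * (yy k * zz k) + (C (coeff (fs 0 2 0) f)) * (yy k ^ 2) + (C (coeff (fs 1 0 1) f)) * (xx k * zz k) + (C (coeff (fs 1 1 0) f)) * (xx k * yy k) + (C (coeff (fs 2 0 0) f)) * (xx k ^ 2) + (C (coeff (fs 0 2 1) f)) * (yy k ^ 2 * zz k) + (C (coeff (fs 0 3 0) f)) * (yy k ^ 3) + (C (coeff (fs 1 0 2) f)) * (xx k * zz k ^ 2) + (C (coeff (fs 2 0 1) f)) * (xx k ^ 2 * zz k) + (C (coeff (fs 2 1 0) f)) * (xx k ^ 2 * yy k) + (C (coeff (fs 3 0 0) f)) * (xx k ^ 3) + (C (coeff (fs 0 3 1) f) + C (coeff (fs 4 0 0) f)) * (yy k ^ 3 * zz k) + (C (coeff (fs 0 4 0) f) + C (coeff (fs 1 0 3) f)) * (xx k * zz k ^ 3) + (C (coeff (fs 2 0 2) f)) * (xx k ^ 2 * zz k ^ 2) + (C (coeff (fs 3 0 1) f)) * (xx k ^ 3 * zz k) + (C (coeff (fs 3 1 0) f)) * (xx k ^ 3 * yy k) + (C (coeff (fs 1 0 4) f) + C (coeff (fs 4 1 0)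 f) + C (coeff (fs 0 4 1) f)) * (xx k ^ 4 * yy k) + C (coeff (fs 3 0 2) f) * (xx k ^ 3 * zz k ^ 2) := by
    rw [T50_sum (fun t => monomial (fs t.1 t.2.1 t.2.2) (coeff (fs t.1 t.2.1 t.2.2) f))]
    simp only [mono_C]
    ring
  rw [E010] at hkey
  rw [E100] at hkey
  rw [E011] at hkey
  rw [E020] at hkey
  rw [E101] at hkey
  rw [E110] at hkey
  rw [E200] at hkey
  rw [E021] at hkey
  rw [E030] at hkey
  rw [E102] at hkey
  rw [E201] at hkey
  rw [E210] at hkey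
  rw [E300] at hkey
  have hC031 : (C (coeff (fs 0 3 1) f) + C (coeff (fs 4 0 0) f)) = (0 : MvPowerSeries (Fin 3) k) := by
    rw [← map_add, E031, map_zero]
  rw [hC031] at hkey
  have hC103 : (C (coeff (fs 0 4 0) f) + C (coeff (fs 1 0 3) f)) = (0 : MvPowerSeries (Fin 3) k) := by
    rw [← map_add, E103, map_zero]
  rw [hC103] at hkey
  rw [E202] at hkey
  rw [E301] at hkey
  rw [E310] at hkey
  simp only [map_zero, zero_mul, add_zero, zero_add] at hkey
  rw [show f - (C (coeff (fs 1 0 4) f) + C (coeff (fs 4 1 0) f)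
          + C (coeff (fs 0 4 1) f)) * (xx k ^ 4 * yy k)
      - C (coeff (fs 3 0 2) f) * (xx k ^ 3 * zz k ^ 2)
      = (f - (∑ t ∈ T50, monomial (fs t.1 t.2.1 t.2.2) (coeff (fs t.1 t.2.1 t.2.2) f)))
        + ((∑ t ∈ T50, monomial (fs t.1 t.2.1 t.2.2) (coeff (fs t.1 t.2.1 t.2.2) f))
          - (C (coeff (fs 1 0 4) f) + C (coeff (fs 4 1 0) f)
          + C (coeff (fs 0 4 1) f)) * (xx k ^ 4 * yy k)
          - C (coeff (fs 3 0 2) f) * (xx k ^ 3 * zz k ^ 2)) from by ring]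
  refine Ideal.add_mem _ hfP ?_
  rw [hkey]
  rw [show (C (coeff (fs 1 2 0) f) + C (coeff (fs 1 2 1) f) * zz k + C (coeff (fs 1 3 0) f) * yy k + C (coeff (fs 2 2 0) f) * xx k + C (coeff (fs 1 2 2) f) * zz k ^ 2 + C (coeff (fs 1 3 1) f) * yy k * zz k + C (coeff (fs 1 4 0) f) * yy k ^ 2 + C (coeff (fs 2 0 3) f) * yy k ^ 2 + C (coeff (fs 2 2 1) f) * xx k * zz k + C (coeff (fs 2 3 0) f) * xx k * yy k + C (coeff (fs 3 2 0) f) * xx k ^ 2 + C (coeff (fs 5 0 0) f) * yy k * zz k) * (xx k * yy k ^ 2) + (C (coeff (fs 1 1 1) f) + C (coeff (fs 1 1 2) f) * zz k + C (coeff (fs 2 1 1) f) * xx k + C (coeff (fs 0 5 0) f) * zz k ^ 2 + C (coeff (fs 1 1 3) f) * zz k ^ 2 + C (coeff (fs 2 1 2) f) * xx k * zz k + C (coeff (fs 3 1 1) f) * xx k ^ 2) * (xx k * yy k * zz k) + (C (coeff (fs 0 1 2) f) + C (coeff (fs 0 1 3) f) * zz k + C (coeff (fs 0 2 2) f) * yy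 k + C (coeff (fs 0 1 4) f) * zz k ^ 2 + C (coeff (fs 0 2 3) f) * yy k * zz k + C (coeff (fs 0 3 2) f) * yy k ^ 2 + C (coeff (fs 4 0 1) f) * yy k ^ 2) * (yy k * zz k ^ 2) + (C (coeff (fs 4 0 0) f) + C (coeff (fs 4 0 1) f) * zz k + C (coeff (fs 4 1 0) f) * yy k + C (coeff (fs 5 0 0) f) * xx k - C (coeff (fs 1 0 4) f) * yy k - C (coeff (fs 4 1 0) f) * yy k - C (coeff (fs 0 4 1) f) * yy k) * (xx k ^ 4 - yy k ^ 3 * zz k) + (-C (coeff (fs 0 4 0) f) - C (coeff (fs 0 4 1) f) * zz k - C (coeff (fs 0 5 0) f) * yy k + C (coeff (fs 2 0 3) f) * xx k - C (coeff (fs 4 1 0) f) * zz k + C (coeff (fs 1 0 4) f) * zz k + C (coeff (fs 4 1 0) f) * zz k + C (coeff (fs 0 4 1) f) * zz k) * (xx k * zz k ^ 3 - yy k ^ 4) + (C (coeff (fs 1 0 4) f) + C (coeff (fs 4 1 0) f) + C (coeff (fs 0 4 1) f)) * (xx k ^ 4 * yy k) + C (coeff (fs 3 0 2) f) * (xx k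 ^ 3 * zz k ^ 2)
      - (C (coeff (fs 1 0 4) f) + C (coeff (fs 4 1 0) f)
          + C (coeff (fs 0 4 1) f)) * (xx k ^ 4 * yy k)
      - C (coeff (fs 3 0 2) f) * (xx k ^ 3 * zz k ^ 2)
      = (C (coeff (fs 1 2 0) f) + C (coeff (fs 1 2 1) f) * zz k + C (coeff (fs 1 3 0) f) * yy k + C (coeff (fs 2 2 0) f) * xx k + C (coeff (fs 1 2 2) f) * zz k ^ 2 + C (coeff (fs 1 3 1) f) * yy k * zz k + C (coeff (fs 1 4 0) f) * yy k ^ 2 + C (coeff (fs 2 0 3) f) * yy k ^ 2 + C (coeff (fs 2 2 1) f) * xx k * zz k + C (coeff (fs 2 3 0) f) * xx k * yy k + C (coeff (fs 3 2 0) f) * xx k ^ 2 + C (coeff (fs 5 0 0) f) * yy k * zz k) * (xx k * yy k ^ 2) + (C (coeff (fs 1 1 1) f) + C (coeff (fs 1 1 2) f) * zz k + C (coeff (fs 2 1 1) f) * xx k + C (coeff (fs 0 5 0) f) * zz k ^ 2 + C (coeff (fs 1 1 3) f) * zz k ^ 2 + C (coeff (fs 2 1 2) f) * xx k * zz k + C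 (coeff (fs 3 1 1) f) * xx k ^ 2) * (xx k * yy k * zz k) + (C (coeff (fs 0 1 2) f) + C (coeff (fs 0 1 3) f) * zz k + C (coeff (fs 0 2 2) f) * yy k + C (coeff (fs 0 1 4) f) * zz k ^ 2 + C (coeff (fs 0 2 3) f) * yy k * zz k + C (coeff (fs 0 3 2) f) * yy k ^ 2 + C (coeff (fs 4 0 1) f) * yy k ^ 2) * (yy k * zz k ^ 2) + (C (coeff (fs 4 0 0) f) + C (coeff (fs 4 0 1) f) * zz k + C (coeff (fs 4 1 0) f) * yy k + C (coeff (fs 5 0 0) f) * xx k - C (coeff (fs 1 0 4) f) * yy k - C (coeff (fs 4 1 0) f) * yy k - C (coeff (fs 0 4 1) f) * yy k) * (xx k ^ 4 - yy k ^ 3 * zz k) + (-C (coeff (fs 0 4 0) f) - C (coeff (fs 0 4 1) f) * zz k - C (coeff (fs 0 5 0) f) * yy k + C (coeff (fs 2 0 3) f) * xx k - C (coeff (fs 4 1 0) f) * zz k + C (coeff (fs 1 0 4) f) * zz k + C (coeff (fs 4 1 0) f) * zz k + C (coeff (fs 0 4 1) f) * zz k) * (xx k * zz k ^ 3 - yy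 k ^ 4) from by ring]
  refine Ideal.add_mem _ (Ideal.add_mem _ (Ideal.add_mem _ (Ideal.add_mem _ ?_ ?_) ?_) ?_) ?_
  exacts [Ideal.mul_mem_left _ _ memG1, Ideal.mul_mem_left _ _ memG2, Ideal.mul_mem_left _ _ memG3,
    Ideal.mul_mem_left _ _ memG4, Ideal.mul_mem_left _ _ memG5]

lemma sub_C_mem_span (α : Q3) :
    α - C (constantCoeff α) ∈ Ideal.span {xx k, yy k, zz k} := by
  have h := mem_span_monomials ({fs 1 0 0, fs 0 1 0, fs 0 0 1} : Finset (Fin 3 →₀ ℕ))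
      (α - C (constantCoeff α)) ?_
  · have himg : ((fun s => (monomial s 1 : Q3)) ''
        ↑({fs 1 0 0, fs 0 1 0, fs 0 0 1} : Finset (Fin 3 →₀ ℕ))) = {xx k, yy k, zz k} := by
      simp only [Finset.coe_insert, Finset.coe_singleton, Set.image_insert_eq,
        Set.image_singleton]
      rw [show (monomial (fs 1 0 0) 1 : Q3) = xx k from by rw [← mono_eq]; ring,
        show (monomial (fs 0 1 0) 1 : Q3) = yy k from by rw [← mono_eq]; ring,
        show (monomial (fs 0 0 1) 1 : Q3) = zz k from by rw [← mono_eq]; ring]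
    rwa [himg] at h
  · intro e he
    by_cases h0 : e = 0
    · exfalso
      apply he
      subst h0
      rw [map_sub, coeff_zero_eq_constantCoeff]
      simp
    · have h1 : ¬(e 0 = 0 ∧ e 1 = 0 ∧ e 2 = 0) := by
        rintro ⟨ha, hb, hc⟩
        exact h0 (by rw [eq_fs e, ha, hb, hc, fs_zero])
      have : 1 ≤ e 0 ∨ 1 ≤ e 1 ∨ 1 ≤ e 2 := by omega
      rcases this with h|h|h
      exacts [⟨fs 1 0 0, by simp, fs_le_iff.mpr (by omega)⟩,
        ⟨fs 0 1 0, by simp [fs_eq_fs], fs_le_iff.mpr (by omega)⟩,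
        ⟨fs 0 0 1, by simp [fs_eq_fs], fs_le_iff.mpr (by omega)⟩]

lemma span_xyz_mul_mem {β A : Q3} (hβ : β ∈ Ideal.span {xx k, yy k, zz k})
    (hA1 : xx k * A ∈ Ig1 k) (hA2 : yy k * A ∈ Ig1 k) (hA3 : zz k * A ∈ Ig1 k) :
    β * A ∈ Ig1 k := by
  induction hβ using Submodule.span_induction with
  | mem q hq =>
      rcases (by simpa using hq : q = xx k ∨ q = yy k ∨ q = zz k) with rfl|rfl|rfl
      exacts [hA1, hA2, hA3]
  | zero => simp
  | add u v _ _ hu hv => rw [add_mul]; exact Ideal.add_mem _ hu hv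
  | smul r q _ hq => rw [smul_eq_mul, mul_assoc]; exact Ideal.mul_mem_left _ _ hq

lemma mk_mul_eq_smul {A : Q3} (hA1 : xx k * A ∈ Ig1 k) (hA2 : yy k * A ∈ Ig1 k)
    (hA3 : zz k * A ∈ Ig1 k) (α : Q3) :
    Ideal.Quotient.mk (Ig1 k) α * Ideal.Quotient.mk (Ig1 k) A
      = constantCoeff α • Ideal.Quotient.mk (Ig1 k) A := by
  have h1 : constantCoeff α • Ideal.Quotient.mk (Ig1 k) A
      = Ideal.Quotient.mk (Ig1 k) (C (constantCoeff α) * A) := by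
    rw [← smul_eq_C_mul]
    rw [show Ideal.Quotient.mk (Ig1 k) (constantCoeff α • A)
        = Ideal.Quotient.mkₐ k (Ig1 k) (constantCoeff α • A) from rfl,
      map_smul, Ideal.Quotient.mkₐ_eq_mk]
  rw [h1, ← map_mul, Ideal.Quotient.eq,
    show α * A - C (constantCoeff α) * A
      = (α - C (constantCoeff α)) * A from by ring]
  exact span_xyz_mul_mem (sub_C_mem_span α) hA1 hA2 hA3

lemma certA1 : xx k * (xx k ^ 4 * yy k) ∈ Ig1 k := by
  rw [show xx k * (xx k ^ 4 * yy k) = xx k ^ 5 * yy k from by ring]; exact cert_p1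
lemma certA2 : yy k * (xx k ^ 4 * yy k) ∈ Ig1 k := by
  rw [show yy k * (xx k ^ 4 * yy k) = xx k ^ 4 * yy k ^ 2 from by ring]; exact cert_p2
lemma certA3 : zz k * (xx k ^ 4 * yy k) ∈ Ig1 k := by
  rw [show zz k * (xx k ^ 4 * yy k) = xx k ^ 4 * yy k * zz k from by ring]; exact cert_p3
lemma certB1 : xx k * (xx k ^ 3 * zz k ^ 2) ∈ Ig1 k := by
  rw [show xx k * (xx k ^ 3 * zz k ^ 2) = xx k ^ 4 * zz k ^ 2 from by ring]; exact cert_p4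
lemma certB2 : yy k * (xx k ^ 3 * zz k ^ 2) ∈ Ig1 k := by
  rw [show yy k * (xx k ^ 3 * zz k ^ 2) = xx k ^ 3 * yy k * zz k ^ 2 from by ring]; exact cert_p5
lemma certB3 : zz k * (xx k ^ 3 * zz k ^ 2) ∈ Ig1 k := by
  rw [show zz k * (xx k ^ 3 * zz k ^ 2) = xx k ^ 3 * zz k ^ 3 from by ring]; exact cert_p6

lemma colon_ge_gen {A : Q3} (hA1 : xx k * A ∈ Ig1 k) (hA2 : yy k * A ∈ Ig1 k)
    (hA3 : zz k * A ∈ Ig1 k) :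
    Ideal.Quotient.mk (Ig1 k) A ∈ (⊥ : Ideal (Q3 ⧸ Ig1 k)).colon
      (Ideal.map (Ideal.Quotient.mk (Ig1 k)) (Ideal.span {xx k, yy k, zz k})) := by
  rw [Submodule.mem_colon]
  intro p hp
  rw [Ideal.map_span] at hp
  rw [smul_eq_mul, Submodule.mem_bot]
  induction hp using Submodule.span_induction with
  | mem q hq =>
      simp only [Set.image_insert_eq, Set.image_singleton, Set.mem_insert_iff,
        Set.mem_singleton_iff] at hq
      rcases hq with rfl|rfl|rfl <;> rw [← map_mul, Ideal.Quotient.eq_zero_iff_mem, mul_comm]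
      exacts [hA1, hA2, hA3]
  | zero => rw [mul_zero]
  | add u v _ _ hu hv => rw [mul_add, hu, hv, add_zero]
  | smul r q _ hq => rw [smul_eq_mul, mul_left_comm, hq, mul_zero]

lemma socle_eq : (⊥ : Ideal (Q3 ⧸ Ig1 k)).colon
      (Ideal.map (Ideal.Quotient.mk (Ig1 k)) (Ideal.span {xx k, yy k, zz k}))
    = Ideal.span {Ideal.Quotient.mk (Ig1 k) (xx k ^ 4 * yy k),
        Ideal.Quotient.mk (Ig1 k) (xx k ^ 3 * zz k ^ 2)} := by
  apply le_antisymm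
  · intro r hr
    obtain ⟨f, rfl⟩ := Ideal.Quotient.mk_surjective r
    rw [Submodule.mem_colon] at hr
    have hmem : ∀ w : Q3, w ∈ Ideal.span {xx k, yy k, zz k} → w * f ∈ Ig1 k := by
      intro w hw
      have := hr (Ideal.Quotient.mk (Ig1 k) w) (Ideal.mem_map_of_mem _ hw)
      rw [smul_eq_mul, Submodule.mem_bot, ← map_mul, Ideal.Quotient.eq_zero_iff_mem,
        mul_comm] at this
      exact this
    have hx := hmem (xx k) (Ideal.subset_span (by simp))
    have hy := hmem (yy k) (Ideal.subset_span (by simp))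
    have hz := hmem (zz k) (Ideal.subset_span (by simp))
    have key := key_mem f hx hy hz
    refine Ideal.mem_span_pair.mpr
      ⟨Ideal.Quotient.mk (Ig1 k) (C (coeff (fs 1 0 4) f)
          + C (coeff (fs 4 1 0) f) + C (coeff (fs 0 4 1) f)),
        Ideal.Quotient.mk (Ig1 k) (C (coeff (fs 3 0 2) f)), ?_⟩
    rw [← map_mul, ← map_mul, ← map_add, Ideal.Quotient.eq]
    rw [show (C ((coeff (fs 1 0 4)) f) + C ((coeff (fs 4 1 0)) f)
          + C ((coeff (fs 0 4 1)) f)) * (xx k ^ 4 * yy k)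
        + C ((coeff (fs 3 0 2)) f) * (xx k ^ 3 * zz k ^ 2) - f
      = -(f - (C ((coeff (fs 1 0 4)) f) + C ((coeff (fs 4 1 0)) f)
          + C ((coeff (fs 0 4 1)) f)) * (xx k ^ 4 * yy k)
        - C ((coeff (fs 3 0 2)) f) * (xx k ^ 3 * zz k ^ 2)) from by ring]
    exact neg_mem key
  · rw [Ideal.span_le]
    rintro w hw
    simp only [Set.mem_insert_iff, Set.mem_singleton_iff] at hw
    rcases hw with rfl | rfl
    · exact colon_ge_gen certA1 certA2 certA3
    · exact colon_ge_gen certB1 certB2 certB3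

lemma restrict_eq : Submodule.restrictScalars k
      (Ideal.span {Ideal.Quotient.mk (Ig1 k) (xx k ^ 4 * yy k),
        Ideal.Quotient.mk (Ig1 k) (xx k ^ 3 * zz k ^ 2)})
    = Submodule.span k {Ideal.Quotient.mk (Ig1 k) (xx k ^ 4 * yy k),
        Ideal.Quotient.mk (Ig1 k) (xx k ^ 3 * zz k ^ 2)} := by
  apply le_antisymm
  · intro w hw
    obtain ⟨r1, r2, heq⟩ := Ideal.mem_span_pair.mp hw
    obtain ⟨α1, rfl⟩ := Ideal.Quotient.mk_surjective r1
    obtain ⟨α2, rfl⟩ := Ideal.Quotient.mk_surjective r2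
    rw [← heq, mk_mul_eq_smul certA1 certA2 certA3 α1, mk_mul_eq_smul certB1 certB2 certB3 α2]
    exact Submodule.add_mem _
      (Submodule.smul_mem _ _ (Submodule.subset_span (by simp)))
      (Submodule.smul_mem _ _ (Submodule.subset_span (by simp)))
  · rw [Submodule.span_le]
    intro w hw
    exact Ideal.subset_span hw

lemma lin_indep : LinearIndependent k
    ![Ideal.Quotient.mk (Ig1 k) (xx k ^ 4 * yy k),
      Ideal.Quotient.mk (Ig1 k) (xx k ^ 3 * zz k ^ 2)] := by
  rw [LinearIndependent.pair_iff]
  intro s t hst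
  have hsm : ∀ (c : k) (A : Q3), c • Ideal.Quotient.mk (Ig1 k) A
      = Ideal.Quotient.mk (Ig1 k) (C c * A) := by
    intro c A
    rw [← smul_eq_C_mul,
      show Ideal.Quotient.mk (Ig1 k) (c • A) = Ideal.Quotient.mkₐ k (Ig1 k) (c • A) from rfl,
      map_smul, Ideal.Quotient.mkₐ_eq_mk]
  rw [hsm, hsm, ← map_add, Ideal.Quotient.eq_zero_iff_mem] at hst
  rw [show C s * (xx k ^ 4 * yy k) = monomial (fs 4 1 0) s from by
      rw [← C_mul_powers]; ring,
    show C t * (xx k ^ 3 * zz k ^ 2) = monomial (fs 3 0 2) t from by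
      rw [← C_mul_powers]; ring] at hst
  constructor
  · have h1 := van_104 _ hst
    simp only [map_add, coeff_mono] at h1
    norm_num at h1
    exact h1
  · have h2 := van_302 _ hst
    simp only [map_add, coeff_mono] at h2
    norm_num at h2
    exact h2

end SocleWork

open SocleWork in
/-- The socle `(0 :_R m)` of `R = Q/g1`. -/
theorem socle_g1 (k : Type*) [Field k] :
    (⊥ : Ideal (MvPowerSeries (Fin 3) k ⧸ Ig1 k)).colon
        (Ideal.map (Ideal.Quotient.mk (Ig1 k)) (Ideal.span {xx k, yy k, zz k}))
      = Ideal.span {Ideal.Quotient.mk (Ig1 k) (xx k ^ 4 * yy k), Ideal.Quotient.mk (Ig1 k) (xx k ^ 3 * zz k ^ 2)} ∧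
    Module.finrank k (Submodule.restrictScalars k
      ((⊥ : Ideal (MvPowerSeries (Fin 3) k ⧸ Ig1 k)).colon
        (Ideal.map (Ideal.Quotient.mk (Ig1 k)) (Ideal.span {xx k, yy k, zz k})))) = 2 := by
  refine ⟨socle_eq, ?_⟩
  rw [socle_eq, restrict_eq]
  rw [show ({Ideal.Quotient.mk (Ig1 k) (xx k ^ 4 * yy k),
      Ideal.Quotient.mk (Ig1 k) (xx k ^ 3 * zz k ^ 2)} :
        Set (MvPowerSeries (Fin 3) k ⧸ Ig1 k))
    = Set.range ![Ideal.Quotient.mk (Ig1 k) (xx k ^ 4 * yy k),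
        Ideal.Quotient.mk (Ig1 k) (xx k ^ 3 * zz k ^ 2)] from by
      rw [Matrix.range_cons, Matrix.range_cons, Matrix.range_empty, Set.union_empty,
        Set.singleton_union]]
  rw [finrank_span_eq_card lin_indep]
  simp
end
end

section
/- Let R = Q/𝔤₄ where 𝔤₄ = (xy², xyz, yz², x⁴ − y³z, xz³ − y⁴, x³y − z⁴, x²z², x³z) ⊆ Q. Then the socle (0 :_R 𝔪) of R is equal to the R-submodule generated by the images of x⁴y and x²z, and its dimension as a k-vector space is 2 (that is, R has type 2). -/
/-!
STATEMENT 3: For `R = Q/g4`, the socle `(0 :_R m)` of `R` (where `m` is the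
maximal ideal of `R`, the image of `(x,y,z)`) equals the `R`-submodule generated by
the images of x^4*y, x^2*z, and its dimension as a `k`-vector space is 2 (so `R` has type 2).

Here `Q = k[[x,y,z]]` is formalized as `MvPowerSeries (Fin 3) k` with
`x = X 0`, `y = X 1`, `z = X 2`.
-/

noncomputable section

/-- The ideal `g4` of the paper. -/
def Ig4 (k : Type*) [Field k] : Ideal (MvPowerSeries (Fin 3) k) :=
  Ideal.span {xx k * yy k ^ 2, xx k * yy k * zz k, yy k * zz k ^ 2, xx k ^ 4 - yy k ^ 3 * zz k, xx k * zz k ^ 3 - yy k ^ 4, xx k ^ 3 * yy k - zz k ^ 4, xx k ^ 2 * zz k ^ 2, xx k ^ 3 * zz k}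

namespace SocleAux
variable {k : Type*} [Field k]

/-- exponent triple as a `Finsupp` -/
def dd (a b c : ℕ) : Fin 3 →₀ ℕ :=
  Finsupp.single 0 a + Finsupp.single 1 b + Finsupp.single 2 c

@[simp] lemma dd_apply0 (a b c : ℕ) : dd a b c 0 = a := by simp [dd]
@[simp] lemma dd_apply1 (a b c : ℕ) : dd a b c 1 = b := by simp [dd, Finsupp.single_apply]
@[simp] lemma dd_apply2 (a b c : ℕ) : dd a b c 2 = c := by simp [dd, Finsupp.single_apply]

lemma dd_eq_iff {a b c a' b' c' : ℕ} : dd a b c = dd a' b' c' ↔ a = a' ∧ b = b' ∧ c = c' := by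
  constructor
  · intro h
    exact ⟨by simpa using Finsupp.ext_iff.mp h 0, by simpa using Finsupp.ext_iff.mp h 1,
      by simpa using Finsupp.ext_iff.mp h 2⟩
  · rintro ⟨rfl, rfl, rfl⟩; rfl

lemma dd_le_iff {a b c a' b' c' : ℕ} : dd a b c ≤ dd a' b' c' ↔ a ≤ a' ∧ b ≤ b' ∧ c ≤ c' := by
  rw [Finsupp.le_def]
  constructor
  · intro h; exact ⟨by simpa using h 0, by simpa using h 1, by simpa using h 2⟩
  · rintro ⟨h1, h2, h3⟩ i; fin_cases i <;> simpa

lemma dd_sub (a b c a' b' c' : ℕ) : dd a b c - dd a' b' c' = dd (a - a') (b - b') (c - c') := by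
  ext i; fin_cases i <;> simp [Finsupp.tsub_apply]

lemma dd_add (a b c a' b' c' : ℕ) : dd a b c + dd a' b' c' = dd (a + a') (b + b') (c + c') := by
  ext i; fin_cases i <;> simp

lemma eq_dd (e : Fin 3 →₀ ℕ) : e = dd (e 0) (e 1) (e 2) := by
  ext i; fin_cases i <;> simp

lemma dd_zero : dd 0 0 0 = 0 := by ext i; fin_cases i <;> simp

lemma mono_eq (a b c : ℕ) :
    (xx k) ^ a * (yy k) ^ b * (zz k) ^ c = MvPowerSeries.monomial (R := k) (dd a b c) 1 := by
  rw [xx, yy, zz, MvPowerSeries.X_pow_eq, MvPowerSeries.X_pow_eq, MvPowerSeries.X_pow_eq,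
    MvPowerSeries.monomial_mul_monomial, MvPowerSeries.monomial_mul_monomial, dd]
  norm_num

lemma xm : xx k = MvPowerSeries.monomial (R := k) (dd 1 0 0) 1 := by rw [← mono_eq]; ring
lemma ym : yy k = MvPowerSeries.monomial (R := k) (dd 0 1 0) 1 := by rw [← mono_eq]; ring
lemma zm : zz k = MvPowerSeries.monomial (R := k) (dd 0 0 1) 1 := by rw [← mono_eq]; ring
lemma m410 : xx k ^ 4 * yy k = MvPowerSeries.monomial (R := k) (dd 4 1 0) 1 := by rw [← mono_eq]; ring
lemma m201 : xx k ^ 2 * zz k = MvPowerSeries.monomial (R := k) (dd 2 0 1) 1 := by rw [← mono_eq]; ring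

lemma hg1 : xx k * yy k ^ 2 ∈ Ig4 k := by rw [Ig4]; exact Ideal.subset_span (by simp)
lemma hg2 : xx k * yy k * zz k ∈ Ig4 k := by rw [Ig4]; exact Ideal.subset_span (by simp)
lemma hg3 : yy k * zz k ^ 2 ∈ Ig4 k := by rw [Ig4]; exact Ideal.subset_span (by simp)
lemma hg4 : xx k ^ 4 - yy k ^ 3 * zz k ∈ Ig4 k := by rw [Ig4]; exact Ideal.subset_span (by simp)
lemma hg5 : xx k * zz k ^ 3 - yy k ^ 4 ∈ Ig4 k := by rw [Ig4]; exact Ideal.subset_span (by simp)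
lemma hg6 : xx k ^ 3 * yy k - zz k ^ 4 ∈ Ig4 k := by rw [Ig4]; exact Ideal.subset_span (by simp)
lemma hg7 : xx k ^ 2 * zz k ^ 2 ∈ Ig4 k := by rw [Ig4]; exact Ideal.subset_span (by simp)
lemma hg8 : xx k ^ 3 * zz k ∈ Ig4 k := by rw [Ig4]; exact Ideal.subset_span (by simp)

/-- scale a monomial membership -/
lemma monoIr (a b c : ℕ) (r : k) (h : MvPowerSeries.monomial (R := k) (dd a b c) (1 : k) ∈ Ig4 k) :
    MvPowerSeries.monomial (R := k) (dd a b c) r ∈ Ig4 k := by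
  have h2 := Ideal.mul_mem_left (Ig4 k) (MvPowerSeries.monomial (R := k) 0 r) h
  rwa [MvPowerSeries.monomial_mul_monomial, zero_add, mul_one] at h2

lemma sub_monoIr (a b c a' b' c' : ℕ) (r : k)
    (h : MvPowerSeries.monomial (R := k) (dd a b c) (1 : k)
      - MvPowerSeries.monomial (R := k) (dd a' b' c') (1 : k) ∈ Ig4 k) :
    MvPowerSeries.monomial (R := k) (dd a b c) r - MvPowerSeries.monomial (R := k) (dd a' b' c') r ∈ Ig4 k := by
  have h2 := Ideal.mul_mem_left (Ig4 k) (MvPowerSeries.monomial (R := k) 0 r) h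
  rwa [mul_sub, MvPowerSeries.monomial_mul_monomial, MvPowerSeries.monomial_mul_monomial,
    zero_add, zero_add, mul_one] at h2

lemma cM_0_0_5 : MvPowerSeries.monomial (R := k) (dd 0 0 5) (1 : k) ∈ Ig4 k := by
  rw [← mono_eq]
  have h : xx k ^ 0 * yy k ^ 0 * zz k ^ 5 = -(zz k) * (xx k ^ 3 * yy k - zz k ^ 4) + xx k ^ 2 * (xx k * yy k * zz k) := by ring
  rw [h]
  exact add_mem (Ideal.mul_mem_left _ _ hg6) (Ideal.mul_mem_left _ _ hg2)

lemma cM_0_0_6 : MvPowerSeries.monomial (R := k) (dd 0 0 6) (1 : k) ∈ Ig4 k := by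
  rw [← mono_eq]
  have h : xx k ^ 0 * yy k ^ 0 * zz k ^ 6 = -(zz k ^ 2) * (xx k ^ 3 * yy k - zz k ^ 4) + xx k ^ 2 * zz k * (xx k * yy k * zz k) := by ring
  rw [h]
  exact add_mem (Ideal.mul_mem_left _ _ hg6) (Ideal.mul_mem_left _ _ hg2)

lemma cM_0_1_2 : MvPowerSeries.monomial (R := k) (dd 0 1 2) (1 : k) ∈ Ig4 k := by
  rw [← mono_eq]
  have h : xx k ^ 0 * yy k ^ 1 * zz k ^ 2 = (1 : MvPowerSeries (Fin 3) k) * (yy k * zz k ^ 2) := by ring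
  rw [h]
  exact Ideal.mul_mem_left _ _ hg3

lemma cM_0_1_3 : MvPowerSeries.monomial (R := k) (dd 0 1 3) (1 : k) ∈ Ig4 k := by
  rw [← mono_eq]
  have h : xx k ^ 0 * yy k ^ 1 * zz k ^ 3 = zz k * (yy k * zz k ^ 2) := by ring
  rw [h]
  exact Ideal.mul_mem_left _ _ hg3

lemma cM_0_1_4 : MvPowerSeries.monomial (R := k) (dd 0 1 4) (1 : k) ∈ Ig4 k := by
  rw [← mono_eq]
  have h : xx k ^ 0 * yy k ^ 1 * zz k ^ 4 = zz k ^ 2 * (yy k * zz k ^ 2) := by ring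
  rw [h]
  exact Ideal.mul_mem_left _ _ hg3

lemma cM_0_1_5 : MvPowerSeries.monomial (R := k) (dd 0 1 5) (1 : k) ∈ Ig4 k := by
  rw [← mono_eq]
  have h : xx k ^ 0 * yy k ^ 1 * zz k ^ 5 = zz k ^ 3 * (yy k * zz k ^ 2) := by ring
  rw [h]
  exact Ideal.mul_mem_left _ _ hg3

lemma cM_0_2_2 : MvPowerSeries.monomial (R := k) (dd 0 2 2) (1 : k) ∈ Ig4 k := by
  rw [← mono_eq]
  have h : xx k ^ 0 * yy k ^ 2 * zz k ^ 2 = yy k * (yy k * zz k ^ 2) := by ring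
  rw [h]
  exact Ideal.mul_mem_left _ _ hg3

lemma cM_0_2_3 : MvPowerSeries.monomial (R := k) (dd 0 2 3) (1 : k) ∈ Ig4 k := by
  rw [← mono_eq]
  have h : xx k ^ 0 * yy k ^ 2 * zz k ^ 3 = yy k * zz k * (yy k * zz k ^ 2) := by ring
  rw [h]
  exact Ideal.mul_mem_left _ _ hg3

lemma cM_0_2_4 : MvPowerSeries.monomial (R := k) (dd 0 2 4) (1 : k) ∈ Ig4 k := by
  rw [← mono_eq]
  have h : xx k ^ 0 * yy k ^ 2 * zz k ^ 4 = yy k * zz k ^ 2 * (yy k * zz k ^ 2) := by ring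
  rw [h]
  exact Ideal.mul_mem_left _ _ hg3

lemma cM_0_3_2 : MvPowerSeries.monomial (R := k) (dd 0 3 2) (1 : k) ∈ Ig4 k := by
  rw [← mono_eq]
  have h : xx k ^ 0 * yy k ^ 3 * zz k ^ 2 = yy k ^ 2 * (yy k * zz k ^ 2) := by ring
  rw [h]
  exact Ideal.mul_mem_left _ _ hg3

lemma cM_0_3_3 : MvPowerSeries.monomial (R := k) (dd 0 3 3) (1 : k) ∈ Ig4 k := by
  rw [← mono_eq]
  have h : xx k ^ 0 * yy k ^ 3 * zz k ^ 3 = yy k ^ 2 * zz k * (yy k * zz k ^ 2) := by ring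
  rw [h]
  exact Ideal.mul_mem_left _ _ hg3

lemma cM_0_4_2 : MvPowerSeries.monomial (R := k) (dd 0 4 2) (1 : k) ∈ Ig4 k := by
  rw [← mono_eq]
  have h : xx k ^ 0 * yy k ^ 4 * zz k ^ 2 = yy k ^ 3 * (yy k * zz k ^ 2) := by ring
  rw [h]
  exact Ideal.mul_mem_left _ _ hg3

lemma cM_0_5_0 : MvPowerSeries.monomial (R := k) (dd 0 5 0) (1 : k) ∈ Ig4 k := by
  rw [← mono_eq]
  have h : xx k ^ 0 * yy k ^ 5 * zz k ^ 0 = -(yy k) * (xx k * zz k ^ 3 - yy k ^ 4) + zz k ^ 2 * (xx k * yy k * zz k) := by ring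
  rw [h]
  exact add_mem (Ideal.mul_mem_left _ _ hg5) (Ideal.mul_mem_left _ _ hg2)

lemma cM_0_5_1 : MvPowerSeries.monomial (R := k) (dd 0 5 1) (1 : k) ∈ Ig4 k := by
  rw [← mono_eq]
  have h : xx k ^ 0 * yy k ^ 5 * zz k ^ 1 = -(yy k * zz k) * (xx k * zz k ^ 3 - yy k ^ 4) + zz k ^ 3 * (xx k * yy k * zz k) := by ring
  rw [h]
  exact add_mem (Ideal.mul_mem_left _ _ hg5) (Ideal.mul_mem_left _ _ hg2)

lemma cM_0_6_0 : MvPowerSeries.monomial (R := k) (dd 0 6 0) (1 : k) ∈ Ig4 k := by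
  rw [← mono_eq]
  have h : xx k ^ 0 * yy k ^ 6 * zz k ^ 0 = -(yy k ^ 2) * (xx k * zz k ^ 3 - yy k ^ 4) + zz k ^ 3 * (xx k * yy k ^ 2) := by ring
  rw [h]
  exact add_mem (Ideal.mul_mem_left _ _ hg5) (Ideal.mul_mem_left _ _ hg1)

lemma cM_1_0_5 : MvPowerSeries.monomial (R := k) (dd 1 0 5) (1 : k) ∈ Ig4 k := by
  rw [← mono_eq]
  have h : xx k ^ 1 * yy k ^ 0 * zz k ^ 5 = zz k ^ 2 * (xx k * zz k ^ 3 - yy k ^ 4) + yy k ^ 3 * (yy k * zz k ^ 2) := by ring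
  rw [h]
  exact add_mem (Ideal.mul_mem_left _ _ hg5) (Ideal.mul_mem_left _ _ hg3)

lemma cM_1_1_1 : MvPowerSeries.monomial (R := k) (dd 1 1 1) (1 : k) ∈ Ig4 k := by
  rw [← mono_eq]
  have h : xx k ^ 1 * yy k ^ 1 * zz k ^ 1 = (1 : MvPowerSeries (Fin 3) k) * (xx k * yy k * zz k) := by ring
  rw [h]
  exact Ideal.mul_mem_left _ _ hg2

lemma cM_1_1_2 : MvPowerSeries.monomial (R := k) (dd 1 1 2) (1 : k) ∈ Ig4 k := by
  rw [← mono_eq]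
  have h : xx k ^ 1 * yy k ^ 1 * zz k ^ 2 = zz k * (xx k * yy k * zz k) := by ring
  rw [h]
  exact Ideal.mul_mem_left _ _ hg2

lemma cM_1_1_3 : MvPowerSeries.monomial (R := k) (dd 1 1 3) (1 : k) ∈ Ig4 k := by
  rw [← mono_eq]
  have h : xx k ^ 1 * yy k ^ 1 * zz k ^ 3 = zz k ^ 2 * (xx k * yy k * zz k) := by ring
  rw [h]
  exact Ideal.mul_mem_left _ _ hg2

lemma cM_1_1_4 : MvPowerSeries.monomial (R := k) (dd 1 1 4) (1 : k) ∈ Ig4 k := by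
  rw [← mono_eq]
  have h : xx k ^ 1 * yy k ^ 1 * zz k ^ 4 = zz k ^ 3 * (xx k * yy k * zz k) := by ring
  rw [h]
  exact Ideal.mul_mem_left _ _ hg2

lemma cM_1_2_0 : MvPowerSeries.monomial (R := k) (dd 1 2 0) (1 : k) ∈ Ig4 k := by
  rw [← mono_eq]
  have h : xx k ^ 1 * yy k ^ 2 * zz k ^ 0 = (1 : MvPowerSeries (Fin 3) k) * (xx k * yy k ^ 2) := by ring
  rw [h]
  exact Ideal.mul_mem_left _ _ hg1

lemma cM_1_2_1 : MvPowerSeries.monomial (R := k) (dd 1 2 1) (1 : k) ∈ Ig4 k := by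
  rw [← mono_eq]
  have h : xx k ^ 1 * yy k ^ 2 * zz k ^ 1 = zz k * (xx k * yy k ^ 2) := by ring
  rw [h]
  exact Ideal.mul_mem_left _ _ hg1

lemma cM_1_2_2 : MvPowerSeries.monomial (R := k) (dd 1 2 2) (1 : k) ∈ Ig4 k := by
  rw [← mono_eq]
  have h : xx k ^ 1 * yy k ^ 2 * zz k ^ 2 = zz k ^ 2 * (xx k * yy k ^ 2) := by ring
  rw [h]
  exact Ideal.mul_mem_left _ _ hg1

lemma cM_1_2_3 : MvPowerSeries.monomial (R := k) (dd 1 2 3) (1 : k) ∈ Ig4 k := by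
  rw [← mono_eq]
  have h : xx k ^ 1 * yy k ^ 2 * zz k ^ 3 = zz k ^ 3 * (xx k * yy k ^ 2) := by ring
  rw [h]
  exact Ideal.mul_mem_left _ _ hg1

lemma cM_1_3_0 : MvPowerSeries.monomial (R := k) (dd 1 3 0) (1 : k) ∈ Ig4 k := by
  rw [← mono_eq]
  have h : xx k ^ 1 * yy k ^ 3 * zz k ^ 0 = yy k * (xx k * yy k ^ 2) := by ring
  rw [h]
  exact Ideal.mul_mem_left _ _ hg1

lemma cM_1_3_1 : MvPowerSeries.monomial (R := k) (dd 1 3 1) (1 : k) ∈ Ig4 k := by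
  rw [← mono_eq]
  have h : xx k ^ 1 * yy k ^ 3 * zz k ^ 1 = yy k * zz k * (xx k * yy k ^ 2) := by ring
  rw [h]
  exact Ideal.mul_mem_left _ _ hg1

lemma cM_1_3_2 : MvPowerSeries.monomial (R := k) (dd 1 3 2) (1 : k) ∈ Ig4 k := by
  rw [← mono_eq]
  have h : xx k ^ 1 * yy k ^ 3 * zz k ^ 2 = yy k * zz k ^ 2 * (xx k * yy k ^ 2) := by ring
  rw [h]
  exact Ideal.mul_mem_left _ _ hg1

lemma cM_1_4_0 : MvPowerSeries.monomial (R := k) (dd 1 4 0) (1 : k) ∈ Ig4 k := by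
  rw [← mono_eq]
  have h : xx k ^ 1 * yy k ^ 4 * zz k ^ 0 = yy k ^ 2 * (xx k * yy k ^ 2) := by ring
  rw [h]
  exact Ideal.mul_mem_left _ _ hg1

lemma cM_1_4_1 : MvPowerSeries.monomial (R := k) (dd 1 4 1) (1 : k) ∈ Ig4 k := by
  rw [← mono_eq]
  have h : xx k ^ 1 * yy k ^ 4 * zz k ^ 1 = yy k ^ 2 * zz k * (xx k * yy k ^ 2) := by ring
  rw [h]
  exact Ideal.mul_mem_left _ _ hg1

lemma cM_1_5_0 : MvPowerSeries.monomial (R := k) (dd 1 5 0) (1 : k) ∈ Ig4 k := by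
  rw [← mono_eq]
  have h : xx k ^ 1 * yy k ^ 5 * zz k ^ 0 = yy k ^ 3 * (xx k * yy k ^ 2) := by ring
  rw [h]
  exact Ideal.mul_mem_left _ _ hg1

lemma cM_2_0_2 : MvPowerSeries.monomial (R := k) (dd 2 0 2) (1 : k) ∈ Ig4 k := by
  rw [← mono_eq]
  have h : xx k ^ 2 * yy k ^ 0 * zz k ^ 2 = (1 : MvPowerSeries (Fin 3) k) * (xx k ^ 2 * zz k ^ 2) := by ring
  rw [h]
  exact Ideal.mul_mem_left _ _ hg7

lemma cM_2_0_3 : MvPowerSeries.monomial (R := k) (dd 2 0 3) (1 : k) ∈ Ig4 k := by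
  rw [← mono_eq]
  have h : xx k ^ 2 * yy k ^ 0 * zz k ^ 3 = zz k * (xx k ^ 2 * zz k ^ 2) := by ring
  rw [h]
  exact Ideal.mul_mem_left _ _ hg7

lemma cM_2_0_4 : MvPowerSeries.monomial (R := k) (dd 2 0 4) (1 : k) ∈ Ig4 k := by
  rw [← mono_eq]
  have h : xx k ^ 2 * yy k ^ 0 * zz k ^ 4 = zz k ^ 2 * (xx k ^ 2 * zz k ^ 2) := by ring
  rw [h]
  exact Ideal.mul_mem_left _ _ hg7

lemma cM_2_1_1 : MvPowerSeries.monomial (R := k) (dd 2 1 1) (1 : k) ∈ Ig4 k := by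
  rw [← mono_eq]
  have h : xx k ^ 2 * yy k ^ 1 * zz k ^ 1 = xx k * (xx k * yy k * zz k) := by ring
  rw [h]
  exact Ideal.mul_mem_left _ _ hg2

lemma cM_2_1_2 : MvPowerSeries.monomial (R := k) (dd 2 1 2) (1 : k) ∈ Ig4 k := by
  rw [← mono_eq]
  have h : xx k ^ 2 * yy k ^ 1 * zz k ^ 2 = xx k * zz k * (xx k * yy k * zz k) := by ring
  rw [h]
  exact Ideal.mul_mem_left _ _ hg2

lemma cM_2_1_3 : MvPowerSeries.monomial (R := k) (dd 2 1 3) (1 : k) ∈ Ig4 k := by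
  rw [← mono_eq]
  have h : xx k ^ 2 * yy k ^ 1 * zz k ^ 3 = xx k * zz k ^ 2 * (xx k * yy k * zz k) := by ring
  rw [h]
  exact Ideal.mul_mem_left _ _ hg2

lemma cM_2_2_0 : MvPowerSeries.monomial (R := k) (dd 2 2 0) (1 : k) ∈ Ig4 k := by
  rw [← mono_eq]
  have h : xx k ^ 2 * yy k ^ 2 * zz k ^ 0 = xx k * (xx k * yy k ^ 2) := by ring
  rw [h]
  exact Ideal.mul_mem_left _ _ hg1

lemma cM_2_2_1 : MvPowerSeries.monomial (R := k) (dd 2 2 1) (1 : k) ∈ Ig4 k := by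
  rw [← mono_eq]
  have h : xx k ^ 2 * yy k ^ 2 * zz k ^ 1 = xx k * zz k * (xx k * yy k ^ 2) := by ring
  rw [h]
  exact Ideal.mul_mem_left _ _ hg1

lemma cM_2_2_2 : MvPowerSeries.monomial (R := k) (dd 2 2 2) (1 : k) ∈ Ig4 k := by
  rw [← mono_eq]
  have h : xx k ^ 2 * yy k ^ 2 * zz k ^ 2 = xx k * zz k ^ 2 * (xx k * yy k ^ 2) := by ring
  rw [h]
  exact Ideal.mul_mem_left _ _ hg1

lemma cM_2_3_0 : MvPowerSeries.monomial (R := k) (dd 2 3 0) (1 : k) ∈ Ig4 k := by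
  rw [← mono_eq]
  have h : xx k ^ 2 * yy k ^ 3 * zz k ^ 0 = xx k * yy k * (xx k * yy k ^ 2) := by ring
  rw [h]
  exact Ideal.mul_mem_left _ _ hg1

lemma cM_2_3_1 : MvPowerSeries.monomial (R := k) (dd 2 3 1) (1 : k) ∈ Ig4 k := by
  rw [← mono_eq]
  have h : xx k ^ 2 * yy k ^ 3 * zz k ^ 1 = xx k * yy k * zz k * (xx k * yy k ^ 2) := by ring
  rw [h]
  exact Ideal.mul_mem_left _ _ hg1

lemma cM_2_4_0 : MvPowerSeries.monomial (R := k) (dd 2 4 0) (1 : k) ∈ Ig4 k := by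
  rw [← mono_eq]
  have h : xx k ^ 2 * yy k ^ 4 * zz k ^ 0 = xx k * yy k ^ 2 * (xx k * yy k ^ 2) := by ring
  rw [h]
  exact Ideal.mul_mem_left _ _ hg1

lemma cM_3_0_1 : MvPowerSeries.monomial (R := k) (dd 3 0 1) (1 : k) ∈ Ig4 k := by
  rw [← mono_eq]
  have h : xx k ^ 3 * yy k ^ 0 * zz k ^ 1 = (1 : MvPowerSeries (Fin 3) k) * (xx k ^ 3 * zz k) := by ring
  rw [h]
  exact Ideal.mul_mem_left _ _ hg8

lemma cM_3_0_2 : MvPowerSeries.monomial (R := k) (dd 3 0 2) (1 : k) ∈ Ig4 k := by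
  rw [← mono_eq]
  have h : xx k ^ 3 * yy k ^ 0 * zz k ^ 2 = xx k * (xx k ^ 2 * zz k ^ 2) := by ring
  rw [h]
  exact Ideal.mul_mem_left _ _ hg7

lemma cM_3_0_3 : MvPowerSeries.monomial (R := k) (dd 3 0 3) (1 : k) ∈ Ig4 k := by
  rw [← mono_eq]
  have h : xx k ^ 3 * yy k ^ 0 * zz k ^ 3 = xx k * zz k * (xx k ^ 2 * zz k ^ 2) := by ring
  rw [h]
  exact Ideal.mul_mem_left _ _ hg7

lemma cM_3_1_1 : MvPowerSeries.monomial (R := k) (dd 3 1 1) (1 : k) ∈ Ig4 k := by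
  rw [← mono_eq]
  have h : xx k ^ 3 * yy k ^ 1 * zz k ^ 1 = xx k ^ 2 * (xx k * yy k * zz k) := by ring
  rw [h]
  exact Ideal.mul_mem_left _ _ hg2

lemma cM_3_1_2 : MvPowerSeries.monomial (R := k) (dd 3 1 2) (1 : k) ∈ Ig4 k := by
  rw [← mono_eq]
  have h : xx k ^ 3 * yy k ^ 1 * zz k ^ 2 = xx k ^ 2 * zz k * (xx k * yy k * zz k) := by ring
  rw [h]
  exact Ideal.mul_mem_left _ _ hg2

lemma cM_3_2_0 : MvPowerSeries.monomial (R := k) (dd 3 2 0) (1 : k) ∈ Ig4 k := by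
  rw [← mono_eq]
  have h : xx k ^ 3 * yy k ^ 2 * zz k ^ 0 = xx k ^ 2 * (xx k * yy k ^ 2) := by ring
  rw [h]
  exact Ideal.mul_mem_left _ _ hg1

lemma cM_3_2_1 : MvPowerSeries.monomial (R := k) (dd 3 2 1) (1 : k) ∈ Ig4 k := by
  rw [← mono_eq]
  have h : xx k ^ 3 * yy k ^ 2 * zz k ^ 1 = xx k ^ 2 * zz k * (xx k * yy k ^ 2) := by ring
  rw [h]
  exact Ideal.mul_mem_left _ _ hg1

lemma cM_3_3_0 : MvPowerSeries.monomial (R := k) (dd 3 3 0) (1 : k) ∈ Ig4 k := by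
  rw [← mono_eq]
  have h : xx k ^ 3 * yy k ^ 3 * zz k ^ 0 = xx k ^ 2 * yy k * (xx k * yy k ^ 2) := by ring
  rw [h]
  exact Ideal.mul_mem_left _ _ hg1

lemma cM_4_0_1 : MvPowerSeries.monomial (R := k) (dd 4 0 1) (1 : k) ∈ Ig4 k := by
  rw [← mono_eq]
  have h : xx k ^ 4 * yy k ^ 0 * zz k ^ 1 = xx k * (xx k ^ 3 * zz k) := by ring
  rw [h]
  exact Ideal.mul_mem_left _ _ hg8

lemma cM_4_0_2 : MvPowerSeries.monomial (R := k) (dd 4 0 2) (1 : k) ∈ Ig4 k := by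
  rw [← mono_eq]
  have h : xx k ^ 4 * yy k ^ 0 * zz k ^ 2 = xx k ^ 2 * (xx k ^ 2 * zz k ^ 2) := by ring
  rw [h]
  exact Ideal.mul_mem_left _ _ hg7

lemma cM_4_1_1 : MvPowerSeries.monomial (R := k) (dd 4 1 1) (1 : k) ∈ Ig4 k := by
  rw [← mono_eq]
  have h : xx k ^ 4 * yy k ^ 1 * zz k ^ 1 = xx k ^ 3 * (xx k * yy k * zz k) := by ring
  rw [h]
  exact Ideal.mul_mem_left _ _ hg2

lemma cM_4_2_0 : MvPowerSeries.monomial (R := k) (dd 4 2 0) (1 : k) ∈ Ig4 k := by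
  rw [← mono_eq]
  have h : xx k ^ 4 * yy k ^ 2 * zz k ^ 0 = xx k ^ 3 * (xx k * yy k ^ 2) := by ring
  rw [h]
  exact Ideal.mul_mem_left _ _ hg1

lemma cM_5_0_0 : MvPowerSeries.monomial (R := k) (dd 5 0 0) (1 : k) ∈ Ig4 k := by
  rw [← mono_eq]
  have h : xx k ^ 5 * yy k ^ 0 * zz k ^ 0 = xx k * (xx k ^ 4 - yy k ^ 3 * zz k) + yy k ^ 2 * (xx k * yy k * zz k) := by ring
  rw [h]
  exact add_mem (Ideal.mul_mem_left _ _ hg4) (Ideal.mul_mem_left _ _ hg2)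

lemma cM_5_0_1 : MvPowerSeries.monomial (R := k) (dd 5 0 1) (1 : k) ∈ Ig4 k := by
  rw [← mono_eq]
  have h : xx k ^ 5 * yy k ^ 0 * zz k ^ 1 = xx k ^ 2 * (xx k ^ 3 * zz k) := by ring
  rw [h]
  exact Ideal.mul_mem_left _ _ hg8

lemma cM_5_1_0 : MvPowerSeries.monomial (R := k) (dd 5 1 0) (1 : k) ∈ Ig4 k := by
  rw [← mono_eq]
  have h : xx k ^ 5 * yy k ^ 1 * zz k ^ 0 = xx k * yy k * (xx k ^ 4 - yy k ^ 3 * zz k) + yy k ^ 3 * (xx k * yy k * zz k) := by ring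
  rw [h]
  exact add_mem (Ideal.mul_mem_left _ _ hg4) (Ideal.mul_mem_left _ _ hg2)

lemma cM_6_0_0 : MvPowerSeries.monomial (R := k) (dd 6 0 0) (1 : k) ∈ Ig4 k := by
  rw [← mono_eq]
  have h : xx k ^ 6 * yy k ^ 0 * zz k ^ 0 = xx k ^ 2 * (xx k ^ 4 - yy k ^ 3 * zz k) + xx k * yy k * zz k * (xx k * yy k ^ 2) := by ring
  rw [h]
  exact add_mem (Ideal.mul_mem_left _ _ hg4) (Ideal.mul_mem_left _ _ hg1)

lemma cD_0_3_1_4_0_0 :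
    MvPowerSeries.monomial (R := k) (dd 0 3 1) (1 : k) - MvPowerSeries.monomial (R := k) (dd 4 0 0) (1 : k) ∈ Ig4 k := by
  rw [← mono_eq, ← mono_eq]
  have h : xx k ^ 0 * yy k ^ 3 * zz k ^ 1 - xx k ^ 4 * yy k ^ 0 * zz k ^ 0 = -(1 : MvPowerSeries (Fin 3) k) * (xx k ^ 4 - yy k ^ 3 * zz k) := by ring
  rw [h]
  exact Ideal.mul_mem_left _ _ hg4

lemma cD_0_0_4_3_1_0 :
    MvPowerSeries.monomial (R := k) (dd 0 0 4) (1 : k) - MvPowerSeries.monomial (R := k) (dd 3 1 0) (1 : k) ∈ Ig4 k := by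
  rw [← mono_eq, ← mono_eq]
  have h : xx k ^ 0 * yy k ^ 0 * zz k ^ 4 - xx k ^ 3 * yy k ^ 1 * zz k ^ 0 = -(1 : MvPowerSeries (Fin 3) k) * (xx k ^ 3 * yy k - zz k ^ 4) := by ring
  rw [h]
  exact Ideal.mul_mem_left _ _ hg6

lemma cD_0_4_0_1_0_3 :
    MvPowerSeries.monomial (R := k) (dd 0 4 0) (1 : k) - MvPowerSeries.monomial (R := k) (dd 1 0 3) (1 : k) ∈ Ig4 k := by
  rw [← mono_eq, ← mono_eq]
  have h : xx k ^ 0 * yy k ^ 4 * zz k ^ 0 - xx k ^ 1 * yy k ^ 0 * zz k ^ 3 = -(1 : MvPowerSeries (Fin 3) k) * (xx k * zz k ^ 3 - yy k ^ 4) := by ring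
  rw [h]
  exact Ideal.mul_mem_left _ _ hg5

lemma cD_0_4_1_4_1_0 :
    MvPowerSeries.monomial (R := k) (dd 0 4 1) (1 : k) - MvPowerSeries.monomial (R := k) (dd 4 1 0) (1 : k) ∈ Ig4 k := by
  rw [← mono_eq, ← mono_eq]
  have h : xx k ^ 0 * yy k ^ 4 * zz k ^ 1 - xx k ^ 4 * yy k ^ 1 * zz k ^ 0 = -(zz k) * (xx k * zz k ^ 3 - yy k ^ 4) + -(xx k) * (xx k ^ 3 * yy k - zz k ^ 4) := by ring
  rw [h]
  exact add_mem (Ideal.mul_mem_left _ _ hg5) (Ideal.mul_mem_left _ _ hg6)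

lemma cD_1_0_4_4_1_0 :
    MvPowerSeries.monomial (R := k) (dd 1 0 4) (1 : k) - MvPowerSeries.monomial (R := k) (dd 4 1 0) (1 : k) ∈ Ig4 k := by
  rw [← mono_eq, ← mono_eq]
  have h : xx k ^ 1 * yy k ^ 0 * zz k ^ 4 - xx k ^ 4 * yy k ^ 1 * zz k ^ 0 = -(xx k) * (xx k ^ 3 * yy k - zz k ^ 4) := by ring
  rw [h]
  exact Ideal.mul_mem_left _ _ hg6

/-- auxiliary shifted series -/
def shift (f : MvPowerSeries (Fin 3) k) (sel : (Fin 3 →₀ ℕ) → (Fin 3 →₀ ℕ))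
    (e : Fin 3 →₀ ℕ) : MvPowerSeries (Fin 3) k :=
  fun d' => if sel (d' + e) = e then MvPowerSeries.coeff (R := k) (d' + e) f else 0

lemma coeff_shift (f : MvPowerSeries (Fin 3) k) (sel : (Fin 3 →₀ ℕ) → (Fin 3 →₀ ℕ))
    (e d' : Fin 3 →₀ ℕ) :
    MvPowerSeries.coeff (R := k) d' (shift f sel e)
      = if sel (d' + e) = e then MvPowerSeries.coeff (R := k) (d' + e) f else 0 := rfl

/-- Partition a power series into monomial multiples according to a selection function. -/
lemma partition (f : MvPowerSeries (Fin 3) k) (E : Finset (Fin 3 →₀ ℕ))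
    (sel : (Fin 3 →₀ ℕ) → (Fin 3 →₀ ℕ))
    (hsel : ∀ d, MvPowerSeries.coeff (R := k) d f ≠ 0 → sel d ∈ E ∧ sel d ≤ d) :
    f = ∑ e ∈ E, (MvPowerSeries.monomial (R := k) e 1) * shift f sel e := by
  apply MvPowerSeries.ext
  intro d
  rw [map_sum]
  have hterm : ∀ e ∈ E, MvPowerSeries.coeff (R := k) d ((MvPowerSeries.monomial (R := k) e 1) * shift f sel e)
      = if e ≤ d ∧ sel d = e then MvPowerSeries.coeff (R := k) d f else 0 := by
    intro e _
    rw [MvPowerSeries.coeff_monomial_mul]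
    by_cases he : e ≤ d
    · rw [if_pos he, one_mul, coeff_shift, tsub_add_cancel_of_le he]
      by_cases hs : sel d = e
      · rw [if_pos hs, if_pos ⟨he, hs⟩]
      · rw [if_neg hs, if_neg (by tauto)]
    · rw [if_neg he, if_neg (by tauto)]
  rw [Finset.sum_congr rfl hterm]
  by_cases hd : MvPowerSeries.coeff (R := k) d f = 0
  · rw [hd]
    exact (Finset.sum_eq_zero (fun e _ => by split <;> simp [hd])).symm
  · obtain ⟨hmem, hle⟩ := hsel d hd
    rw [Finset.sum_eq_single_of_mem (sel d) hmem]
    · rw [if_pos ⟨hle, rfl⟩]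
    · intro e _ hne
      apply if_neg
      rintro ⟨-, h2⟩
      exact hne h2.symm

set_option maxHeartbeats 1000000 in
/-- Every series whose coefficients vanish in degrees < 6 lies in `Ig4`. -/
lemma tail_mem (f : MvPowerSeries (Fin 3) k)
    (h : ∀ e : Fin 3 →₀ ℕ, e 0 + e 1 + e 2 < 6 → MvPowerSeries.coeff (R := k) e f = 0) :
    f ∈ Ig4 k := by
  classical
  set B6 : Finset (ℕ × ℕ × ℕ) := (Finset.range 7 ×ˢ Finset.range 7 ×ˢ Finset.range 7).filter
      (fun p => p.1 + p.2.1 + p.2.2 = 6) with hB6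
  set E6 : Finset (Fin 3 →₀ ℕ) := B6.image (fun p => dd p.1 p.2.1 p.2.2) with hE6
  set sel : (Fin 3 →₀ ℕ) → (Fin 3 →₀ ℕ) := fun d =>
      dd (min (d 0) 6) (min (d 1) (6 - min (d 0) 6))
        (6 - min (d 0) 6 - min (d 1) (6 - min (d 0) 6)) with hsel
  have hs : ∀ d, MvPowerSeries.coeff (R := k) d f ≠ 0 → sel d ∈ E6 ∧ sel d ≤ d := by
    intro d hd
    have hdeg : 6 ≤ d 0 + d 1 + d 2 := by
      by_contra hlt
      exact hd (h d (by omega))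
    constructor
    · rw [hE6]
      apply Finset.mem_image.mpr
      refine ⟨(min (d 0) 6, min (d 1) (6 - min (d 0) 6),
          6 - min (d 0) 6 - min (d 1) (6 - min (d 0) 6)), ?_, by rw [hsel]⟩
      rw [hB6]
      simp only [Finset.mem_filter, Finset.mem_product, Finset.mem_range]
      omega
    · rw [hsel]
      dsimp only
      have h2 : dd (min (d 0) 6) (min (d 1) (6 - min (d 0) 6))
          (6 - min (d 0) 6 - min (d 1) (6 - min (d 0) 6)) ≤ dd (d 0) (d 1) (d 2) :=
        dd_le_iff.mpr ⟨by omega, by omega, by omega⟩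
      rwa [← eq_dd d] at h2
  rw [partition f E6 sel hs]
  apply Ideal.sum_mem
  intro e he
  rw [hE6] at he
  obtain ⟨p, hp, rfl⟩ := Finset.mem_image.mp he
  have hp2 : p ∈ ({(0, 0, 6), (0, 1, 5), (0, 2, 4), (0, 3, 3), (0, 4, 2), (0, 5, 1), (0, 6, 0), (1, 0, 5), (1, 1, 4), (1, 2, 3), (1, 3, 2), (1, 4, 1), (1, 5, 0), (2, 0, 4), (2, 1, 3), (2, 2, 2), (2, 3, 1), (2, 4, 0), (3, 0, 3), (3, 1, 2), (3, 2, 1), (3, 3, 0), (4, 0, 2), (4, 1, 1), (4, 2, 0), (5, 0, 1), (5, 1, 0), (6, 0, 0)} : Finset (ℕ × ℕ × ℕ)) := by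
    rw [show ({(0, 0, 6), (0, 1, 5), (0, 2, 4), (0, 3, 3), (0, 4, 2), (0, 5, 1), (0, 6, 0), (1, 0, 5), (1, 1, 4), (1, 2, 3), (1, 3, 2), (1, 4, 1), (1, 5, 0), (2, 0, 4), (2, 1, 3), (2, 2, 2), (2, 3, 1), (2, 4, 0), (3, 0, 3), (3, 1, 2), (3, 2, 1), (3, 3, 0), (4, 0, 2), (4, 1, 1), (4, 2, 0), (5, 0, 1), (5, 1, 0), (6, 0, 0)} : Finset (ℕ × ℕ × ℕ)) = B6 from by rw [hB6]; decide]
    exact hp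
  simp only [Finset.mem_insert, Finset.mem_singleton] at hp2
  rcases hp2 with rfl|rfl|rfl|rfl|rfl|rfl|rfl|rfl|rfl|rfl|rfl|rfl|rfl|rfl|rfl|rfl|rfl|rfl|rfl|rfl|rfl|rfl|rfl|rfl|rfl|rfl|rfl|rfl
  · rw [mul_comm]; exact Ideal.mul_mem_left _ _ cM_0_0_6
  · rw [mul_comm]; exact Ideal.mul_mem_left _ _ cM_0_1_5
  · rw [mul_comm]; exact Ideal.mul_mem_left _ _ cM_0_2_4
  · rw [mul_comm]; exact Ideal.mul_mem_left _ _ cM_0_3_3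
  · rw [mul_comm]; exact Ideal.mul_mem_left _ _ cM_0_4_2
  · rw [mul_comm]; exact Ideal.mul_mem_left _ _ cM_0_5_1
  · rw [mul_comm]; exact Ideal.mul_mem_left _ _ cM_0_6_0
  · rw [mul_comm]; exact Ideal.mul_mem_left _ _ cM_1_0_5
  · rw [mul_comm]; exact Ideal.mul_mem_left _ _ cM_1_1_4
  · rw [mul_comm]; exact Ideal.mul_mem_left _ _ cM_1_2_3
  · rw [mul_comm]; exact Ideal.mul_mem_left _ _ cM_1_3_2
  · rw [mul_comm]; exact Ideal.mul_mem_left _ _ cM_1_4_1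
  · rw [mul_comm]; exact Ideal.mul_mem_left _ _ cM_1_5_0
  · rw [mul_comm]; exact Ideal.mul_mem_left _ _ cM_2_0_4
  · rw [mul_comm]; exact Ideal.mul_mem_left _ _ cM_2_1_3
  · rw [mul_comm]; exact Ideal.mul_mem_left _ _ cM_2_2_2
  · rw [mul_comm]; exact Ideal.mul_mem_left _ _ cM_2_3_1
  · rw [mul_comm]; exact Ideal.mul_mem_left _ _ cM_2_4_0
  · rw [mul_comm]; exact Ideal.mul_mem_left _ _ cM_3_0_3
  · rw [mul_comm]; exact Ideal.mul_mem_left _ _ cM_3_1_2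
  · rw [mul_comm]; exact Ideal.mul_mem_left _ _ cM_3_2_1
  · rw [mul_comm]; exact Ideal.mul_mem_left _ _ cM_3_3_0
  · rw [mul_comm]; exact Ideal.mul_mem_left _ _ cM_4_0_2
  · rw [mul_comm]; exact Ideal.mul_mem_left _ _ cM_4_1_1
  · rw [mul_comm]; exact Ideal.mul_mem_left _ _ cM_4_2_0
  · rw [mul_comm]; exact Ideal.mul_mem_left _ _ cM_5_0_1
  · rw [mul_comm]; exact Ideal.mul_mem_left _ _ cM_5_1_0
  · rw [mul_comm]; exact Ideal.mul_mem_left _ _ cM_6_0_0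

/-- Every series with zero constant coefficient lies in the maximal ideal `(x,y,z)`. -/
lemma sub_const_mem (f : MvPowerSeries (Fin 3) k)
    (h0 : MvPowerSeries.coeff (R := k) (dd 0 0 0) f = 0) :
    f ∈ Ideal.span {xx k, yy k, zz k} := by
  classical
  set B1 : Finset (ℕ × ℕ × ℕ) := {(1, 0, 0), (0, 1, 0), (0, 0, 1)} with hB1
  set E1 : Finset (Fin 3 →₀ ℕ) := B1.image (fun p => dd p.1 p.2.1 p.2.2) with hE1
  set sel : (Fin 3 →₀ ℕ) → (Fin 3 →₀ ℕ) := fun d =>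
      if 1 ≤ d 0 then dd 1 0 0 else if 1 ≤ d 1 then dd 0 1 0 else dd 0 0 1 with hsel
  have hs : ∀ d, MvPowerSeries.coeff (R := k) d f ≠ 0 → sel d ∈ E1 ∧ sel d ≤ d := by
    intro d hd
    have hd0 : ¬(d 0 = 0 ∧ d 1 = 0 ∧ d 2 = 0) := by
      rintro ⟨h1, h2, h3⟩
      apply hd
      have hdz : d = dd 0 0 0 := by rw [eq_dd d, h1, h2, h3]
      rw [hdz]
      exact h0
    rw [hsel, hE1]
    dsimp only
    split_ifs with hx hy
    · refine ⟨Finset.mem_image.mpr ⟨(1, 0, 0), by rw [hB1]; simp, rfl⟩, ?_⟩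
      have h2 : dd 1 0 0 ≤ dd (d 0) (d 1) (d 2) := dd_le_iff.mpr ⟨hx, by omega, by omega⟩
      rwa [← eq_dd d] at h2
    · refine ⟨Finset.mem_image.mpr ⟨(0, 1, 0), by rw [hB1]; simp, rfl⟩, ?_⟩
      have h2 : dd 0 1 0 ≤ dd (d 0) (d 1) (d 2) := dd_le_iff.mpr ⟨by omega, hy, by omega⟩
      rwa [← eq_dd d] at h2
    · refine ⟨Finset.mem_image.mpr ⟨(0, 0, 1), by rw [hB1]; simp, rfl⟩, ?_⟩
      have h2 : dd 0 0 1 ≤ dd (d 0) (d 1) (d 2) := dd_le_iff.mpr ⟨by omega, by omega, by omega⟩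
      rwa [← eq_dd d] at h2
  rw [partition f E1 sel hs]
  apply Ideal.sum_mem
  intro e he
  rw [hE1] at he
  obtain ⟨p, hp, rfl⟩ := Finset.mem_image.mp he
  rw [hB1] at hp
  simp only [Finset.mem_insert, Finset.mem_singleton] at hp
  rcases hp with rfl|rfl|rfl
  · rw [← xm]
    exact Ideal.mul_mem_right _ _ (Ideal.subset_span (by simp))
  · rw [← ym]
    exact Ideal.mul_mem_right _ _ (Ideal.subset_span (by simp))
  · rw [← zm]
    exact Ideal.mul_mem_right _ _ (Ideal.subset_span (by simp))
lemma exists_decomp {f : MvPowerSeries (Fin 3) k} (hf : f ∈ Ig4 k) :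
    ∃ q₁ q₂ q₃ q₄ q₅ q₆ q₇ q₈ : MvPowerSeries (Fin 3) k,
      f = q₁ * (xx k * yy k ^ 2) + q₂ * (xx k * yy k * zz k) + q₃ * (yy k * zz k ^ 2)
        + q₄ * (xx k ^ 4 - yy k ^ 3 * zz k) + q₅ * (xx k * zz k ^ 3 - yy k ^ 4)
        + q₆ * (xx k ^ 3 * yy k - zz k ^ 4) + q₇ * (xx k ^ 2 * zz k ^ 2)
        + q₈ * (xx k ^ 3 * zz k) := by
  rw [Ig4] at hf
  rw [Ideal.mem_span_insert] at hf
  obtain ⟨q₁, f₁, hf₁, rfl⟩ := hf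
  rw [Ideal.mem_span_insert] at hf₁
  obtain ⟨q₂, f₂, hf₂, rfl⟩ := hf₁
  rw [Ideal.mem_span_insert] at hf₂
  obtain ⟨q₃, f₃, hf₃, rfl⟩ := hf₂
  rw [Ideal.mem_span_insert] at hf₃
  obtain ⟨q₄, f₄, hf₄, rfl⟩ := hf₃
  rw [Ideal.mem_span_insert] at hf₄
  obtain ⟨q₅, f₅, hf₅, rfl⟩ := hf₄
  rw [Ideal.mem_span_insert] at hf₅
  obtain ⟨q₆, f₆, hf₆, rfl⟩ := hf₅
  rw [Ideal.mem_span_insert] at hf₆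
  obtain ⟨q₇, f₇, hf₇, rfl⟩ := hf₆
  rw [Ideal.mem_span_singleton'] at hf₇
  obtain ⟨q₈, rfl⟩ := hf₇
  exact ⟨q₁, q₂, q₃, q₄, q₅, q₆, q₇, q₈, by ring⟩

lemma gm1 : xx k * yy k ^ 2 = MvPowerSeries.monomial (R := k) (dd 1 2 0) 1 := by rw [← mono_eq]; ring
lemma gm2 : xx k * yy k * zz k = MvPowerSeries.monomial (R := k) (dd 1 1 1) 1 := by rw [← mono_eq]; ring
lemma gm3 : yy k * zz k ^ 2 = MvPowerSeries.monomial (R := k) (dd 0 1 2) 1 := by rw [← mono_eq]; ring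
lemma gm4 : xx k ^ 4 - yy k ^ 3 * zz k
    = MvPowerSeries.monomial (R := k) (dd 4 0 0) 1 - MvPowerSeries.monomial (R := k) (dd 0 3 1) 1 := by
  rw [← mono_eq, ← mono_eq]; ring
lemma gm5 : xx k * zz k ^ 3 - yy k ^ 4
    = MvPowerSeries.monomial (R := k) (dd 1 0 3) 1 - MvPowerSeries.monomial (R := k) (dd 0 4 0) 1 := by
  rw [← mono_eq, ← mono_eq]; ring
lemma gm6 : xx k ^ 3 * yy k - zz k ^ 4
    = MvPowerSeries.monomial (R := k) (dd 3 1 0) 1 - MvPowerSeries.monomial (R := k) (dd 0 0 4) 1 := by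
  rw [← mono_eq, ← mono_eq]; ring
lemma gm7 : xx k ^ 2 * zz k ^ 2 = MvPowerSeries.monomial (R := k) (dd 2 0 2) 1 := by rw [← mono_eq]; ring
lemma gm8 : xx k ^ 3 * zz k = MvPowerSeries.monomial (R := k) (dd 3 0 1) 1 := by rw [← mono_eq]; ring

lemma kS_1_0_0 {f : MvPowerSeries (Fin 3) k} (hf : f ∈ Ig4 k) :
    MvPowerSeries.coeff (R := k) (dd 1 0 0) f = 0 := by
  obtain ⟨q₁, q₂, q₃, q₄, q₅, q₆, q₇, q₈, rfl⟩ := exists_decomp hf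
  simp only [gm1, gm2, gm3, gm4, gm5, gm6, gm7, gm8, mul_sub, map_add, map_sub,
    MvPowerSeries.coeff_mul_monomial, dd_le_iff, dd_sub, mul_one]
  norm_num
  try ring

lemma kS_2_0_0 {f : MvPowerSeries (Fin 3) k} (hf : f ∈ Ig4 k) :
    MvPowerSeries.coeff (R := k) (dd 2 0 0) f = 0 := by
  obtain ⟨q₁, q₂, q₃, q₄, q₅, q₆, q₇, q₈, rfl⟩ := exists_decomp hf
  simp only [gm1, gm2, gm3, gm4, gm5, gm6, gm7, gm8, mul_sub, map_add, map_sub,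
    MvPowerSeries.coeff_mul_monomial, dd_le_iff, dd_sub, mul_one]
  norm_num
  try ring

lemma kS_1_1_0 {f : MvPowerSeries (Fin 3) k} (hf : f ∈ Ig4 k) :
    MvPowerSeries.coeff (R := k) (dd 1 1 0) f = 0 := by
  obtain ⟨q₁, q₂, q₃, q₄, q₅, q₆, q₇, q₈, rfl⟩ := exists_decomp hf
  simp only [gm1, gm2, gm3, gm4, gm5, gm6, gm7, gm8, mul_sub, map_add, map_sub,
    MvPowerSeries.coeff_mul_monomial, dd_le_iff, dd_sub, mul_one]
  norm_num
  try ring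

lemma kS_1_0_1 {f : MvPowerSeries (Fin 3) k} (hf : f ∈ Ig4 k) :
    MvPowerSeries.coeff (R := k) (dd 1 0 1) f = 0 := by
  obtain ⟨q₁, q₂, q₃, q₄, q₅, q₆, q₇, q₈, rfl⟩ := exists_decomp hf
  simp only [gm1, gm2, gm3, gm4, gm5, gm6, gm7, gm8, mul_sub, map_add, map_sub,
    MvPowerSeries.coeff_mul_monomial, dd_le_iff, dd_sub, mul_one]
  norm_num
  try ring

lemma kS_3_0_0 {f : MvPowerSeries (Fin 3) k} (hf : f ∈ Ig4 k) :
    MvPowerSeries.coeff (R := k) (dd 3 0 0) f = 0 := by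
  obtain ⟨q₁, q₂, q₃, q₄, q₅, q₆, q₇, q₈, rfl⟩ := exists_decomp hf
  simp only [gm1, gm2, gm3, gm4, gm5, gm6, gm7, gm8, mul_sub, map_add, map_sub,
    MvPowerSeries.coeff_mul_monomial, dd_le_iff, dd_sub, mul_one]
  norm_num
  try ring

lemma kS_2_1_0 {f : MvPowerSeries (Fin 3) k} (hf : f ∈ Ig4 k) :
    MvPowerSeries.coeff (R := k) (dd 2 1 0) f = 0 := by
  obtain ⟨q₁, q₂, q₃, q₄, q₅, q₆, q₇, q₈, rfl⟩ := exists_decomp hf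
  simp only [gm1, gm2, gm3, gm4, gm5, gm6, gm7, gm8, mul_sub, map_add, map_sub,
    MvPowerSeries.coeff_mul_monomial, dd_le_iff, dd_sub, mul_one]
  norm_num
  try ring

lemma kS_2_0_1 {f : MvPowerSeries (Fin 3) k} (hf : f ∈ Ig4 k) :
    MvPowerSeries.coeff (R := k) (dd 2 0 1) f = 0 := by
  obtain ⟨q₁, q₂, q₃, q₄, q₅, q₆, q₇, q₈, rfl⟩ := exists_decomp hf
  simp only [gm1, gm2, gm3, gm4, gm5, gm6, gm7, gm8, mul_sub, map_add, map_sub,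
    MvPowerSeries.coeff_mul_monomial, dd_le_iff, dd_sub, mul_one]
  norm_num
  try ring

lemma kS_0_3_0 {f : MvPowerSeries (Fin 3) k} (hf : f ∈ Ig4 k) :
    MvPowerSeries.coeff (R := k) (dd 0 3 0) f = 0 := by
  obtain ⟨q₁, q₂, q₃, q₄, q₅, q₆, q₇, q₈, rfl⟩ := exists_decomp hf
  simp only [gm1, gm2, gm3, gm4, gm5, gm6, gm7, gm8, mul_sub, map_add, map_sub,
    MvPowerSeries.coeff_mul_monomial, dd_le_iff, dd_sub, mul_one]
  norm_num
  try ring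

lemma kS_0_2_1 {f : MvPowerSeries (Fin 3) k} (hf : f ∈ Ig4 k) :
    MvPowerSeries.coeff (R := k) (dd 0 2 1) f = 0 := by
  obtain ⟨q₁, q₂, q₃, q₄, q₅, q₆, q₇, q₈, rfl⟩ := exists_decomp hf
  simp only [gm1, gm2, gm3, gm4, gm5, gm6, gm7, gm8, mul_sub, map_add, map_sub,
    MvPowerSeries.coeff_mul_monomial, dd_le_iff, dd_sub, mul_one]
  norm_num
  try ring

lemma kS_0_0_3 {f : MvPowerSeries (Fin 3) k} (hf : f ∈ Ig4 k) :
    MvPowerSeries.coeff (R := k) (dd 0 0 3) f = 0 := by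
  obtain ⟨q₁, q₂, q₃, q₄, q₅, q₆, q₇, q₈, rfl⟩ := exists_decomp hf
  simp only [gm1, gm2, gm3, gm4, gm5, gm6, gm7, gm8, mul_sub, map_add, map_sub,
    MvPowerSeries.coeff_mul_monomial, dd_le_iff, dd_sub, mul_one]
  norm_num
  try ring

lemma kmu4 {f : MvPowerSeries (Fin 3) k} (hf : f ∈ Ig4 k) :
    MvPowerSeries.coeff (R := k) (dd 4 0 0) f + MvPowerSeries.coeff (R := k) (dd 0 3 1) f = 0 := by
  obtain ⟨q₁, q₂, q₃, q₄, q₅, q₆, q₇, q₈, rfl⟩ := exists_decomp hf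
  simp only [gm1, gm2, gm3, gm4, gm5, gm6, gm7, gm8, mul_sub, map_add, map_sub,
    MvPowerSeries.coeff_mul_monomial, dd_le_iff, dd_sub, mul_one]
  norm_num
  try ring

lemma kmu6 {f : MvPowerSeries (Fin 3) k} (hf : f ∈ Ig4 k) :
    MvPowerSeries.coeff (R := k) (dd 3 1 0) f + MvPowerSeries.coeff (R := k) (dd 0 0 4) f = 0 := by
  obtain ⟨q₁, q₂, q₃, q₄, q₅, q₆, q₇, q₈, rfl⟩ := exists_decomp hf
  simp only [gm1, gm2, gm3, gm4, gm5, gm6, gm7, gm8, mul_sub, map_add, map_sub,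
    MvPowerSeries.coeff_mul_monomial, dd_le_iff, dd_sub, mul_one]
  norm_num
  try ring

lemma kmu5 {f : MvPowerSeries (Fin 3) k} (hf : f ∈ Ig4 k) :
    MvPowerSeries.coeff (R := k) (dd 1 0 3) f + MvPowerSeries.coeff (R := k) (dd 0 4 0) f = 0 := by
  obtain ⟨q₁, q₂, q₃, q₄, q₅, q₆, q₇, q₈, rfl⟩ := exists_decomp hf
  simp only [gm1, gm2, gm3, gm4, gm5, gm6, gm7, gm8, mul_sub, map_add, map_sub,
    MvPowerSeries.coeff_mul_monomial, dd_le_iff, dd_sub, mul_one]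
  norm_num
  try ring

lemma kl1 {f : MvPowerSeries (Fin 3) k} (hf : f ∈ Ig4 k) :
    MvPowerSeries.coeff (R := k) (dd 4 1 0) f + MvPowerSeries.coeff (R := k) (dd 0 4 1) f + MvPowerSeries.coeff (R := k) (dd 1 0 4) f = 0 := by
  obtain ⟨q₁, q₂, q₃, q₄, q₅, q₆, q₇, q₈, rfl⟩ := exists_decomp hf
  simp only [gm1, gm2, gm3, gm4, gm5, gm6, gm7, gm8, mul_sub, map_add, map_sub,
    MvPowerSeries.coeff_mul_monomial, dd_le_iff, dd_sub, mul_one]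
  norm_num
  try ring

lemma cxf (a b c : ℕ) (ha : 1 ≤ a) (f : MvPowerSeries (Fin 3) k) :
    MvPowerSeries.coeff (R := k) (dd a b c) (xx k * f) = MvPowerSeries.coeff (R := k) (dd (a - 1) b c) f := by
  rw [xm, mul_comm, MvPowerSeries.coeff_mul_monomial,
    if_pos (dd_le_iff.mpr ⟨ha, Nat.zero_le _, Nat.zero_le _⟩), dd_sub, mul_one,
    Nat.sub_zero, Nat.sub_zero]

lemma cxf0 (b c : ℕ) (f : MvPowerSeries (Fin 3) k) :
    MvPowerSeries.coeff (R := k) (dd 0 b c) (xx k * f) = 0 := by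
  rw [xm, mul_comm, MvPowerSeries.coeff_mul_monomial, if_neg]
  intro hle
  exact absurd (dd_le_iff.mp hle).1 (by norm_num)

lemma cyf (a b c : ℕ) (hb : 1 ≤ b) (f : MvPowerSeries (Fin 3) k) :
    MvPowerSeries.coeff (R := k) (dd a b c) (yy k * f) = MvPowerSeries.coeff (R := k) (dd a (b - 1) c) f := by
  rw [ym, mul_comm, MvPowerSeries.coeff_mul_monomial,
    if_pos (dd_le_iff.mpr ⟨Nat.zero_le _, hb, Nat.zero_le _⟩), dd_sub, mul_one,
    Nat.sub_zero, Nat.sub_zero]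

lemma cyf0 (a c : ℕ) (f : MvPowerSeries (Fin 3) k) :
    MvPowerSeries.coeff (R := k) (dd a 0 c) (yy k * f) = 0 := by
  rw [ym, mul_comm, MvPowerSeries.coeff_mul_monomial, if_neg]
  intro hle
  exact absurd (dd_le_iff.mp hle).2.1 (by norm_num)

lemma czf (a b c : ℕ) (hc : 1 ≤ c) (f : MvPowerSeries (Fin 3) k) :
    MvPowerSeries.coeff (R := k) (dd a b c) (zz k * f) = MvPowerSeries.coeff (R := k) (dd a b (c - 1)) f := by
  rw [zm, mul_comm, MvPowerSeries.coeff_mul_monomial,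
    if_pos (dd_le_iff.mpr ⟨Nat.zero_le _, Nat.zero_le _, hc⟩), dd_sub, mul_one,
    Nat.sub_zero, Nat.sub_zero]

lemma czf0 (a b : ℕ) (f : MvPowerSeries (Fin 3) k) :
    MvPowerSeries.coeff (R := k) (dd a b 0) (zz k * f) = 0 := by
  rw [zm, mul_comm, MvPowerSeries.coeff_mul_monomial, if_neg]
  intro hle
  exact absurd (dd_le_iff.mp hle).2.2 (by norm_num)
set_option maxHeartbeats 2000000 in
set_option maxRecDepth 4000 in
lemma main (f : MvPowerSeries (Fin 3) k)
    (h1 : xx k * f ∈ Ig4 k) (h2 : yy k * f ∈ Ig4 k) (h3 : zz k * f ∈ Ig4 k)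
    (hl1 : MvPowerSeries.coeff (R := k) (dd 4 1 0) f + MvPowerSeries.coeff (R := k) (dd 0 4 1) f
      + MvPowerSeries.coeff (R := k) (dd 1 0 4) f = 0)
    (hl2 : MvPowerSeries.coeff (R := k) (dd 2 0 1) f = 0) : f ∈ Ig4 k := by
  classical
  have c000 : MvPowerSeries.coeff (R := k) (dd 0 0 0) f = 0 := by
    have hh := kS_1_0_0 h1
    rw [cxf 1 0 0 (by norm_num)] at hh
    simpa using hh
  have c100 : MvPowerSeries.coeff (R := k) (dd 1 0 0) f = 0 := by
    have hh := kS_2_0_0 h1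
    rw [cxf 2 0 0 (by norm_num)] at hh
    simpa using hh
  have c010 : MvPowerSeries.coeff (R := k) (dd 0 1 0) f = 0 := by
    have hh := kS_1_1_0 h1
    rw [cxf 1 1 0 (by norm_num)] at hh
    simpa using hh
  have c001 : MvPowerSeries.coeff (R := k) (dd 0 0 1) f = 0 := by
    have hh := kS_1_0_1 h1
    rw [cxf 1 0 1 (by norm_num)] at hh
    simpa using hh
  have c200 : MvPowerSeries.coeff (R := k) (dd 2 0 0) f = 0 := by
    have hh := kS_3_0_0 h1
    rw [cxf 3 0 0 (by norm_num)] at hh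
    simpa using hh
  have c110 : MvPowerSeries.coeff (R := k) (dd 1 1 0) f = 0 := by
    have hh := kS_2_1_0 h1
    rw [cxf 2 1 0 (by norm_num)] at hh
    simpa using hh
  have c101 : MvPowerSeries.coeff (R := k) (dd 1 0 1) f = 0 := by
    have hh := kS_2_0_1 h1
    rw [cxf 2 0 1 (by norm_num)] at hh
    simpa using hh
  have c020 : MvPowerSeries.coeff (R := k) (dd 0 2 0) f = 0 := by
    have hh := kS_0_3_0 h2
    rw [cyf 0 3 0 (by norm_num)] at hh
    simpa using hh
  have c011 : MvPowerSeries.coeff (R := k) (dd 0 1 1) f = 0 := by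
    have hh := kS_0_2_1 h2
    rw [cyf 0 2 1 (by norm_num)] at hh
    simpa using hh
  have c002 : MvPowerSeries.coeff (R := k) (dd 0 0 2) f = 0 := by
    have hh := kS_0_0_3 h3
    rw [czf 0 0 3 (by norm_num)] at hh
    simpa using hh
  have c300 : MvPowerSeries.coeff (R := k) (dd 3 0 0) f = 0 := by
    have hh := kmu4 h1
    rw [cxf 4 0 0 (by norm_num), cxf0 3 1] at hh
    simpa using hh
  have c210 : MvPowerSeries.coeff (R := k) (dd 2 1 0) f = 0 := by
    have hh := kmu6 h1
    rw [cxf 3 1 0 (by norm_num), cxf0 0 4] at hh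
    simpa using hh
  have c030 : MvPowerSeries.coeff (R := k) (dd 0 3 0) f = 0 := by
    have hh := kmu5 h2
    rw [cyf0 1 3, cyf 0 4 0 (by norm_num)] at hh
    simpa using hh
  have c021 : MvPowerSeries.coeff (R := k) (dd 0 2 1) f = 0 := by
    have hh := kmu4 h2
    rw [cyf0 4 0, cyf 0 3 1 (by norm_num)] at hh
    simpa using hh
  have c003 : MvPowerSeries.coeff (R := k) (dd 0 0 3) f = 0 := by
    have hh := kmu6 h3
    rw [czf0 3 1, czf 0 0 4 (by norm_num)] at hh
    simpa using hh
  have c102 : MvPowerSeries.coeff (R := k) (dd 1 0 2) f = 0 := by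
    have hh := kmu5 h3
    rw [czf 1 0 3 (by norm_num), czf0 0 4] at hh
    simpa using hh
  have g64 : MvPowerSeries.coeff (R := k) (dd 3 1 0) f + MvPowerSeries.coeff (R := k) (dd 0 0 4) f = 0 := by
    have hh := kl1 h1
    rw [cxf 4 1 0 (by norm_num), cxf0 4 1, cxf 1 0 4 (by norm_num)] at hh
    simpa using hh
  have g4c : MvPowerSeries.coeff (R := k) (dd 4 0 0) f + MvPowerSeries.coeff (R := k) (dd 0 3 1) f = 0 := by
    have hh := kl1 h2
    rw [cyf 4 1 0 (by norm_num), cyf 0 4 1 (by norm_num), cyf0 1 4] at hh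
    simpa using hh
  have g5c : MvPowerSeries.coeff (R := k) (dd 0 4 0) f + MvPowerSeries.coeff (R := k) (dd 1 0 3) f = 0 := by
    have hh := kl1 h3
    rw [czf0 4 1, czf 0 4 1 (by norm_num), czf 1 0 4 (by norm_num)] at hh
    simpa using hh
  set B5 : Finset (ℕ × ℕ × ℕ) := (Finset.range 6 ×ˢ Finset.range 6 ×ˢ Finset.range 6).filter
      (fun p => p.1 + p.2.1 + p.2.2 ≤ 5) with hB5
  set P : MvPowerSeries (Fin 3) k := ∑ p ∈ B5,
      MvPowerSeries.monomial (R := k) (dd p.1 p.2.1 p.2.2)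
        (MvPowerSeries.coeff (R := k) (dd p.1 p.2.1 p.2.2) f) with hP
  have htail : f - P ∈ Ig4 k := by
    apply tail_mem
    intro e he
    have hmem0 : ((e 0), (e 1), (e 2)) ∈ B5 := by
      rw [hB5]
      simp only [Finset.mem_filter, Finset.mem_product, Finset.mem_range]
      omega
    have hsum : (∑ p ∈ B5, MvPowerSeries.coeff (R := k) e
          (MvPowerSeries.monomial (R := k) (dd p.1 p.2.1 p.2.2)
            (MvPowerSeries.coeff (R := k) (dd p.1 p.2.1 p.2.2) f)))
        = MvPowerSeries.coeff (R := k) e (MvPowerSeries.monomial (R := k) (dd (e 0) (e 1) (e 2))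
            (MvPowerSeries.coeff (R := k) (dd (e 0) (e 1) (e 2)) f)) := by
      apply Finset.sum_eq_single_of_mem _ hmem0
      rintro ⟨p1, p2, p3⟩ hp hne
      rw [MvPowerSeries.coeff_monomial, if_neg]
      intro hee
      apply hne
      have h2 : dd (e 0) (e 1) (e 2) = dd p1 p2 p3 := by
        rw [← eq_dd e]
        exact hee
      obtain ⟨u, v, w⟩ := dd_eq_iff.mp h2
      simp only [Prod.mk.injEq]
      exact ⟨u.symm, v.symm, w.symm⟩
    have hPe : MvPowerSeries.coeff (R := k) e P = MvPowerSeries.coeff (R := k) e f := by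
      rw [hP, map_sum, hsum, ← eq_dd e, MvPowerSeries.coeff_monomial_same]
    rw [map_sub, hPe, sub_self]
  have hsplit : B5 = ({(1, 2, 0), (1, 1, 1), (0, 1, 2), (2, 2, 0), (1, 3, 0), (1, 2, 1), (2, 1, 1), (1, 1, 2), (0, 2, 2), (0, 1, 3), (2, 0, 2), (3, 0, 1), (3, 2, 0), (2, 3, 0), (1, 4, 0), (2, 2, 1), (1, 3, 1), (1, 2, 2), (3, 1, 1), (2, 1, 2), (1, 1, 3), (0, 3, 2), (0, 2, 3), (0, 1, 4), (4, 0, 1), (3, 0, 2), (2, 0, 3), (5, 0, 0), (0, 5, 0), (0, 0, 5)} ∪ {(0, 0, 0), (1, 0, 0), (0, 1, 0), (0, 0, 1), (2, 0, 0), (1, 1, 0), (1, 0, 1), (0, 2, 0), (0, 1, 1), (0, 0, 2), (3, 0, 0), (2, 1, 0), (2, 0, 1), (1, 0, 2), (0, 3, 0), (0, 2, 1), (0, 0, 3)} : Finset (ℕ × ℕ × ℕ)) ∪ {(4, 0, 0), (0, 3, 1), (3, 1, 0), (0, 0, 4), (1, 0, 3), (0, 4, 0), (4, 1, 0), (0,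 4, 1), (1, 0, 4)} := by
    rw [hB5]
    decide
  have hPmem : P ∈ Ig4 k := by
    rw [hP, hsplit, Finset.sum_union (Finset.disjoint_iff_inter_eq_empty.mpr (by decide)),
      Finset.sum_union (Finset.disjoint_iff_inter_eq_empty.mpr (by decide))]
    refine add_mem (add_mem ?_ ?_) ?_
    · apply Ideal.sum_mem
      intro p hp
      simp only [Finset.mem_insert, Finset.mem_singleton] at hp
      rcases hp with rfl|rfl|rfl|rfl|rfl|rfl|rfl|rfl|rfl|rfl|rfl|rfl|rfl|rfl|rfl|rfl|rfl|rfl|rfl|rfl|rfl|rfl|rfl|rfl|rfl|rfl|rfl|rfl|rfl|rfl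
      · exact monoIr 1 2 0 _ cM_1_2_0
      · exact monoIr 1 1 1 _ cM_1_1_1
      · exact monoIr 0 1 2 _ cM_0_1_2
      · exact monoIr 2 2 0 _ cM_2_2_0
      · exact monoIr 1 3 0 _ cM_1_3_0
      · exact monoIr 1 2 1 _ cM_1_2_1
      · exact monoIr 2 1 1 _ cM_2_1_1
      · exact monoIr 1 1 2 _ cM_1_1_2
      · exact monoIr 0 2 2 _ cM_0_2_2
      · exact monoIr 0 1 3 _ cM_0_1_3
      · exact monoIr 2 0 2 _ cM_2_0_2
      · exact monoIr 3 0 1 _ cM_3_0_1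
      · exact monoIr 3 2 0 _ cM_3_2_0
      · exact monoIr 2 3 0 _ cM_2_3_0
      · exact monoIr 1 4 0 _ cM_1_4_0
      · exact monoIr 2 2 1 _ cM_2_2_1
      · exact monoIr 1 3 1 _ cM_1_3_1
      · exact monoIr 1 2 2 _ cM_1_2_2
      · exact monoIr 3 1 1 _ cM_3_1_1
      · exact monoIr 2 1 2 _ cM_2_1_2
      · exact monoIr 1 1 3 _ cM_1_1_3
      · exact monoIr 0 3 2 _ cM_0_3_2
      · exact monoIr 0 2 3 _ cM_0_2_3
      · exact monoIr 0 1 4 _ cM_0_1_4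
      · exact monoIr 4 0 1 _ cM_4_0_1
      · exact monoIr 3 0 2 _ cM_3_0_2
      · exact monoIr 2 0 3 _ cM_2_0_3
      · exact monoIr 5 0 0 _ cM_5_0_0
      · exact monoIr 0 5 0 _ cM_0_5_0
      · exact monoIr 0 0 5 _ cM_0_0_5
    · apply Ideal.sum_mem
      intro p hp
      simp only [Finset.mem_insert, Finset.mem_singleton] at hp
      rcases hp with rfl|rfl|rfl|rfl|rfl|rfl|rfl|rfl|rfl|rfl|rfl|rfl|rfl|rfl|rfl|rfl|rfl
      · rw [show dd (0, 0, 0).1 (0, 0, 0).2.1 (0, 0, 0).2.2 = dd 0 0 0 from rfl, c000, map_zero]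
        exact zero_mem _
      · rw [show dd (1, 0, 0).1 (1, 0, 0).2.1 (1, 0, 0).2.2 = dd 1 0 0 from rfl, c100, map_zero]
        exact zero_mem _
      · rw [show dd (0, 1, 0).1 (0, 1, 0).2.1 (0, 1, 0).2.2 = dd 0 1 0 from rfl, c010, map_zero]
        exact zero_mem _
      · rw [show dd (0, 0, 1).1 (0, 0, 1).2.1 (0, 0, 1).2.2 = dd 0 0 1 from rfl, c001, map_zero]
        exact zero_mem _
      · rw [show dd (2, 0, 0).1 (2, 0, 0).2.1 (2, 0, 0).2.2 = dd 2 0 0 from rfl, c200, map_zero]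
        exact zero_mem _
      · rw [show dd (1, 1, 0).1 (1, 1, 0).2.1 (1, 1, 0).2.2 = dd 1 1 0 from rfl, c110, map_zero]
        exact zero_mem _
      · rw [show dd (1, 0, 1).1 (1, 0, 1).2.1 (1, 0, 1).2.2 = dd 1 0 1 from rfl, c101, map_zero]
        exact zero_mem _
      · rw [show dd (0, 2, 0).1 (0, 2, 0).2.1 (0, 2, 0).2.2 = dd 0 2 0 from rfl, c020, map_zero]
        exact zero_mem _
      · rw [show dd (0, 1, 1).1 (0, 1, 1).2.1 (0, 1, 1).2.2 = dd 0 1 1 from rfl, c011, map_zero]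
        exact zero_mem _
      · rw [show dd (0, 0, 2).1 (0, 0, 2).2.1 (0, 0, 2).2.2 = dd 0 0 2 from rfl, c002, map_zero]
        exact zero_mem _
      · rw [show dd (3, 0, 0).1 (3, 0, 0).2.1 (3, 0, 0).2.2 = dd 3 0 0 from rfl, c300, map_zero]
        exact zero_mem _
      · rw [show dd (2, 1, 0).1 (2, 1, 0).2.1 (2, 1, 0).2.2 = dd 2 1 0 from rfl, c210, map_zero]
        exact zero_mem _
      · rw [show dd (2, 0, 1).1 (2, 0, 1).2.1 (2, 0, 1).2.2 = dd 2 0 1 from rfl, hl2, map_zero]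
        exact zero_mem _
      · rw [show dd (1, 0, 2).1 (1, 0, 2).2.1 (1, 0, 2).2.2 = dd 1 0 2 from rfl, c102, map_zero]
        exact zero_mem _
      · rw [show dd (0, 3, 0).1 (0, 3, 0).2.1 (0, 3, 0).2.2 = dd 0 3 0 from rfl, c030, map_zero]
        exact zero_mem _
      · rw [show dd (0, 2, 1).1 (0, 2, 1).2.1 (0, 2, 1).2.2 = dd 0 2 1 from rfl, c021, map_zero]
        exact zero_mem _
      · rw [show dd (0, 0, 3).1 (0, 0, 3).2.1 (0, 0, 3).2.2 = dd 0 0 3 from rfl, c003, map_zero]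
        exact zero_mem _
    · have hmem : (MvPowerSeries.monomial (R := k) (dd 0 3 1) (MvPowerSeries.coeff (R := k) (dd 0 3 1) f)
            - MvPowerSeries.monomial (R := k) (dd 4 0 0) (MvPowerSeries.coeff (R := k) (dd 0 3 1) f))
          + ((MvPowerSeries.monomial (R := k) (dd 0 0 4) (MvPowerSeries.coeff (R := k) (dd 0 0 4) f)
            - MvPowerSeries.monomial (R := k) (dd 3 1 0) (MvPowerSeries.coeff (R := k) (dd 0 0 4) f))
          + ((MvPowerSeries.monomial (R := k) (dd 0 4 0) (MvPowerSeries.coeff (R := k) (dd 0 4 0) f)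
            - MvPowerSeries.monomial (R := k) (dd 1 0 3) (MvPowerSeries.coeff (R := k) (dd 0 4 0) f))
          + ((MvPowerSeries.monomial (R := k) (dd 0 4 1) (MvPowerSeries.coeff (R := k) (dd 0 4 1) f)
            - MvPowerSeries.monomial (R := k) (dd 4 1 0) (MvPowerSeries.coeff (R := k) (dd 0 4 1) f))
          + (MvPowerSeries.monomial (R := k) (dd 1 0 4) (MvPowerSeries.coeff (R := k) (dd 1 0 4) f)
            - MvPowerSeries.monomial (R := k) (dd 4 1 0) (MvPowerSeries.coeff (R := k) (dd 1 0 4) f))))) ∈ Ig4 k :=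
        add_mem (sub_monoIr 0 3 1 4 0 0 _ cD_0_3_1_4_0_0)
          (add_mem (sub_monoIr 0 0 4 3 1 0 _ cD_0_0_4_3_1_0)
            (add_mem (sub_monoIr 0 4 0 1 0 3 _ cD_0_4_0_1_0_3)
              (add_mem (sub_monoIr 0 4 1 4 1 0 _ cD_0_4_1_4_1_0)
                (sub_monoIr 1 0 4 4 1 0 _ cD_1_0_4_4_1_0))))
      convert hmem using 1
      rw [Finset.sum_insert (by decide),
        Finset.sum_insert (by decide),
        Finset.sum_insert (by decide),
        Finset.sum_insert (by decide),
        Finset.sum_insert (by decide),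
        Finset.sum_insert (by decide),
        Finset.sum_insert (by decide),
        Finset.sum_insert (by decide),
        Finset.sum_singleton]
      have e400 : MvPowerSeries.coeff (R := k) (dd 4 0 0) f = - MvPowerSeries.coeff (R := k) (dd 0 3 1) f := by
        linear_combination g4c
      have e310 : MvPowerSeries.coeff (R := k) (dd 3 1 0) f = - MvPowerSeries.coeff (R := k) (dd 0 0 4) f := by
        linear_combination g64
      have e103 : MvPowerSeries.coeff (R := k) (dd 1 0 3) f = - MvPowerSeries.coeff (R := k) (dd 0 4 0) f := by
        linear_combination g5c
      have e410 : MvPowerSeries.coeff (R := k) (dd 4 1 0) f = - MvPowerSeries.coeff (R := k) (dd 0 4 1) f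
          - MvPowerSeries.coeff (R := k) (dd 1 0 4) f := by
        linear_combination hl1
      rw [show dd (4, 0, 0).1 (4, 0, 0).2.1 (4, 0, 0).2.2 = dd 4 0 0 from rfl,
        show dd (0, 3, 1).1 (0, 3, 1).2.1 (0, 3, 1).2.2 = dd 0 3 1 from rfl,
        show dd (3, 1, 0).1 (3, 1, 0).2.1 (3, 1, 0).2.2 = dd 3 1 0 from rfl,
        show dd (0, 0, 4).1 (0, 0, 4).2.1 (0, 0, 4).2.2 = dd 0 0 4 from rfl,
        show dd (1, 0, 3).1 (1, 0, 3).2.1 (1, 0, 3).2.2 = dd 1 0 3 from rfl,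
        show dd (0, 4, 0).1 (0, 4, 0).2.1 (0, 4, 0).2.2 = dd 0 4 0 from rfl,
        show dd (4, 1, 0).1 (4, 1, 0).2.1 (4, 1, 0).2.2 = dd 4 1 0 from rfl,
        show dd (0, 4, 1).1 (0, 4, 1).2.1 (0, 4, 1).2.2 = dd 0 4 1 from rfl,
        show dd (1, 0, 4).1 (1, 0, 4).2.1 (1, 0, 4).2.2 = dd 1 0 4 from rfl]
      rw [e400, e310, e103, e410]
      rw [map_neg, map_neg, map_neg, map_sub, map_neg]
      ring
  have hfin := add_mem htail hPmem
  simpa using hfin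
lemma hv1col : ∀ s ∈ Ideal.span {xx k, yy k, zz k}, (xx k ^ 4 * yy k) * s ∈ Ig4 k := by
  intro s hs
  rw [Ideal.mem_span_insert] at hs
  obtain ⟨a, s2, hs2, rfl⟩ := hs
  rw [Ideal.mem_span_insert] at hs2
  obtain ⟨b, s3, hs3, rfl⟩ := hs2
  rw [Ideal.mem_span_singleton'] at hs3
  obtain ⟨c, rfl⟩ := hs3
  have m1 : xx k ^ 5 * yy k ^ 1 * zz k ^ 0 ∈ Ig4 k := by rw [mono_eq]; exact cM_5_1_0
  have m2 : xx k ^ 4 * yy k ^ 2 * zz k ^ 0 ∈ Ig4 k := by rw [mono_eq]; exact cM_4_2_0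
  have m3 : xx k ^ 4 * yy k ^ 1 * zz k ^ 1 ∈ Ig4 k := by rw [mono_eq]; exact cM_4_1_1
  have e : (xx k ^ 4 * yy k) * (a * xx k + (b * yy k + c * zz k))
      = a * (xx k ^ 5 * yy k ^ 1 * zz k ^ 0) + (b * (xx k ^ 4 * yy k ^ 2 * zz k ^ 0)
        + c * (xx k ^ 4 * yy k ^ 1 * zz k ^ 1)) := by ring
  rw [e]
  exact add_mem (Ideal.mul_mem_left _ _ m1)
    (add_mem (Ideal.mul_mem_left _ _ m2) (Ideal.mul_mem_left _ _ m3))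

lemma hv2col : ∀ s ∈ Ideal.span {xx k, yy k, zz k}, (xx k ^ 2 * zz k) * s ∈ Ig4 k := by
  intro s hs
  rw [Ideal.mem_span_insert] at hs
  obtain ⟨a, s2, hs2, rfl⟩ := hs
  rw [Ideal.mem_span_insert] at hs2
  obtain ⟨b, s3, hs3, rfl⟩ := hs2
  rw [Ideal.mem_span_singleton'] at hs3
  obtain ⟨c, rfl⟩ := hs3
  have m1 : xx k ^ 3 * yy k ^ 0 * zz k ^ 1 ∈ Ig4 k := by rw [mono_eq]; exact cM_3_0_1
  have m2 : xx k ^ 2 * yy k ^ 1 * zz k ^ 1 ∈ Ig4 k := by rw [mono_eq]; exact cM_2_1_1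
  have m3 : xx k ^ 2 * yy k ^ 0 * zz k ^ 2 ∈ Ig4 k := by rw [mono_eq]; exact cM_2_0_2
  have e : (xx k ^ 2 * zz k) * (a * xx k + (b * yy k + c * zz k))
      = a * (xx k ^ 3 * yy k ^ 0 * zz k ^ 1) + (b * (xx k ^ 2 * yy k ^ 1 * zz k ^ 1)
        + c * (xx k ^ 2 * yy k ^ 0 * zz k ^ 2)) := by ring
  rw [e]
  exact add_mem (Ideal.mul_mem_left _ _ m1)
    (add_mem (Ideal.mul_mem_left _ _ m2) (Ideal.mul_mem_left _ _ m3))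

end SocleAux

set_option maxHeartbeats 2000000 in
open SocleAux in
theorem socle_g4_aux (k : Type*) [Field k] :
    (⊥ : Ideal (MvPowerSeries (Fin 3) k ⧸ Ig4 k)).colon
        (Ideal.map (Ideal.Quotient.mk (Ig4 k)) (Ideal.span {xx k, yy k, zz k}))
      = Ideal.span {Ideal.Quotient.mk (Ig4 k) (xx k ^ 4 * yy k), Ideal.Quotient.mk (Ig4 k) (xx k ^ 2 * zz k)} ∧
    Module.finrank k (Submodule.restrictScalars k
      ((⊥ : Ideal (MvPowerSeries (Fin 3) k ⧸ Ig4 k)).colon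
        (Ideal.map (Ideal.Quotient.mk (Ig4 k)) (Ideal.span {xx k, yy k, zz k})))) = 2 := by
  classical
  set mk := Ideal.Quotient.mk (Ig4 k) with hmk
  set v1 := mk (xx k ^ 4 * yy k) with hv1
  set v2 := mk (xx k ^ 2 * zz k) with hv2
  set M := Ideal.map mk (Ideal.span {xx k, yy k, zz k}) with hM
  -- the two generators lie in the colon ideal
  have colmem : ∀ w : MvPowerSeries (Fin 3) k,
      (∀ s ∈ Ideal.span {xx k, yy k, zz k}, w * s ∈ Ig4 k) →
      mk w ∈ (⊥ : Ideal (MvPowerSeries (Fin 3) k ⧸ Ig4 k)).colon M := by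
    intro w hw
    rw [Submodule.mem_colon]
    intro p hp
    rw [hM] at hp
    obtain ⟨s, hsmem, rfl⟩ := Ideal.mem_map_iff_of_surjective mk Ideal.Quotient.mk_surjective |>.mp hp
    rw [smul_eq_mul, ← map_mul, Submodule.mem_bot]
    exact Ideal.Quotient.eq_zero_iff_mem.mpr (hw s hsmem)
  have hv1m : v1 ∈ (⊥ : Ideal (MvPowerSeries (Fin 3) k ⧸ Ig4 k)).colon M :=
    colmem _ hv1col
  have hv2m : v2 ∈ (⊥ : Ideal (MvPowerSeries (Fin 3) k ⧸ Ig4 k)).colon M :=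
    colmem _ hv2col
  have hcolon : (⊥ : Ideal (MvPowerSeries (Fin 3) k ⧸ Ig4 k)).colon M = Ideal.span {v1, v2} := by
    apply le_antisymm
    · intro r hr
      obtain ⟨f, rfl⟩ := Ideal.Quotient.mk_surjective r
      have hgen : ∀ s : MvPowerSeries (Fin 3) k, s ∈ Ideal.span {xx k, yy k, zz k} →
          f * s ∈ Ig4 k := by
        intro s hs
        have hms : mk s ∈ M := by rw [hM]; exact Ideal.mem_map_of_mem mk hs
        have := Submodule.mem_colon.mp hr _ hms
        rw [smul_eq_mul, ← map_mul, Submodule.mem_bot] at this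
        exact Ideal.Quotient.eq_zero_iff_mem.mp this
      have hx : xx k * f ∈ Ig4 k := by
        have := hgen (xx k) (Ideal.subset_span (by simp))
        rwa [mul_comm] at this
      have hy : yy k * f ∈ Ig4 k := by
        have := hgen (yy k) (Ideal.subset_span (by simp))
        rwa [mul_comm] at this
      have hz : zz k * f ∈ Ig4 k := by
        have := hgen (zz k) (Ideal.subset_span (by simp))
        rwa [mul_comm] at this
      set α := MvPowerSeries.coeff (R := k) (dd 4 1 0) f + MvPowerSeries.coeff (R := k) (dd 0 4 1) f
        + MvPowerSeries.coeff (R := k) (dd 1 0 4) f with hα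
      set β := MvPowerSeries.coeff (R := k) (dd 2 0 1) f with hβ
      set f' := f - MvPowerSeries.monomial (R := k) (dd 4 1 0) α - MvPowerSeries.monomial (R := k) (dd 2 0 1) β
        with hf'
      have hxf' : xx k * f' ∈ Ig4 k := by
        have e : xx k * f' = xx k * f
            - MvPowerSeries.monomial (R := k) (dd 1 0 0) 1 * MvPowerSeries.monomial (R := k) (dd 4 1 0) α
            - MvPowerSeries.monomial (R := k) (dd 1 0 0) 1 * MvPowerSeries.monomial (R := k) (dd 2 0 1) β := by
          rw [hf', xm]; ring
        rw [e, MvPowerSeries.monomial_mul_monomial, MvPowerSeries.monomial_mul_monomial,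
          dd_add, dd_add, one_mul, one_mul]
        exact sub_mem (sub_mem hx (monoIr 5 1 0 _ cM_5_1_0)) (monoIr 3 0 1 _ cM_3_0_1)
      have hyf' : yy k * f' ∈ Ig4 k := by
        have e : yy k * f' = yy k * f
            - MvPowerSeries.monomial (R := k) (dd 0 1 0) 1 * MvPowerSeries.monomial (R := k) (dd 4 1 0) α
            - MvPowerSeries.monomial (R := k) (dd 0 1 0) 1 * MvPowerSeries.monomial (R := k) (dd 2 0 1) β := by
          rw [hf', ym]; ring
        rw [e, MvPowerSeries.monomial_mul_monomial, MvPowerSeries.monomial_mul_monomial,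
          dd_add, dd_add, one_mul, one_mul]
        exact sub_mem (sub_mem hy (monoIr 4 2 0 _ cM_4_2_0)) (monoIr 2 1 1 _ cM_2_1_1)
      have hzf' : zz k * f' ∈ Ig4 k := by
        have e : zz k * f' = zz k * f
            - MvPowerSeries.monomial (R := k) (dd 0 0 1) 1 * MvPowerSeries.monomial (R := k) (dd 4 1 0) α
            - MvPowerSeries.monomial (R := k) (dd 0 0 1) 1 * MvPowerSeries.monomial (R := k) (dd 2 0 1) β := by
          rw [hf', zm]; ring
        rw [e, MvPowerSeries.monomial_mul_monomial, MvPowerSeries.monomial_mul_monomial,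
          dd_add, dd_add, one_mul, one_mul]
        exact sub_mem (sub_mem hz (monoIr 4 1 1 _ cM_4_1_1)) (monoIr 2 0 2 _ cM_2_0_2)
      have hc1 : MvPowerSeries.coeff (R := k) (dd 4 1 0) f' + MvPowerSeries.coeff (R := k) (dd 0 4 1) f'
          + MvPowerSeries.coeff (R := k) (dd 1 0 4) f' = 0 := by
        rw [hf']
        simp [map_sub, MvPowerSeries.coeff_monomial, dd_eq_iff]
        try linear_combination -hα
      have hc2 : MvPowerSeries.coeff (R := k) (dd 2 0 1) f' = 0 := by
        rw [hf']
        simp [map_sub, MvPowerSeries.coeff_monomial, dd_eq_iff]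
        try linear_combination -hβ
      have hf'I : f' ∈ Ig4 k := main f' hxf' hyf' hzf' hc1 hc2
      rw [Ideal.mem_span_pair]
      refine ⟨mk (MvPowerSeries.monomial (R := k) 0 α), mk (MvPowerSeries.monomial (R := k) 0 β), ?_⟩
      rw [hv1, hv2, ← map_mul, ← map_mul, ← map_add]
      refine (Ideal.Quotient.mk_eq_mk_iff_sub_mem _ _).mpr ?_
      have e : MvPowerSeries.monomial (R := k) 0 α * (xx k ^ 4 * yy k)
          + MvPowerSeries.monomial (R := k) 0 β * (xx k ^ 2 * zz k) - f = -f' := by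
        rw [hf', m410, m201, MvPowerSeries.monomial_mul_monomial,
          MvPowerSeries.monomial_mul_monomial, zero_add, zero_add, mul_one, mul_one]
        ring
      rw [e]
      exact neg_mem hf'I
    · rw [Ideal.span_le]
      rintro w hw
      simp only [Set.mem_insert_iff, Set.mem_singleton_iff] at hw
      rcases hw with rfl | rfl
      · exact hv1m
      · exact hv2m
  refine ⟨hcolon, ?_⟩
  -- dimension count
  have hrs : Submodule.restrictScalars k ((⊥ : Ideal (MvPowerSeries (Fin 3) k ⧸ Ig4 k)).colon M)
      = Submodule.span k {v1, v2} := by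
    rw [hcolon]
    apply le_antisymm
    · intro w hw
      rw [Submodule.restrictScalars_mem, Ideal.mem_span_pair] at hw
      obtain ⟨a, b, rfl⟩ := hw
      have key : ∀ (r v : MvPowerSeries (Fin 3) k ⧸ Ig4 k),
          v ∈ (⊥ : Ideal (MvPowerSeries (Fin 3) k ⧸ Ig4 k)).colon M →
          v ∈ ({v1, v2} : Set (MvPowerSeries (Fin 3) k ⧸ Ig4 k)) →
          r * v ∈ Submodule.span k {v1, v2} := by
        intro r v hvc hvm
        obtain ⟨g, rfl⟩ := Ideal.Quotient.mk_surjective r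
        have hg0 : MvPowerSeries.coeff (R := k) (dd 0 0 0)
            (g - MvPowerSeries.monomial (R := k) 0 (MvPowerSeries.coeff (R := k) 0 g)) = 0 := by
          rw [map_sub, dd_zero, MvPowerSeries.coeff_monomial_same, sub_self]
        have hgm : g - MvPowerSeries.monomial (R := k) 0 (MvPowerSeries.coeff (R := k) 0 g)
            ∈ Ideal.span {xx k, yy k, zz k} := sub_const_mem _ hg0
        have hzero : mk (g - MvPowerSeries.monomial (R := k) 0 (MvPowerSeries.coeff (R := k) 0 g)) * v = 0 := by
          have hmem2 : mk (g - MvPowerSeries.monomial (R := k) 0 (MvPowerSeries.coeff (R := k) 0 g)) ∈ M := by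
            rw [hM]; exact Ideal.mem_map_of_mem mk hgm
          have := Submodule.mem_colon.mp hvc _ hmem2
          rw [smul_eq_mul, Submodule.mem_bot] at this
          rw [mul_comm]
          exact this
        have e2 : mk (MvPowerSeries.monomial (R := k) 0 (MvPowerSeries.coeff (R := k) 0 g)) * v
            = (MvPowerSeries.coeff (R := k) 0 g) • v := by
          rw [MvPowerSeries.monomial_zero_eq_C_apply, MvPowerSeries.c_eq_algebraMap, hmk,
            Ideal.Quotient.mk_algebraMap, ← Algebra.smul_def]
        have e : mk g * v = (MvPowerSeries.coeff (R := k) 0 g) • v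
            + mk (g - MvPowerSeries.monomial (R := k) 0 (MvPowerSeries.coeff (R := k) 0 g)) * v := by
          have e3 : mk g = mk (MvPowerSeries.monomial (R := k) 0 (MvPowerSeries.coeff (R := k) 0 g))
              + mk (g - MvPowerSeries.monomial (R := k) 0 (MvPowerSeries.coeff (R := k) 0 g)) := by
            rw [← map_add]
            congr 1
            ring
          rw [e3, add_mul, e2]
        rw [e, hzero, add_zero]
        exact Submodule.smul_mem _ _ (Submodule.subset_span hvm)
      exact add_mem (key a v1 hv1m (by simp)) (key b v2 hv2m (by simp))
    · rw [Submodule.span_le]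
      rintro w hw
      simp only [Set.mem_insert_iff, Set.mem_singleton_iff] at hw
      rw [SetLike.mem_coe, Submodule.restrictScalars_mem]
      rcases hw with rfl | rfl
      · exact Ideal.subset_span (by simp)
      · exact Ideal.subset_span (by simp)
  rw [hrs]
  have hli : LinearIndependent k ![v1, v2] := by
    rw [LinearIndependent.pair_iff]
    intro s t hst
    have e1 : (s • v1 : MvPowerSeries (Fin 3) k ⧸ Ig4 k)
        = mk (MvPowerSeries.monomial (R := k) (dd 4 1 0) s) := by
      rw [show MvPowerSeries.monomial (R := k) (dd 4 1 0) s
          = MvPowerSeries.monomial (R := k) 0 s * (xx k ^ 4 * yy k) by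
            rw [m410, MvPowerSeries.monomial_mul_monomial, zero_add, mul_one],
        map_mul, MvPowerSeries.monomial_zero_eq_C_apply, MvPowerSeries.c_eq_algebraMap, hmk,
        Ideal.Quotient.mk_algebraMap, ← Algebra.smul_def, hv1]
    have e2 : (t • v2 : MvPowerSeries (Fin 3) k ⧸ Ig4 k)
        = mk (MvPowerSeries.monomial (R := k) (dd 2 0 1) t) := by
      rw [show MvPowerSeries.monomial (R := k) (dd 2 0 1) t
          = MvPowerSeries.monomial (R := k) 0 t * (xx k ^ 2 * zz k) by
            rw [m201, MvPowerSeries.monomial_mul_monomial, zero_add, mul_one],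
        map_mul, MvPowerSeries.monomial_zero_eq_C_apply, MvPowerSeries.c_eq_algebraMap, hmk,
        Ideal.Quotient.mk_algebraMap, ← Algebra.smul_def, hv2]
    rw [e1, e2, ← map_add, hmk, Ideal.Quotient.eq_zero_iff_mem] at hst
    constructor
    · have := kl1 hst
      simpa [MvPowerSeries.coeff_monomial, dd_eq_iff] using this
    · have := kS_2_0_1 hst
      simpa [MvPowerSeries.coeff_monomial, dd_eq_iff] using this
  have hrange : Set.range ![v1, v2] = {v1, v2} := by
    ext w
    simp only [Set.mem_range, Set.mem_insert_iff, Set.mem_singleton_iff]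
    constructor
    · rintro ⟨i, rfl⟩
      fin_cases i
      · left; rfl
      · right; rfl
    · rintro (rfl | rfl)
      · exact ⟨0, rfl⟩
      · exact ⟨1, rfl⟩
  have hcard := finrank_span_eq_card hli
  rw [hrange] at hcard
  simpa using hcard


/-- The socle `(0 :_R m)` of `R = Q/g4`. -/
theorem socle_g4 (k : Type*) [Field k] :
    (⊥ : Ideal (MvPowerSeries (Fin 3) k ⧸ Ig4 k)).colon
        (Ideal.map (Ideal.Quotient.mk (Ig4 k)) (Ideal.span {xx k, yy k, zz k}))
      = Ideal.span {Ideal.Quotient.mk (Ig4 k) (xx k ^ 4 * yy k), Ideal.Quotient.mk (Ig4 k) (xx k ^ 2 * zz k)} ∧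
    Module.finrank k (Submodule.restrictScalars k
      ((⊥ : Ideal (MvPowerSeries (Fin 3) k ⧸ Ig4 k)).colon
        (Ideal.map (Ideal.Quotient.mk (Ig4 k)) (Ideal.span {xx k, yy k, zz k})))) = 2 :=
  socle_g4_aux k
end
end

section
/- The ideal 𝔤₃ = (xy², xyz, yz², x⁴ − y³z, xz³ − y⁴, x³y − z⁴, x²z²) of Q is minimally generated by 7 elements; equivalently, the k-vector space 𝔤₃/(𝔪_Q·𝔤₃) has dimension 7. -/
/-!
STATEMENT 10: The ideal `g3` of `Q = k[[x,y,z]]` is minimally generated by 7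
elements; equivalently (by Nakayama), the `k`-vector space `g3/(m_Q * g3)` has
dimension 7, where `m_Q = (x,y,z)`. The quotient `g3/(m_Q*g3)` is realized as the
image of `g3` in `Q/(m_Q*g3)` (as `k`-vector spaces).

Here `Q = k[[x,y,z]]` is formalized as `MvPowerSeries (Fin 3) k` with
`x = X 0`, `y = X 1`, `z = X 2`.
-/

noncomputable section

/-- The ideal `g3` of the paper. -/
def Ig3 (k : Type*) [Field k] : Ideal (MvPowerSeries (Fin 3) k) :=
  Ideal.span {xx k * yy k ^ 2, xx k * yy k * zz k, yy k * zz k ^ 2, xx k ^ 4 - yy k ^ 3 * zz k, xx k * zz k ^ 3 - yy k ^ 4, xx k ^ 3 * yy k - zz k ^ 4, xx k ^ 2 * zz k ^ 2}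

noncomputable section MuAux

namespace MuG3Aux

open MvPowerSeries Finsupp

/-- exponent triple as a `Finsupp` -/
def ee (a b c : ℕ) : Fin 3 →₀ ℕ := single 0 a + single 1 b + single 2 c

lemma ee_apply (a b c : ℕ) (i : Fin 3) : ee a b c i = ![a,b,c] i := by
  fin_cases i <;> simp [ee, Finsupp.single_apply]

lemma ee_le_iff {a b c d f g : ℕ} : ee a b c ≤ ee d f g ↔ a ≤ d ∧ b ≤ f ∧ c ≤ g := by
  rw [Finsupp.le_def]
  constructor
  · intro h
    exact ⟨by simpa [ee_apply] using h 0, by simpa [ee_apply] using h 1,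
      by simpa [ee_apply] using h 2⟩
  · rintro ⟨h1, h2, h3⟩ i; fin_cases i <;> simpa [ee_apply]

lemma ee_eq_iff {a b c d f g : ℕ} : ee a b c = ee d f g ↔ a = d ∧ b = f ∧ c = g := by
  constructor
  · intro h
    exact ⟨by simpa [ee_apply] using DFunLike.congr_fun h 0,
           by simpa [ee_apply] using DFunLike.congr_fun h 1,
           by simpa [ee_apply] using DFunLike.congr_fun h 2⟩
  · rintro ⟨rfl, rfl, rfl⟩; rfl

lemma ee_add (a b c d f g : ℕ) : ee a b c + ee d f g = ee (a+d) (b+f) (c+g) := by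
  ext i; fin_cases i <;> simp [ee_apply]

lemma single_eq0 (n : ℕ) : single (0:Fin 3) n = ee n 0 0 := by
  ext i; fin_cases i <;> simp [ee_apply]
lemma single_eq1 (n : ℕ) : single (1:Fin 3) n = ee 0 n 0 := by
  ext i; fin_cases i <;> simp [ee_apply]
lemma single_eq2 (n : ℕ) : single (2:Fin 3) n = ee 0 0 n := by
  ext i; fin_cases i <;> simp [ee_apply]

variable (k : Type*) [Field k]

lemma mono_mul (a b c d f g : ℕ) (r s : k) :
    (monomial (ee a b c) r) * (monomial (ee d f g) s)
      = monomial (ee (a+d) (b+f) (c+g)) (r*s) := by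
  rw [monomial_mul_monomial, ee_add]

lemma xx_eq : xx k = monomial (ee 1 0 0) 1 := by
  rw [xx, X_def, single_eq0]

lemma yy_eq : yy k = monomial (ee 0 1 0) 1 := by
  rw [yy, X_def, single_eq1]

lemma zz_eq : zz k = monomial (ee 0 0 1) 1 := by
  rw [zz, X_def, single_eq2]

lemma xx_pow (n : ℕ) : xx k ^ n = monomial (ee n 0 0) 1 := by
  rw [xx, X_pow_eq, single_eq0]

lemma yy_pow (n : ℕ) : yy k ^ n = monomial (ee 0 n 0) 1 := by
  rw [yy, X_pow_eq, single_eq1]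

lemma zz_pow (n : ℕ) : zz k ^ n = monomial (ee 0 0 n) 1 := by
  rw [zz, X_pow_eq, single_eq2]

/-- the seven generators -/
def gg : Fin 7 → MvPowerSeries (Fin 3) k :=
  ![xx k * yy k ^ 2, xx k * yy k * zz k, yy k * zz k ^ 2, xx k ^ 4 - yy k ^ 3 * zz k,
    xx k * zz k ^ 3 - yy k ^ 4, xx k ^ 3 * yy k - zz k ^ 4, xx k ^ 2 * zz k ^ 2]

/-- the seven chosen monomials -/
def MM : Fin 7 → (Fin 3 →₀ ℕ) :=
  ![ee 1 2 0, ee 1 1 1, ee 0 1 2, ee 4 0 0, ee 1 0 3, ee 3 1 0, ee 2 0 2]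

lemma gg0 : gg k 0 = monomial (ee 1 2 0) 1 := by
  show xx k * yy k ^ 2 = _
  rw [xx_eq, yy_pow, mono_mul]; norm_num
lemma gg1 : gg k 1 = monomial (ee 1 1 1) 1 := by
  show xx k * yy k * zz k = _
  rw [xx_eq, yy_eq, zz_eq, mono_mul, mono_mul]; norm_num
lemma gg2 : gg k 2 = monomial (ee 0 1 2) 1 := by
  show yy k * zz k ^ 2 = _
  rw [yy_eq, zz_pow, mono_mul]; norm_num
lemma gg3 : gg k 3 = monomial (ee 4 0 0) 1 - monomial (ee 0 3 1) 1 := by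
  show xx k ^ 4 - yy k ^ 3 * zz k = _
  rw [xx_pow, yy_pow, zz_eq, mono_mul]; norm_num
lemma gg4 : gg k 4 = monomial (ee 1 0 3) 1 - monomial (ee 0 4 0) 1 := by
  show xx k * zz k ^ 3 - yy k ^ 4 = _
  rw [xx_eq, zz_pow, yy_pow, mono_mul]; norm_num
lemma gg5 : gg k 5 = monomial (ee 3 1 0) 1 - monomial (ee 0 0 4) 1 := by
  show xx k ^ 3 * yy k - zz k ^ 4 = _
  rw [xx_pow, yy_eq, zz_pow, mono_mul]; norm_num
lemma gg6 : gg k 6 = monomial (ee 2 0 2) 1 := by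
  show xx k ^ 2 * zz k ^ 2 = _
  rw [xx_pow, zz_pow, mono_mul]; norm_num


lemma mono_pow (a b c n : ℕ) :
    (monomial (ee a b c) (1:k)) ^ n = monomial (ee (n*a) (n*b) (n*c)) 1 := by
  induction n with
  | zero =>
    have h : ee 0 0 0 = (0 : Fin 3 →₀ ℕ) := by simp [ee]
    simp [h]
  | succ n ih =>
    rw [pow_succ, ih, mono_mul, one_mul]
    congr 1 <;> [skip] <;> skip
    have : ∀ m : ℕ, n * m + m = (n+1) * m := fun m => by ring
    rw [this a, this b, this c]

lemma MM0 : MM 0 = ee 1 2 0 := rfl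
lemma MM1 : MM 1 = ee 1 1 1 := rfl
lemma MM2 : MM 2 = ee 0 1 2 := rfl
lemma MM3 : MM 3 = ee 4 0 0 := rfl
lemma MM4 : MM 4 = ee 1 0 3 := rfl
lemma MM5 : MM 5 = ee 3 1 0 := rfl
lemma MM6 : MM 6 = ee 2 0 2 := rfl

lemma not_le_MM (a b c : ℕ) (j : Fin 7)
    (H : ¬(a ≤ 1 ∧ b ≤ 2 ∧ c ≤ 0) ∧ ¬(a ≤ 1 ∧ b ≤ 1 ∧ c ≤ 1) ∧ ¬(a ≤ 0 ∧ b ≤ 1 ∧ c ≤ 2) ∧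
         ¬(a ≤ 4 ∧ b ≤ 0 ∧ c ≤ 0) ∧ ¬(a ≤ 1 ∧ b ≤ 0 ∧ c ≤ 3) ∧ ¬(a ≤ 3 ∧ b ≤ 1 ∧ c ≤ 0) ∧
         ¬(a ≤ 2 ∧ b ≤ 0 ∧ c ≤ 2)) :
    ¬ ee a b c ≤ MM j := by
  obtain ⟨H0,H1,H2,H3,H4,H5,H6⟩ := H
  fin_cases j
  · exact fun h => H0 (ee_le_iff.mp h)
  · exact fun h => H1 (ee_le_iff.mp h)
  · exact fun h => H2 (ee_le_iff.mp h)
  · exact fun h => H3 (ee_le_iff.mp h)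
  · exact fun h => H4 (ee_le_iff.mp h)
  · exact fun h => H5 (ee_le_iff.mp h)
  · exact fun h => H6 (ee_le_iff.mp h)

lemma coeff_vanish (j : Fin 7) {f : MvPowerSeries (Fin 3) k}
    (hf : f ∈ Ideal.span {xx k, yy k, zz k} * Ig3 k) : coeff (MM j) f = 0 := by
  classical
  rw [Ig3, Ideal.span_mul_span] at hf
  have H : ∀ (q : MvPowerSeries (Fin 3) k) (j : Fin 7), coeff (MM j) (q * f) = 0 := by
    induction hf using Submodule.span_induction with
    | zero => intro q j; simp
    | add x y hx hy ihx ihy => intro q j; rw [mul_add, map_add, ihx q j, ihy q j, add_zero]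
    | smul a x hx ih => intro q j; rw [smul_eq_mul, ← mul_assoc]; exact ih (q * a) j
    | mem x hx =>
      simp only [Set.mem_mul, Set.mem_iUnion, Set.mem_insert_iff, Set.mem_singleton_iff, exists_prop] at hx
      obtain ⟨s, hs, t, ht, rfl⟩ := hx
      intro q j
      rcases hs with rfl | rfl | rfl <;> rcases ht with rfl | rfl | rfl | rfl | rfl | rfl | rfl <;>
        simp only [xx_eq, yy_eq, zz_eq, mono_pow, mono_mul, mul_sub, sub_mul, mul_one, one_mul,
          Nat.reduceAdd, Nat.reduceMul, map_sub, coeff_mul_monomial] <;>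
      first
        | rw [if_neg (not_le_MM _ _ _ j (by decide)), if_neg (not_le_MM _ _ _ j (by decide)),
            sub_zero]
        | rw [if_neg (not_le_MM _ _ _ j (by decide))]
  simpa using H 1 j

lemma mem_span_XYZ {f : MvPowerSeries (Fin 3) k} (hf : constantCoeff f = 0) :
    f ∈ Ideal.span {xx k, yy k, zz k} := by
  classical
  let f0 : MvPowerSeries (Fin 3) k := fun μ => if μ 0 ≠ 0 then coeff μ f else 0
  let f1 : MvPowerSeries (Fin 3) k := fun μ => if μ 0 = 0 ∧ μ 1 ≠ 0 then coeff μ f else 0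
  let f2 : MvPowerSeries (Fin 3) k :=
    fun μ => if μ 0 = 0 ∧ μ 1 = 0 ∧ μ 2 ≠ 0 then coeff μ f else 0
  have c0 : ∀ μ, coeff μ f0 = if μ 0 ≠ 0 then coeff μ f else 0 := fun μ => rfl
  have c1 : ∀ μ, coeff μ f1 = if μ 0 = 0 ∧ μ 1 ≠ 0 then coeff μ f else 0 := fun μ => rfl
  have c2 : ∀ μ, coeff μ f2 = if μ 0 = 0 ∧ μ 1 = 0 ∧ μ 2 ≠ 0 then coeff μ f else 0 :=
    fun μ => rfl
  have hd0 : xx k ∣ f0 := by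
    rw [xx, MvPowerSeries.X_dvd_iff]; intro m hm; rw [c0]; simp [hm]
  have hd1 : yy k ∣ f1 := by
    rw [yy, MvPowerSeries.X_dvd_iff]; intro m hm; rw [c1]; simp [hm]
  have hd2 : zz k ∣ f2 := by
    rw [zz, MvPowerSeries.X_dvd_iff]; intro m hm; rw [c2]; simp [hm]
  have hsum : f = f0 + f1 + f2 := by
    apply MvPowerSeries.ext; intro μ
    rw [map_add, map_add, c0, c1, c2]
    by_cases h0 : μ 0 = 0
    · by_cases h1 : μ 1 = 0
      · by_cases h2 : μ 2 = 0
        · have hμ : μ = 0 := by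
            ext i; fin_cases i <;> simp_all
          subst hμ
          simpa [coeff_zero_eq_constantCoeff_apply] using hf
        · simp [h0, h1, h2]
      · simp [h0, h1]
    · simp [h0]
  have mem0 : f0 ∈ Ideal.span {xx k, yy k, zz k} := by
    obtain ⟨t, ht⟩ := hd0
    rw [ht]
    exact Ideal.mul_mem_right _ _ (Ideal.subset_span (by simp))
  have mem1 : f1 ∈ Ideal.span {xx k, yy k, zz k} := by
    obtain ⟨t, ht⟩ := hd1
    rw [ht]
    exact Ideal.mul_mem_right _ _ (Ideal.subset_span (by simp))
  have mem2 : f2 ∈ Ideal.span {xx k, yy k, zz k} := by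
    obtain ⟨t, ht⟩ := hd2
    rw [ht]
    exact Ideal.mul_mem_right _ _ (Ideal.subset_span (by simp))
  rw [hsum]
  exact add_mem (add_mem mem0 mem1) mem2

/-- the coefficient-extraction linear map -/
def Phi : MvPowerSeries (Fin 3) k →ₗ[k] (Fin 7 → k) where
  toFun f := fun j => coeff (MM j) f
  map_add' f g := by funext j; simp
  map_smul' c f := by funext j; simp [MvPowerSeries.coeff_smul]

lemma Phi_apply (f : MvPowerSeries (Fin 3) k) (j : Fin 7) : Phi k f j = coeff (MM j) f := rfl

lemma cons_val_five {α : Type*} (a b c d e f g : α) : ![a,b,c,d,e,f,g] 5 = f := rfl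
lemma cons_val_six {α : Type*} (a b c d e f g : α) : ![a,b,c,d,e,f,g] 6 = g := rfl

set_option maxHeartbeats 2000000 in
lemma Phi_g (i : Fin 7) : Phi k (gg k i) = Pi.single i (1:k) := by
  classical
  funext j
  rw [Phi_apply]
  fin_cases i <;> fin_cases j <;>
    simp [gg, MM, cons_val_five, cons_val_six, xx_eq, yy_eq, zz_eq, mono_pow, mono_mul,
      map_sub, coeff_monomial, ee_eq_iff, Pi.single_apply]

end MuG3Aux

end MuAux

theorem mu_g3 (k : Type*) [Field k] :
    Module.finrank k
      (Submodule.map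
        (Submodule.restrictScalars k (Ideal.span {xx k, yy k, zz k} * Ig3 k)).mkQ
        (Submodule.restrictScalars k (Ig3 k))) = 7 := by
  classical
  set N' : Submodule k (MvPowerSeries (Fin 3) k) :=
    Submodule.restrictScalars k (Ideal.span {xx k, yy k, zz k} * Ig3 k) with hN'
  set w : Fin 7 → (MvPowerSeries (Fin 3) k ⧸ N') :=
    fun i => N'.mkQ (MuG3Aux.gg k i) with hwdef
  have hgmem : ∀ i : Fin 7, MuG3Aux.gg k i ∈ Ig3 k := by
    intro i
    rw [Ig3]
    apply Ideal.subset_span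
    simp only [Set.mem_insert_iff, Set.mem_singleton_iff]
    match i with
    | 0 => exact Or.inl rfl
    | 1 => exact Or.inr (Or.inl rfl)
    | 2 => exact Or.inr (Or.inr (Or.inl rfl))
    | 3 => exact Or.inr (Or.inr (Or.inr (Or.inl rfl)))
    | 4 => exact Or.inr (Or.inr (Or.inr (Or.inr (Or.inl rfl))))
    | 5 => exact Or.inr (Or.inr (Or.inr (Or.inr (Or.inr (Or.inl rfl)))))
    | 6 => exact Or.inr (Or.inr (Or.inr (Or.inr (Or.inr (Or.inr rfl)))))
  have hspan : Submodule.map N'.mkQ (Submodule.restrictScalars k (Ig3 k))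
      = Submodule.span k (Set.range w) := by
    apply le_antisymm
    · rintro x ⟨y, hy, rfl⟩
      have hy' : y ∈ Ig3 k := hy
      rw [Ig3] at hy'
      clear hy
      induction hy' using Submodule.span_induction with
      | mem z hz =>
        simp only [Set.mem_insert_iff, Set.mem_singleton_iff] at hz
        rcases hz with rfl|rfl|rfl|rfl|rfl|rfl|rfl
        · exact Submodule.subset_span ⟨0, rfl⟩
        · exact Submodule.subset_span ⟨1, rfl⟩
        · exact Submodule.subset_span ⟨2, rfl⟩
        · exact Submodule.subset_span ⟨3, rfl⟩
        · exact Submodule.subset_span ⟨4, rfl⟩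
        · exact Submodule.subset_span ⟨5, rfl⟩
        · exact Submodule.subset_span ⟨6, rfl⟩
      | zero => simpa using Submodule.zero_mem _
      | add a b ha hb iha ihb => rw [map_add]; exact Submodule.add_mem _ iha ihb
      | smul a z hz ih =>
        have hz' : z ∈ Ig3 k := by rw [Ig3]; exact hz
        have key : N'.mkQ (a • z) = (MvPowerSeries.constantCoeff a) • N'.mkQ z := by
          have hdecomp : a • z =
              (a - MvPowerSeries.C (MvPowerSeries.constantCoeff a)) * z
              + (MvPowerSeries.constantCoeff a) • z := by
            rw [smul_eq_mul, Algebra.smul_def, ← MvPowerSeries.c_eq_algebraMap]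
            ring
          have hm : (a - MvPowerSeries.C (MvPowerSeries.constantCoeff a)) * z
              ∈ Ideal.span {xx k, yy k, zz k} * Ig3 k :=
            Ideal.mul_mem_mul (MuG3Aux.mem_span_XYZ k (by simp)) hz'
          have hzero : N'.mkQ
              ((a - MvPowerSeries.C (MvPowerSeries.constantCoeff a)) * z)
              = 0 := by
            rw [Submodule.mkQ_apply, Submodule.Quotient.mk_eq_zero]
            exact hm
          rw [hdecomp, map_add, map_smul, hzero, zero_add]
        rw [key]
        exact Submodule.smul_mem _ _ ih
    · rw [Submodule.span_le]
      rintro x ⟨i, rfl⟩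
      exact ⟨MuG3Aux.gg k i, hgmem i, rfl⟩
  have hker : N' ≤ LinearMap.ker (MuG3Aux.Phi k) := by
    intro x hx
    rw [LinearMap.mem_ker]
    funext j
    have := MuG3Aux.coeff_vanish k j hx
    simpa [MuG3Aux.Phi_apply] using this
  set Φ' := N'.liftQ (MuG3Aux.Phi k) hker with hΦ'
  have hcomp : ⇑Φ' ∘ w = fun i => Pi.single i (1:k) := by
    funext i
    simp only [Function.comp_apply, hwdef]
    rw [hΦ', Submodule.mkQ_apply, Submodule.liftQ_apply]
    exact MuG3Aux.Phi_g k i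
  have h1 : LinearIndependent k (⇑Φ' ∘ w) := by
    rw [hcomp]
    have hb := (Pi.basisFun k (Fin 7)).linearIndependent
    have heq : ⇑(Pi.basisFun k (Fin 7)) = fun i => Pi.single i (1:k) :=
      funext fun i => Pi.basisFun_apply k (Fin 7) i
    rwa [heq] at hb
  have hind : LinearIndependent k w := LinearIndependent.of_comp Φ' h1
  rw [hspan]
  exact (finrank_span_eq_card hind).trans (by simp)
end
end

section
/- The ideal 𝔟₃ = (x³, x²y, yz², z³, xyz, xy² − y³) of Q is minimally generated by 6 elements; equivalently, the k-vector space 𝔟₃/(𝔪_Q·𝔟₃) has dimension 6. -/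
noncomputable section

/-- The ideal `b3` of the paper. -/
def Ib3 (k : Type*) [Field k] : Ideal (MvPowerSeries (Fin 3) k) :=
  Ideal.span {xx k ^ 3, xx k ^ 2 * yy k, yy k * zz k ^ 2, zz k ^ 3, xx k * yy k * zz k, xx k * yy k ^ 2 - yy k ^ 3}

namespace MuB3

open MvPowerSeries Finsupp Submodule

variable (k : Type*) [Field k]

/-- degree of an exponent vector -/
def deg (d : Fin 3 →₀ ℕ) : ℕ := d 0 + d 1 + d 2

lemma deg_add (i j : Fin 3 →₀ ℕ) : deg (i + j) = deg i + deg j := by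
  simp [deg, Finsupp.add_apply]; ring

lemma eq_zero_of_deg_eq_zero {d : Fin 3 →₀ ℕ} (h : deg d = 0) : d = 0 := by
  have h0 : d 0 = 0 ∧ d 1 = 0 ∧ d 2 = 0 := by unfold deg at h; omega
  ext a
  fin_cases a <;> simp [h0.1, h0.2.1, h0.2.2]

/-- the seven relevant exponent vectors -/
def EE : Fin 7 → (Fin 3 →₀ ℕ)
  | 0 => single 0 3
  | 1 => single 0 2 + single 1 1
  | 2 => single 1 1 + single 2 2
  | 3 => single 2 3
  | 4 => single 0 1 + single 1 1 + single 2 1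
  | 5 => single 0 1 + single 1 2
  | 6 => single 1 3

/-- numeric code of an exponent vector -/
def code (d : Fin 3 →₀ ℕ) : ℕ := 16 * d 0 + 4 * d 1 + d 2

lemma code_EE : ∀ i, code (EE i) = ![48, 36, 6, 3, 21, 24, 12] i := by
  intro i
  fin_cases i <;> (simp [EE, code, Finsupp.single_apply]; try rfl)

lemma EE_inj : Function.Injective EE := by
  intro i j hij
  have h := congrArg code hij
  rw [code_EE i, code_EE j] at h
  revert h
  fin_cases i <;> fin_cases j <;> decide

lemma deg_EE : ∀ i, deg (EE i) = 3 := by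
  intro i
  fin_cases i <;> simp [EE, deg, Finsupp.single_apply]

/-- the six generators -/
def G : Fin 6 → MvPowerSeries (Fin 3) k
  | 0 => xx k ^ 3
  | 1 => xx k ^ 2 * yy k
  | 2 => yy k * zz k ^ 2
  | 3 => zz k ^ 3
  | 4 => xx k * yy k * zz k
  | 5 => xx k * yy k ^ 2 - yy k ^ 3

lemma Gm0 : xx k ^ 3 = monomial (EE 0) 1 := by
  rw [xx, X_pow_eq]; rfl

lemma Gm1 : xx k ^ 2 * yy k = monomial (EE 1) 1 := by
  rw [xx, yy, X_pow_eq, X_def, monomial_mul_monomial, one_mul]; rfl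

lemma Gm2 : yy k * zz k ^ 2 = monomial (EE 2) 1 := by
  rw [yy, zz, X_pow_eq, X_def, monomial_mul_monomial, one_mul]; rfl

lemma Gm3 : zz k ^ 3 = monomial (EE 3) 1 := by
  rw [zz, X_pow_eq]; rfl

lemma Gm4 : xx k * yy k * zz k = monomial (EE 4) 1 := by
  rw [xx, yy, zz, X_def, X_def, X_def, monomial_mul_monomial, monomial_mul_monomial, one_mul,
    one_mul]; rfl

lemma Gm5 : xx k * yy k ^ 2 - yy k ^ 3 = monomial (EE 5) 1 - monomial (EE 6) 1 := by
  rw [xx, yy, X_pow_eq, X_pow_eq, X_def, monomial_mul_monomial, one_mul]; rfl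

/-- the span-set description of `Ib3` -/
lemma Ib3_eq : Ib3 k = Ideal.span (Set.range (G k)) := by
  unfold Ib3
  congr 1
  ext f
  constructor
  · intro hf
    simp only [Set.mem_insert_iff, Set.mem_singleton_iff] at hf
    rcases hf with rfl | rfl | rfl | rfl | rfl | rfl
    exacts [⟨0, rfl⟩, ⟨1, rfl⟩, ⟨2, rfl⟩, ⟨3, rfl⟩, ⟨4, rfl⟩, ⟨5, rfl⟩]
  · rintro ⟨i, rfl⟩
    fin_cases i <;> simp [G]

/-- elements of low order: all coefficients in degrees `≤ 3` vanish -/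
def lowI : Ideal (MvPowerSeries (Fin 3) k) where
  carrier := {f | ∀ d : Fin 3 →₀ ℕ, deg d ≤ 3 → coeff d f = 0}
  add_mem' := by
    intro a b ha hb d hd
    rw [map_add, ha d hd, hb d hd, add_zero]
  zero_mem' := by intro d _; simp
  smul_mem' := by
    intro c f hf d hd
    rw [smul_eq_mul, coeff_mul]
    apply Finset.sum_eq_zero
    rintro ⟨i, j⟩ hij
    rw [Finset.HasAntidiagonal.mem_antidiagonal] at hij
    have hdj : deg j ≤ 3 := by
      have := deg_add i j
      rw [hij] at this
      omega
    rw [hf j hdj, mul_zero]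

lemma mul_mem_lowI {a b : MvPowerSeries (Fin 3) k} (ha : constantCoeff a = 0)
    (hb : ∀ d : Fin 3 →₀ ℕ, deg d ≤ 2 → coeff d b = 0) : a * b ∈ lowI k := by
  intro d hd
  rw [coeff_mul]
  apply Finset.sum_eq_zero
  rintro ⟨i, j⟩ hij
  rw [Finset.HasAntidiagonal.mem_antidiagonal] at hij
  have hsum : deg i + deg j = deg d := by rw [← deg_add, hij]
  by_cases h : deg j ≤ 2
  · rw [hb j h, mul_zero]
  · have hi : deg i = 0 := by omega
    have : i = 0 := eq_zero_of_deg_eq_zero hi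
    subst this
    rw [show coeff 0 a = constantCoeff a from rfl, ha, zero_mul]

lemma coeff_mono_low {e : Fin 3 →₀ ℕ} (he : deg e = 3) {d : Fin 3 →₀ ℕ} (hd : deg d ≤ 2) :
    coeff d (monomial e (1 : k)) = 0 := by
  rw [coeff_monomial, if_neg]
  intro h
  rw [h] at hd
  omega

lemma G_low : ∀ i : Fin 6, ∀ d : Fin 3 →₀ ℕ, deg d ≤ 2 → coeff d (G k i) = 0 := by
  intro i d hd
  fin_cases i <;> simp only [G, Gm0, Gm1, Gm2, Gm3, Gm4, Gm5, map_sub]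
  · rw [coeff_mono_low k (deg_EE 0) hd]
  · rw [coeff_mono_low k (deg_EE 1) hd]
  · rw [coeff_mono_low k (deg_EE 2) hd]
  · rw [coeff_mono_low k (deg_EE 3) hd]
  · rw [coeff_mono_low k (deg_EE 4) hd]
  · rw [coeff_mono_low k (deg_EE 5) hd, coeff_mono_low k (deg_EE 6) hd, sub_zero]

lemma mb3_le_lowI : Ideal.span {xx k, yy k, zz k} * Ib3 k ≤ lowI k := by
  rw [Ib3_eq, Ideal.span_mul_span']
  rw [Ideal.span_le]
  rintro p hp
  rw [Set.mem_mul] at hp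
  obtain ⟨a, ha, b, hb, rfl⟩ := hp
  obtain ⟨i, rfl⟩ := hb
  have ha0 : constantCoeff a = 0 := by
    simp only [Set.mem_insert_iff, Set.mem_singleton_iff] at ha
    rcases ha with rfl | rfl | rfl <;> simp [xx, yy, zz]
  exact mul_mem_lowI k ha0 (G_low k i)

/-- membership in the span of the variables for series with zero constant term -/
lemma mem_span_X {f : MvPowerSeries (Fin 3) k} (hf : constantCoeff f = 0) :
    f ∈ Ideal.span {xx k, yy k, zz k} := by
  classical
  set g0 : MvPowerSeries (Fin 3) k := fun m => if m 0 ≠ 0 then coeff m f else 0 with hg0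
  set g1 : MvPowerSeries (Fin 3) k :=
    fun m => if m 0 = 0 ∧ m 1 ≠ 0 then coeff m f else 0 with hg1
  set g2 : MvPowerSeries (Fin 3) k :=
    fun m => if m 0 = 0 ∧ m 1 = 0 ∧ m 2 ≠ 0 then coeff m f else 0 with hg2
  have hdecomp : f = g0 + g1 + g2 := by
    ext m
    rw [map_add, map_add]
    rw [show coeff m g0 = if m 0 ≠ 0 then coeff m f else 0 from rfl,
      show coeff m g1 = if m 0 = 0 ∧ m 1 ≠ 0 then coeff m f else 0 from rfl,
      show coeff m g2 = if m 0 = 0 ∧ m 1 = 0 ∧ m 2 ≠ 0 then coeff m f else 0 from rfl]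
    by_cases h0 : m 0 = 0
    · by_cases h1 : m 1 = 0
      · by_cases h2 : m 2 = 0
        · have hm : m = 0 := by
            ext a; fin_cases a <;> assumption
          subst hm
          simp [MvPowerSeries.coeff_zero_eq_constantCoeff, hf]
        · simp [h0, h1, h2]
      · simp [h0, h1]
    · simp [h0]
  have hd0 : xx k ∣ g0 := by
    rw [xx, X_dvd_iff]
    intro m hm
    rw [show coeff m g0 = if m 0 ≠ 0 then coeff m f else 0 from rfl, if_neg (by simp [hm])]
  have hd1 : yy k ∣ g1 := by
    rw [yy, X_dvd_iff]
    intro m hm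
    rw [show coeff m g1 = if m 0 = 0 ∧ m 1 ≠ 0 then coeff m f else 0 from rfl,
      if_neg (by simp [hm])]
  have hd2 : zz k ∣ g2 := by
    rw [zz, X_dvd_iff]
    intro m hm
    rw [show coeff m g2 = if m 0 = 0 ∧ m 1 = 0 ∧ m 2 ≠ 0 then coeff m f else 0 from rfl,
      if_neg (by simp [hm])]
  obtain ⟨t0, ht0⟩ := hd0
  obtain ⟨t1, ht1⟩ := hd1
  obtain ⟨t2, ht2⟩ := hd2
  rw [hdecomp, ht0, ht1, ht2]
  refine add_mem (add_mem ?_ ?_) ?_ <;>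
    exact Ideal.mul_mem_right _ _ (Ideal.subset_span (by simp))

section Quot

abbrev M := Submodule.restrictScalars k (Ideal.span {xx k, yy k, zz k} * Ib3 k)

abbrev q : MvPowerSeries (Fin 3) k →ₗ[k] (MvPowerSeries (Fin 3) k ⧸ M k) := (M k).mkQ

lemma q_eq_zero {f : MvPowerSeries (Fin 3) k}
    (hf : f ∈ Ideal.span {xx k, yy k, zz k} * Ib3 k) : q k f = 0 := by
  rw [Submodule.mkQ_apply, Submodule.Quotient.mk_eq_zero]
  exact hf

lemma map_eq :
    Submodule.map (q k) (Submodule.restrictScalars k (Ib3 k)) =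
      Submodule.span k (Set.range fun i => q k (G k i)) := by
  apply le_antisymm
  · rintro _ ⟨f, hf, rfl⟩
    rw [SetLike.mem_coe, Submodule.restrictScalars_mem, Ib3_eq] at hf
    induction hf using Submodule.span_induction with
    | mem x hx =>
      obtain ⟨i, rfl⟩ := hx
      exact Submodule.subset_span ⟨i, rfl⟩
    | zero => rw [map_zero]; exact zero_mem _
    | add x y hx hy ihx ihy => rw [map_add]; exact add_mem ihx ihy
    | smul a x hx ih =>
      set c := constantCoeff a with hc
      have hmem : (a - C c) * x ∈ Ideal.span {xx k, yy k, zz k} * Ib3 k := by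
        apply Ideal.mul_mem_mul
        · exact mem_span_X k (by simp [hc])
        · rw [Ib3_eq]; exact hx
      have hax : a • x = c • x + (a - C c) * x := by
        rw [smul_eq_C_mul _ c, sub_mul, smul_eq_mul]
        ring
      rw [hax, map_add, q_eq_zero k hmem, add_zero, map_smul]
      exact Submodule.smul_mem _ _ ih
  · rw [Submodule.span_le]
    rintro _ ⟨i, rfl⟩
    refine ⟨G k i, ?_, rfl⟩
    rw [SetLike.mem_coe, Submodule.restrictScalars_mem, Ib3_eq]
    exact Ideal.subset_span ⟨i, rfl⟩

lemma lin_indep : LinearIndependent k fun i => q k (G k i) := by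
  rw [Fintype.linearIndependent_iff]
  intro c hc
  have hsum : (∑ i, c i • G k i) ∈ Ideal.span {xx k, yy k, zz k} * Ib3 k := by
    have : q k (∑ i, c i • G k i) = 0 := by
      rw [map_sum]
      simpa only [map_smul] using hc
    rwa [Submodule.mkQ_apply, Submodule.Quotient.mk_eq_zero,
      Submodule.restrictScalars_mem] at this
  have hlow := mb3_le_lowI k hsum
  have key : ∀ j : Fin 7, (j : ℕ) < 6 →
      coeff (EE j) (∑ i, c i • G k i) = 0 := fun j _ => hlow (EE j) (by rw [deg_EE])
  have expand : ∀ d : Fin 3 →₀ ℕ, coeff d (∑ i, c i • G k i) =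
      c 0 * coeff d (G k 0) + c 1 * coeff d (G k 1) + c 2 * coeff d (G k 2) +
      c 3 * coeff d (G k 3) + c 4 * coeff d (G k 4) + c 5 * coeff d (G k 5) := by
    intro d
    rw [map_sum, Fin.sum_univ_six]
    simp only [coeff_smul]
  intro i
  fin_cases i
  · have h := key 0 (by decide)
    rw [expand] at h
    simpa [G, Gm0, Gm1, Gm2, Gm3, Gm4, Gm5, coeff_monomial, EE_inj.eq_iff] using h
  · have h := key 1 (by decide)
    rw [expand] at h
    simpa [G, Gm0, Gm1, Gm2, Gm3, Gm4, Gm5, coeff_monomial, EE_inj.eq_iff] using h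
  · have h := key 2 (by decide)
    rw [expand] at h
    simpa [G, Gm0, Gm1, Gm2, Gm3, Gm4, Gm5, coeff_monomial, EE_inj.eq_iff] using h
  · have h := key 3 (by decide)
    rw [expand] at h
    simpa [G, Gm0, Gm1, Gm2, Gm3, Gm4, Gm5, coeff_monomial, EE_inj.eq_iff] using h
  · have h := key 4 (by decide)
    rw [expand] at h
    simpa [G, Gm0, Gm1, Gm2, Gm3, Gm4, Gm5, coeff_monomial, EE_inj.eq_iff] using h
  · have h := key 5 (by decide)
    rw [expand] at h
    simpa [G, Gm0, Gm1, Gm2, Gm3, Gm4, Gm5, coeff_monomial, EE_inj.eq_iff] using h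

end Quot

end MuB3

open MuB3 in
theorem mu_b3 (k : Type*) [Field k] :
    Module.finrank k
      (Submodule.map
        (Submodule.restrictScalars k (Ideal.span {xx k, yy k, zz k} * Ib3 k)).mkQ
        (Submodule.restrictScalars k (Ib3 k))) = 6 := by
  have h := map_eq k
  rw [show (Submodule.restrictScalars k (Ideal.span {xx k, yy k, zz k} * Ib3 k)).mkQ = q k
    from rfl, h, finrank_span_eq_card (lin_indep k)]
  simp
end
end

section
/- The ideal 𝔟₄ = (x³, x²y, yz², z³, xyz, xy² − y³, y²z) of Q is minimally generated by 7 elements; equivalently, the k-vector space 𝔟₄/(𝔪_Q·𝔟₄) has dimension 7. -/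
/-!
STATEMENT 15: The ideal `b4` of `Q = k[[x,y,z]]` is minimally generated by 7
elements; equivalently (by Nakayama), the `k`-vector space `b4/(m_Q * b4)` has
dimension 7, where `m_Q = (x,y,z)`. The quotient `b4/(m_Q*b4)` is realized as the
image of `b4` in `Q/(m_Q*b4)` (as `k`-vector spaces).

Here `Q = k[[x,y,z]]` is formalized as `MvPowerSeries (Fin 3) k` with
`x = X 0`, `y = X 1`, `z = X 2`.
-/

noncomputable section

/-- The ideal `b4` of the paper. -/
def Ib4 (k : Type*) [Field k] : Ideal (MvPowerSeries (Fin 3) k) :=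
  Ideal.span {xx k ^ 3, xx k ^ 2 * yy k, yy k * zz k ^ 2, zz k ^ 3, xx k * yy k * zz k, xx k * yy k ^ 2 - yy k ^ 3, yy k ^ 2 * zz k}

namespace Mub4Aux

open MvPowerSeries Finsupp

variable (k : Type*) [Field k]

abbrev PS (k : Type*) [Field k] := MvPowerSeries (Fin 3) k

/-- total degree of an exponent -/
def deg (d : Fin 3 →₀ ℕ) : ℕ := d 0 + d 1 + d 2

lemma deg_add (a b : Fin 3 →₀ ℕ) : deg (a + b) = deg a + deg b := by
  simp only [deg, Finsupp.add_apply]; ring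

/-- the ideal of power series whose coefficients vanish below degree `n` -/
def Jdeg (n : ℕ) : Ideal (PS k) where
  carrier := {f | ∀ d, deg d < n → MvPowerSeries.coeff d f = 0}
  zero_mem' := fun d _ => by simp
  add_mem' := fun hf hg d hd => by rw [map_add, hf d hd, hg d hd, add_zero]
  smul_mem' := fun q f hf d hd => by
    rw [smul_eq_mul, MvPowerSeries.coeff_mul]
    refine Finset.sum_eq_zero fun p hp => ?_
    rw [Finset.HasAntidiagonal.mem_antidiagonal] at hp
    have h2 : deg p.2 < n := by
      have h := deg_add p.1 p.2
      rw [hp] at h; omega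
    rw [hf p.2 h2, mul_zero]

lemma mem_Jdeg {n : ℕ} {f : PS k} :
    f ∈ Jdeg k n ↔ ∀ d, deg d < n → MvPowerSeries.coeff d f = 0 := Iff.rfl

lemma mul_mem_Jdeg {a b : ℕ} {f g : PS k} (hf : f ∈ Jdeg k a) (hg : g ∈ Jdeg k b) :
    f * g ∈ Jdeg k (a + b) := by
  rw [mem_Jdeg] at hf hg ⊢
  intro d hd
  rw [MvPowerSeries.coeff_mul]
  refine Finset.sum_eq_zero fun p hp => ?_
  rw [Finset.HasAntidiagonal.mem_antidiagonal] at hp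
  have hds : deg p.1 + deg p.2 < a + b := by rw [← deg_add, hp]; exact hd
  rcases lt_or_ge (deg p.1) a with h | h
  · rw [hf p.1 h, zero_mul]
  · rw [hg p.2 (by omega), mul_zero]

lemma monomial_mem_Jdeg {n : ℕ} {e : Fin 3 →₀ ℕ} (he : n ≤ deg e) (r : k) :
    MvPowerSeries.monomial e r ∈ Jdeg k n := by
  rw [mem_Jdeg]
  intro d hd
  exact MvPowerSeries.coeff_monomial_ne (fun h => by rw [h] at hd; omega) r

/-- the exponent triples of the generators -/
def wvec : Fin 7 → ℕ × ℕ × ℕ :=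
  ![(3,0,0), (2,1,0), (0,1,2), (0,0,3), (1,1,1), (1,2,0), (0,2,1)]

/-- the exponents of the generators -/
def Evec : Fin 7 → (Fin 3 →₀ ℕ) :=
  ![single 0 3, single 0 2 + single 1 1, single 1 1 + single 2 2, single 2 3,
    single 0 1 + single 1 1 + single 2 1, single 0 1 + single 1 2, single 1 2 + single 2 1]

lemma wvec_apply (i : Fin 7) : (Evec i 0, Evec i 1, Evec i 2) = wvec i := by
  fin_cases i
  · show ((single 0 3 : Fin 3 →₀ ℕ) 0, (single 0 3 : Fin 3 →₀ ℕ) 1,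
      (single 0 3 : Fin 3 →₀ ℕ) 2) = ((3,0,0) : ℕ × ℕ × ℕ)
    simp [Finsupp.single_apply]
  · show ((single 0 2 + single 1 1 : Fin 3 →₀ ℕ) 0, (single 0 2 + single 1 1 : Fin 3 →₀ ℕ) 1,
      (single 0 2 + single 1 1 : Fin 3 →₀ ℕ) 2) = ((2,1,0) : ℕ × ℕ × ℕ)
    simp [Finsupp.single_apply]
  · show ((single 1 1 + single 2 2 : Fin 3 →₀ ℕ) 0, (single 1 1 + single 2 2 : Fin 3 →₀ ℕ) 1,
      (single 1 1 + single 2 2 : Fin 3 →₀ ℕ) 2) = ((0,1,2) : ℕ × ℕ × ℕ)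
    simp [Finsupp.single_apply]
  · show ((single 2 3 : Fin 3 →₀ ℕ) 0, (single 2 3 : Fin 3 →₀ ℕ) 1,
      (single 2 3 : Fin 3 →₀ ℕ) 2) = ((0,0,3) : ℕ × ℕ × ℕ)
    simp [Finsupp.single_apply]
  · show ((single 0 1 + single 1 1 + single 2 1 : Fin 3 →₀ ℕ) 0,
      (single 0 1 + single 1 1 + single 2 1 : Fin 3 →₀ ℕ) 1,
      (single 0 1 + single 1 1 + single 2 1 : Fin 3 →₀ ℕ) 2) = ((1,1,1) : ℕ × ℕ × ℕ)
    simp [Finsupp.single_apply]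
  · show ((single 0 1 + single 1 2 : Fin 3 →₀ ℕ) 0, (single 0 1 + single 1 2 : Fin 3 →₀ ℕ) 1,
      (single 0 1 + single 1 2 : Fin 3 →₀ ℕ) 2) = ((1,2,0) : ℕ × ℕ × ℕ)
    simp [Finsupp.single_apply]
  · show ((single 1 2 + single 2 1 : Fin 3 →₀ ℕ) 0, (single 1 2 + single 2 1 : Fin 3 →₀ ℕ) 1,
      (single 1 2 + single 2 1 : Fin 3 →₀ ℕ) 2) = ((0,2,1) : ℕ × ℕ × ℕ)
    simp [Finsupp.single_apply]

lemma Evec_apply0 (i : Fin 7) : Evec i 0 = (wvec i).1 :=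
  congrArg Prod.fst (wvec_apply i)
lemma Evec_apply1 (i : Fin 7) : Evec i 1 = (wvec i).2.1 :=
  congrArg (fun p => p.2.1) (wvec_apply i)
lemma Evec_apply2 (i : Fin 7) : Evec i 2 = (wvec i).2.2 :=
  congrArg (fun p => p.2.2) (wvec_apply i)

lemma deg_Evec (i : Fin 7) : deg (Evec i) = 3 := by
  show Evec i 0 + Evec i 1 + Evec i 2 = 3
  rw [Evec_apply0, Evec_apply1, Evec_apply2]
  exact (by decide : ∀ j : Fin 7, (wvec j).1 + (wvec j).2.1 + (wvec j).2.2 = 3) i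

lemma Evec_ne {i j : Fin 7} (hij : i ≠ j) : Evec i ≠ Evec j := by
  intro e
  apply hij
  have hw : wvec i = wvec j := by rw [← wvec_apply i, ← wvec_apply j, e]
  exact (by decide : Function.Injective wvec) hw

lemma Evec_ne_y3 (i : Fin 7) : Evec i ≠ single 1 3 := by
  intro e
  have hw : wvec i = (0, 3, 0) := by
    rw [← wvec_apply i, e]
    simp [Finsupp.single_apply]
  exact (by decide : ∀ j : Fin 7, wvec j ≠ (0, 3, 0)) i hw

/-- the generators of `Ib4`, in monomial form -/
def gvec : Fin 7 → PS k := fun i =>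
  MvPowerSeries.monomial (Evec i) 1
    - MvPowerSeries.monomial (single 1 3) (if i = 5 then 1 else 0)

lemma hg0 : xx k ^ 3 = MvPowerSeries.monomial (single 0 3) 1 := by
  rw [xx, MvPowerSeries.X_pow_eq]
lemma hg1 : xx k ^ 2 * yy k = MvPowerSeries.monomial (single 0 2 + single 1 1) 1 := by
  rw [xx, yy, MvPowerSeries.X_pow_eq, MvPowerSeries.X_def,
    MvPowerSeries.monomial_mul_monomial, one_mul]
lemma hg2 : yy k * zz k ^ 2 = MvPowerSeries.monomial (single 1 1 + single 2 2) 1 := by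
  rw [yy, zz, MvPowerSeries.X_pow_eq, MvPowerSeries.X_def,
    MvPowerSeries.monomial_mul_monomial, one_mul]
lemma hg3 : zz k ^ 3 = MvPowerSeries.monomial (single 2 3) 1 := by
  rw [zz, MvPowerSeries.X_pow_eq]
lemma hg4 : xx k * yy k * zz k
    = MvPowerSeries.monomial (single 0 1 + single 1 1 + single 2 1) 1 := by
  rw [xx, yy, zz, MvPowerSeries.X_def, MvPowerSeries.X_def, MvPowerSeries.X_def,
    MvPowerSeries.monomial_mul_monomial, MvPowerSeries.monomial_mul_monomial, one_mul, one_mul]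
lemma hg5 : xx k * yy k ^ 2 - yy k ^ 3
    = MvPowerSeries.monomial (single 0 1 + single 1 2) 1
      - MvPowerSeries.monomial (single 1 3) 1 := by
  rw [xx, yy, MvPowerSeries.X_pow_eq, MvPowerSeries.X_pow_eq, MvPowerSeries.X_def,
    MvPowerSeries.monomial_mul_monomial, one_mul]
lemma hg6 : yy k ^ 2 * zz k = MvPowerSeries.monomial (single 1 2 + single 2 1) 1 := by
  rw [yy, zz, MvPowerSeries.X_pow_eq, MvPowerSeries.X_def,
    MvPowerSeries.monomial_mul_monomial, one_mul]

set_option maxHeartbeats 2000000 in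
lemma span_range_gvec : Ideal.span (Set.range (gvec k)) = Ib4 k := by
  apply le_antisymm
  · rw [Ideal.span_le]
    rintro f ⟨i, rfl⟩
    fin_cases i
    · show MvPowerSeries.monomial (single 0 3) 1
        - MvPowerSeries.monomial (single 1 3) 0 ∈ Ib4 k
      rw [map_zero, sub_zero, ← hg0 k]
      exact Ideal.subset_span (by simp)
    · show MvPowerSeries.monomial (single 0 2 + single 1 1) 1
        - MvPowerSeries.monomial (single 1 3) 0 ∈ Ib4 k
      rw [map_zero, sub_zero, ← hg1 k]
      exact Ideal.subset_span (by simp)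
    · show MvPowerSeries.monomial (single 1 1 + single 2 2) 1
        - MvPowerSeries.monomial (single 1 3) 0 ∈ Ib4 k
      rw [map_zero, sub_zero, ← hg2 k]
      exact Ideal.subset_span (by simp)
    · show MvPowerSeries.monomial (single 2 3) 1
        - MvPowerSeries.monomial (single 1 3) 0 ∈ Ib4 k
      rw [map_zero, sub_zero, ← hg3 k]
      exact Ideal.subset_span (by simp)
    · show MvPowerSeries.monomial (single 0 1 + single 1 1 + single 2 1) 1
        - MvPowerSeries.monomial (single 1 3) 0 ∈ Ib4 k
      rw [map_zero, sub_zero, ← hg4 k]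
      exact Ideal.subset_span (by simp)
    · show MvPowerSeries.monomial (single 0 1 + single 1 2) 1
        - MvPowerSeries.monomial (single 1 3) 1 ∈ Ib4 k
      rw [← hg5 k]
      exact Ideal.subset_span (by simp)
    · show MvPowerSeries.monomial (single 1 2 + single 2 1) 1
        - MvPowerSeries.monomial (single 1 3) 0 ∈ Ib4 k
      rw [map_zero, sub_zero, ← hg6 k]
      exact Ideal.subset_span (by simp)
  · rw [Ib4, Ideal.span_le]
    rintro f hf
    simp only [Set.mem_insert_iff, Set.mem_singleton_iff] at hf
    rcases hf with rfl | rfl | rfl | rfl | rfl | rfl | rfl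
    · rw [hg0 k]
      refine Ideal.subset_span ⟨0, ?_⟩
      show MvPowerSeries.monomial (single 0 3) 1
        - MvPowerSeries.monomial (single 1 3) 0 = _
      rw [map_zero, sub_zero]
    · rw [hg1 k]
      refine Ideal.subset_span ⟨1, ?_⟩
      show MvPowerSeries.monomial (single 0 2 + single 1 1) 1
        - MvPowerSeries.monomial (single 1 3) 0 = _
      rw [map_zero, sub_zero]
    · rw [hg2 k]
      refine Ideal.subset_span ⟨2, ?_⟩
      show MvPowerSeries.monomial (single 1 1 + single 2 2) 1
        - MvPowerSeries.monomial (single 1 3) 0 = _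
      rw [map_zero, sub_zero]
    · rw [hg3 k]
      refine Ideal.subset_span ⟨3, ?_⟩
      show MvPowerSeries.monomial (single 2 3) 1
        - MvPowerSeries.monomial (single 1 3) 0 = _
      rw [map_zero, sub_zero]
    · rw [hg4 k]
      refine Ideal.subset_span ⟨4, ?_⟩
      show MvPowerSeries.monomial (single 0 1 + single 1 1 + single 2 1) 1
        - MvPowerSeries.monomial (single 1 3) 0 = _
      rw [map_zero, sub_zero]
    · rw [hg5 k]
      exact Ideal.subset_span ⟨5, rfl⟩
    · rw [hg6 k]
      refine Ideal.subset_span ⟨6, ?_⟩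
      show MvPowerSeries.monomial (single 1 2 + single 2 1) 1
        - MvPowerSeries.monomial (single 1 3) 0 = _
      rw [map_zero, sub_zero]

lemma gvec_mem (i : Fin 7) : gvec k i ∈ Ib4 k := by
  rw [← span_range_gvec]
  exact Ideal.subset_span ⟨i, rfl⟩

lemma Ib4_le_Jdeg : Ib4 k ≤ Jdeg k 3 := by
  rw [← span_range_gvec, Ideal.span_le]
  rintro f ⟨i, rfl⟩
  exact sub_mem (monomial_mem_Jdeg k (by rw [deg_Evec i]) 1)
    (monomial_mem_Jdeg k (by show (3:ℕ) ≤ deg (single 1 3); simp [deg, Finsupp.single_apply]) _)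

lemma mQ_le_Jdeg : Ideal.span {xx k, yy k, zz k} ≤ Jdeg k 1 := by
  rw [Ideal.span_le]
  rintro f hf
  simp only [Set.mem_insert_iff, Set.mem_singleton_iff] at hf
  rcases hf with rfl | rfl | rfl
  · rw [xx, MvPowerSeries.X_def]
    exact monomial_mem_Jdeg k (by simp [deg, Finsupp.single_apply]) 1
  · rw [yy, MvPowerSeries.X_def]
    exact monomial_mem_Jdeg k (by simp [deg, Finsupp.single_apply]) 1
  · rw [zz, MvPowerSeries.X_def]
    exact monomial_mem_Jdeg k (by simp [deg, Finsupp.single_apply]) 1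

lemma mI_le_Jdeg : Ideal.span {xx k, yy k, zz k} * Ib4 k ≤ Jdeg k 4 := by
  have h : (1 : ℕ) + 3 = 4 := rfl
  rw [Ideal.mul_le]
  intro r hr s hs
  exact h ▸ mul_mem_Jdeg k (mQ_le_Jdeg k hr) (Ib4_le_Jdeg k hs)

lemma mem_span_X (f : PS k) (hf : MvPowerSeries.constantCoeff f = 0) :
    f ∈ Ideal.span {xx k, yy k, zz k} := by
  classical
  let g0 : PS k := fun d => if d 0 ≠ 0 then f d else 0
  let g1 : PS k := fun d => if d 0 = 0 ∧ d 1 ≠ 0 then f d else 0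
  let g2 : PS k := fun d => if d 0 = 0 ∧ d 1 = 0 ∧ d 2 ≠ 0 then f d else 0
  have c0 : ∀ d, MvPowerSeries.coeff d g0 = if d 0 ≠ 0 then f d else 0 := fun d => rfl
  have c1 : ∀ d, MvPowerSeries.coeff d g1 = if d 0 = 0 ∧ d 1 ≠ 0 then f d else 0 := fun d => rfl
  have c2 : ∀ d, MvPowerSeries.coeff d g2 = if d 0 = 0 ∧ d 1 = 0 ∧ d 2 ≠ 0 then f d else 0 :=
    fun d => rfl
  have hsum : f = g0 + g1 + g2 := by
    apply MvPowerSeries.ext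
    intro d
    rw [map_add, map_add, c0 d, c1 d, c2 d, MvPowerSeries.coeff_apply]
    by_cases h0 : d 0 = 0
    · by_cases h1 : d 1 = 0
      · by_cases h2 : d 2 = 0
        · have hd : d = 0 := by
            ext i
            fin_cases i <;> simpa using ‹_›
          rw [if_neg (by simp [h0]), if_neg (by simp [h1]), if_neg (by simp [h2]),
            add_zero, add_zero, hd]
          exact hf
        · simp [h0, h1, h2]
      · simp [h0, h1]
    · simp [h0]
  have d0 : g0 ∈ Ideal.span {xx k, yy k, zz k} := by
    have hdvd : (MvPowerSeries.X 0 : PS k) ∣ g0 :=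
      MvPowerSeries.X_dvd_iff.mpr (fun m hm => by rw [c0 m]; simp [hm])
    obtain ⟨c, hc⟩ := hdvd
    rw [hc]
    exact Ideal.mul_mem_right _ _ (Ideal.subset_span (by rw [← xx]; simp))
  have d1 : g1 ∈ Ideal.span {xx k, yy k, zz k} := by
    have hdvd : (MvPowerSeries.X 1 : PS k) ∣ g1 :=
      MvPowerSeries.X_dvd_iff.mpr (fun m hm => by rw [c1 m]; simp [hm])
    obtain ⟨c, hc⟩ := hdvd
    rw [hc]
    exact Ideal.mul_mem_right _ _ (Ideal.subset_span (by rw [← yy]; simp))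
  have d2 : g2 ∈ Ideal.span {xx k, yy k, zz k} := by
    have hdvd : (MvPowerSeries.X 2 : PS k) ∣ g2 :=
      MvPowerSeries.X_dvd_iff.mpr (fun m hm => by rw [c2 m]; simp [hm])
    obtain ⟨c, hc⟩ := hdvd
    rw [hc]
    exact Ideal.mul_mem_right _ _ (Ideal.subset_span (by rw [← zz]; simp))
  rw [hsum]
  exact add_mem (add_mem d0 d1) d2

lemma decomp {f : PS k} (hf : f ∈ Ib4 k) :
    ∃ a : Fin 7 → k, f - ∑ i, a i • gvec k i ∈ Ideal.span {xx k, yy k, zz k} * Ib4 k := by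
  rw [← span_range_gvec] at hf
  obtain ⟨q, hq⟩ := (Submodule.mem_span_range_iff_exists_fun _).mp hf
  refine ⟨fun i => MvPowerSeries.constantCoeff (q i), ?_⟩
  have heq : f - ∑ i, MvPowerSeries.constantCoeff (q i) • gvec k i
      = ∑ i, (q i - MvPowerSeries.C
          (MvPowerSeries.constantCoeff (q i))) * gvec k i := by
    rw [← hq, ← Finset.sum_sub_distrib]
    refine Finset.sum_congr rfl fun i _ => ?_
    rw [sub_mul, smul_eq_mul, MvPowerSeries.smul_eq_C_mul]
  rw [heq]
  refine Submodule.sum_mem _ fun i _ => Ideal.mul_mem_mul ?_ (gvec_mem k i)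
  apply mem_span_X
  simp [MvPowerSeries.constantCoeff_C]

lemma coeffval (i j : Fin 7) :
    MvPowerSeries.coeff (Evec i) (gvec k j) = if i = j then 1 else 0 := by
  show MvPowerSeries.coeff (Evec i)
    (MvPowerSeries.monomial (Evec j) 1
      - MvPowerSeries.monomial (single 1 3) (if j = 5 then 1 else 0)) = _
  rw [map_sub, MvPowerSeries.coeff_monomial,
    MvPowerSeries.coeff_monomial_ne (Evec_ne_y3 i), sub_zero]
  rcases eq_or_ne i j with rfl | hij
  · rw [if_pos rfl, if_pos rfl]
  · rw [if_neg (Evec_ne hij), if_neg hij]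

end Mub4Aux

open Mub4Aux

theorem mu_b4 (k : Type*) [Field k] :
    Module.finrank k
      (Submodule.map
        (Submodule.restrictScalars k (Ideal.span {xx k, yy k, zz k} * Ib4 k)).mkQ
        (Submodule.restrictScalars k (Ib4 k))) = 7 := by
  classical
  set N := Submodule.restrictScalars k (Ideal.span {xx k, yy k, zz k} * Ib4 k) with hN
  set M := Submodule.map N.mkQ (Submodule.restrictScalars k (Ib4 k)) with hM
  have gmem : ∀ i, gvec k i ∈ Submodule.restrictScalars k (Ib4 k) := fun i => gvec_mem k i
  let v : Fin 7 → M := fun i => ⟨N.mkQ (gvec k i), Submodule.mem_map_of_mem (gmem i)⟩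
  have hindep : LinearIndependent k v := by
    apply LinearIndependent.of_comp M.subtype
    rw [Fintype.linearIndependent_iff]
    intro c hc i
    have hc' : N.mkQ (∑ j, c j • gvec k j) = 0 := by
      rw [map_sum]
      simp only [map_smul]
      simpa [v, Function.comp] using hc
    have hmem : (∑ j, c j • gvec k j) ∈ N := by
      rwa [Submodule.mkQ_apply, Submodule.Quotient.mk_eq_zero] at hc'
    have hker : (∑ j, c j • gvec k j) ∈ Jdeg k 4 := mI_le_Jdeg k hmem
    have h3 : deg (Evec i) < 4 := by rw [deg_Evec]; omega
    have hco := (mem_Jdeg k).mp hker (Evec i) h3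
    rw [map_sum] at hco
    simp only [MvPowerSeries.coeff_smul, coeffval k i, mul_ite, mul_one, mul_zero] at hco
    simpa using hco
  have hspan : ⊤ ≤ Submodule.span k (Set.range v) := by
    rintro ⟨x, hx⟩ -
    obtain ⟨f, hf, hfx⟩ := Submodule.mem_map.mp hx
    subst hfx
    obtain ⟨a, ha⟩ := decomp k hf
    have h0 : N.mkQ (f - ∑ i, a i • gvec k i) = 0 := by
      rw [Submodule.mkQ_apply, Submodule.Quotient.mk_eq_zero]
      exact ha
    rw [map_sub, sub_eq_zero, map_sum] at h0
    simp only [map_smul] at h0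
    have hval : (⟨N.mkQ f, hx⟩ : M) = ∑ i, a i • v i := by
      apply Subtype.ext
      show N.mkQ f = ((∑ i, a i • v i : M) : _)
      rw [h0]
      simp [v]
    rw [hval]
    exact Submodule.sum_mem _ fun i _ =>
      Submodule.smul_mem _ _ (Submodule.subset_span ⟨i, rfl⟩)
  let B : Module.Basis (Fin 7) k M := Module.Basis.mk hindep hspan
  rw [Module.finrank_eq_card_basis B, Fintype.card_fin]
end
end
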